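/- arXiv:math/0407057 — 3 statements merged into one kernel-verified Lean document; each statement's English description precedes it below -/
import Mathlib

section
/- The function H: ℝ₊^I → ℝ is continuous; H(n) = 0 for every n ∈ M_α; and H(n) > 0 for every n ∈ ℝ₊^I \ M_α. -/
open Real Set

noncomputable section

/-- Feasible set for the bandwidth allocation problem at state `n`: the vector
`Λ⁺ = (Λ_i : i ∈ I₊(n))` is embedded in `ℝ^I` by requiring `L i = 0` whenever `n i = 0`. -/
def Feasible {I J : ℕ} (A : Fin J → Fin I → ℝ) (C : Fin J → ℝ)
    (n : Fin I → ℝ) : Set (Fin I → ℝ) :=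
  {L | (∀ i, 0 ≤ L i) ∧ (∀ i, n i = 0 → L i = 0) ∧ ∀ j, ∑ i, A j i * L i ≤ C j}

/-- The objective `G_n(Λ⁺)`, taking the value `⊥ = -∞` when `α ≥ 1` and some
coordinate of `Λ⁺` in `I₊(n)` vanishes. -/
def Gfun {I : ℕ} (α : ℝ) (κ : Fin I → ℝ) (n L : Fin I → ℝ) : EReal :=
  if 1 ≤ α ∧ ∃ i, 0 < n i ∧ L i = 0 then ⊥
  else if α = 1 then
    ((∑ i, if 0 < n i then κ i * n i * Real.log (L i) else 0 : ℝ) : EReal)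
  else
    ((∑ i, if 0 < n i then κ i * n i ^ α * L i ^ (1 - α) / (1 - α) else 0 : ℝ) : EReal)

/-- `L` is an optimal weighted α-fair bandwidth allocation for the state `n`,
i.e. a maximizer of `G_n` over the feasible set for `n` (with `L i = 0` for `i ∈ I₀(n)`). -/
def IsAlloc {I J : ℕ} (A : Fin J → Fin I → ℝ) (C : Fin J → ℝ) (α : ℝ)
    (κ : Fin I → ℝ) (n L : Fin I → ℝ) : Prop :=
  L ∈ Feasible A C n ∧ ∀ L' ∈ Feasible A C n, Gfun α κ n L' ≤ Gfun α κ n L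

/-- `f` is absolutely continuous on `[0, T]` for every `T > 0` (ε-δ definition with
finitely many pairwise disjoint subintervals). -/
def AbsContNonneg (f : ℝ → ℝ) : Prop :=
  ∀ T > (0:ℝ), ∀ ε > (0:ℝ), ∃ δ > (0:ℝ), ∀ (m : ℕ) (a b : Fin m → ℝ),
    (∀ k, 0 ≤ a k ∧ a k ≤ b k ∧ b k ≤ T) →
    (∀ k l, k < l → b k ≤ a l ∨ b l ≤ a k) →
    (∑ k, (b k - a k)) < δ → (∑ k, |f (b k) - f (a k)|) < ε

/-- Fluid model solution: `n : [0,∞) → ℝ₊^I` absolutely continuous, and at every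
regular point `t` the derivative conditions (13) and capacity condition (14) hold. -/
def IsFluidSol {I J : ℕ} (A : Fin J → Fin I → ℝ) (C : Fin J → ℝ)
    (ν μ : Fin I → ℝ) (Λ : (Fin I → ℝ) → Fin I → ℝ)
    (n : ℝ → Fin I → ℝ) : Prop :=
  (∀ i, AbsContNonneg fun t => n t i) ∧
  (∀ t ∈ Ici (0:ℝ), ∀ i, 0 ≤ n t i) ∧
  ∀ t ∈ Ici (0:ℝ),
    (∀ i, DifferentiableWithinAt ℝ (fun s => n s i) (Ici 0) t) →
    (∀ i, (0 < n t i →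
        HasDerivWithinAt (fun s => n s i) (ν i - μ i * Λ (n t) i) (Ici 0) t) ∧
      (n t i = 0 → HasDerivWithinAt (fun s => n s i) 0 (Ici 0) t)) ∧
    ∀ j, (∑ i, A j i * (if 0 < n t i then Λ (n t) i else ν i / μ i)) ≤ C j

/-- The set `J*` of critically loaded resources. -/
def Jstar {I J : ℕ} (A : Fin J → Fin I → ℝ) (C : Fin J → ℝ)
    (ν μ : Fin I → ℝ) : Set (Fin J) :=
  {j | ∑ i, A j i * (ν i / μ i) = C j}

/-- The workload map `w(n)`. -/
def wl {I J : ℕ} (A : Fin J → Fin I → ℝ) (μ : Fin I → ℝ)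
    (n : Fin I → ℝ) : Fin J → ℝ :=
  fun j => ∑ i, A j i * n i / μ i

/-- Feasible set of the workload optimization problem (22) for workload `w`. -/
def WFeasible {I J : ℕ} (A : Fin J → Fin I → ℝ) (C : Fin J → ℝ)
    (ν μ : Fin I → ℝ) (w : Fin J → ℝ) : Set (Fin I → ℝ) :=
  {m | (∀ i, 0 ≤ m i) ∧ ∀ j ∈ Jstar A C ν μ, w j ≤ ∑ i, A j i * m i / μ i}

/-- The Lyapunov function `F`. -/
def Ffun {I : ℕ} (α : ℝ) (κ ν μ : Fin I → ℝ) (n : Fin I → ℝ) : ℝ :=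
  (1 / (α + 1)) * ∑ i, ν i * κ i * μ i ^ (α - 1) * (n i / ν i) ^ (α + 1)

/-- The function `K` (the derivative of `F` along fluid model solutions). -/
def Kfun {I : ℕ} (α : ℝ) (κ ν μ : Fin I → ℝ)
    (Λ : (Fin I → ℝ) → Fin I → ℝ) (n : Fin I → ℝ) : ℝ :=
  ∑ i, if 0 < n i then κ i * (μ i * n i / ν i) ^ α * (ν i / μ i - Λ n i) else 0

namespace KW
lemma amgm2_strict {w₁ w₂ p₁ p₂ : ℝ} (hw₁ : 0 < w₁) (hw₂ : 0 < w₂) (hp₁ : 0 < p₁)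
    (hp₂ : 0 < p₂) (hw : w₁ + w₂ = 1) (hp : p₁ ≠ p₂) :
    p₁ ^ w₁ * p₂ ^ w₂ < w₁ * p₁ + w₂ * p₂ := by
  have h := strictConcaveOn_log_Ioi.2 (mem_Ioi.2 hp₁) (mem_Ioi.2 hp₂) hp hw₁ hw₂ hw
  have hpos : 0 < w₁ * p₁ + w₂ * p₂ := by positivity
  have h1 : p₁ ^ w₁ * p₂ ^ w₂ = exp (w₁ * log p₁ + w₂ * log p₂) := by
    rw [exp_add, rpow_def_of_pos hp₁, rpow_def_of_pos hp₂, mul_comm (log p₁), mul_comm (log p₂)]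
  rw [h1]
  calc exp (w₁ * log p₁ + w₂ * log p₂) < exp (log (w₁ * p₁ + w₂ * p₂)) := by
        apply exp_lt_exp.2
        simpa [smul_eq_mul] using h
    _ = w₁ * p₁ + w₂ * p₂ := exp_log hpos

/-- Bernoulli-type: for `0 < q < 1`, `t ≥ 0`: `t^q ≤ 1 + q (t-1)`, strict if `t ≠ 1`. -/
lemma tineq_lt_one_strict {q t : ℝ} (hq0 : 0 < q) (hq1 : q < 1) (ht : 0 ≤ t) (ht1 : t ≠ 1) :
    t ^ q < 1 + q * (t - 1) := by
  rcases eq_or_lt_of_le ht with h0 | h0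
  · rw [← h0, Real.zero_rpow hq0.ne']
    nlinarith
  · have h := amgm2_strict (w₁ := q) (w₂ := 1 - q) (p₁ := t) (p₂ := 1) hq0 (by linarith) h0
      one_pos (by ring) (by simpa using ht1)
    rw [Real.one_rpow] at h
    nlinarith [h]

lemma tineq_lt_one {q t : ℝ} (hq0 : 0 < q) (hq1 : q < 1) (ht : 0 ≤ t) :
    t ^ q ≤ 1 + q * (t - 1) := by
  rcases eq_or_ne t 1 with rfl | h1
  · simp
  · exact (tineq_lt_one_strict hq0 hq1 ht h1).le

/-- For `q < 0`, `t > 0`: `1 + q (t-1) ≤ t^q`, strict if `t ≠ 1`. -/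
lemma tineq_neg_strict {q t : ℝ} (hq : q < 0) (ht : 0 < t) (ht1 : t ≠ 1) :
    1 + q * (t - 1) < t ^ q := by
  have h1q : (0:ℝ) < 1 - q := by linarith
  have htq : 0 < t ^ q := Real.rpow_pos_of_pos ht q
  have hne : (1 - q) * t ^ q ≠ (1 - q) * t := by
    have htt : t ^ q ≠ t := by
      intro h
      rcases lt_trichotomy t 1 with h2 | h2 | h2
      · have h3 : 1 < t ^ q := (Real.one_lt_rpow_iff_of_pos ht).2 (Or.inr ⟨h2, hq⟩)
        rw [h] at h3; linarith
      · exact ht1 h2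
      · have h3 : t ^ q < 1 := Real.rpow_lt_one_of_one_lt_of_neg h2 hq
        rw [h] at h3; linarith
    exact fun hh => htt (mul_left_cancel₀ h1q.ne' hh)
  have h := amgm2_strict (w₁ := 1/(1-q)) (w₂ := -q/(1-q)) (p₁ := (1-q) * t ^ q)
    (p₂ := (1-q) * t) (by positivity) (div_pos (neg_pos.2 hq) h1q) (by positivity)
    (by positivity) (by field_simp; ring) hne
  have e1 : ((1-q) * t ^ q) ^ (1/(1-q)) * ((1-q) * t) ^ (-q/(1-q)) = 1 - q := by
    rw [Real.mul_rpow h1q.le htq.le, Real.mul_rpow h1q.le ht.le, ← Real.rpow_mul ht.le]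
    calc (1-q) ^ (1/(1-q)) * t ^ (q * (1/(1-q))) * ((1-q) ^ (-q/(1-q)) * t ^ (-q/(1-q)))
        = ((1-q) ^ (1/(1-q)) * (1-q) ^ (-q/(1-q))) * (t ^ (q * (1/(1-q))) * t ^ (-q/(1-q))) := by
          ring
      _ = (1-q) ^ (1/(1-q) + -q/(1-q)) * t ^ (q * (1/(1-q)) + -q/(1-q)) := by
          rw [← Real.rpow_add h1q, ← Real.rpow_add ht]
      _ = 1 - q := by
          have e2 : 1/(1-q) + -q/(1-q) = 1 := by field_simp; ring
          have e3 : q * (1/(1-q)) + -q/(1-q) = 0 := by field_simp; ring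
          rw [e2, e3, Real.rpow_one, Real.rpow_zero, mul_one]
  rw [e1] at h
  have h2 : 1 - q < t ^ q + -q * t := by
    have hd : (1/(1-q)) * ((1-q) * t ^ q) = t ^ q := by field_simp
    have hd2 : (-q/(1-q)) * ((1-q) * t) = -q * t := by field_simp
    rw [hd, hd2] at h; exact h
  nlinarith

lemma tineq_neg {q t : ℝ} (hq : q < 0) (ht : 0 < t) : 1 + q * (t - 1) ≤ t ^ q := by
  rcases eq_or_ne t 1 with rfl | h1
  · simp
  · exact (tineq_neg_strict hq ht h1).le

/-- For `1 < p`, `t ≥ 0`: `1 + p (t-1) ≤ t^p`. -/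
lemma tineq_gt_one {p t : ℝ} (hp : 1 < p) (ht : 0 ≤ t) : 1 + p * (t - 1) ≤ t ^ p := by
  have hp0 : 0 < p := by linarith
  have h := tineq_lt_one (q := 1/p) (t := t ^ p) (by positivity) (by
    rw [div_lt_one hp0]; linarith) (Real.rpow_nonneg ht p)
  rw [← Real.rpow_mul ht, mul_one_div, div_self hp0.ne', Real.rpow_one] at h
  -- t ≤ 1 + (1/p) * (t^p - 1)
  have := mul_le_mul_of_nonneg_left h hp0.le
  rw [mul_add, mul_one, ← mul_assoc, mul_one_div, div_self hp0.ne', one_mul] at this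
  linarith


/-- Gradient inequality for the convex function `x ↦ x^p`, `p > 1`, on `[0,∞)`. -/
lemma grad_conv {p x y : ℝ} (hp : 1 < p) (hx : 0 ≤ x) (hy : 0 ≤ y) :
    x ^ p + p * x ^ (p - 1) * (y - x) ≤ y ^ p := by
  rcases eq_or_lt_of_le hx with h0 | h0
  · rw [← h0, Real.zero_rpow (by positivity : p ≠ 0), Real.zero_rpow (by intro h; nlinarith [h] : p - 1 ≠ 0)]
    simpa using Real.rpow_nonneg hy p
  · have h := tineq_gt_one hp (t := y/x) (div_nonneg hy h0.le)
    have hxp : (0:ℝ) < x ^ p := Real.rpow_pos_of_pos h0 p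
    have key := mul_le_mul_of_nonneg_left h hxp.le
    have e1 : x ^ p * (y/x) ^ p = y ^ p := by
      rw [← Real.mul_rpow h0.le (div_nonneg hy h0.le)]
      rw [mul_div_cancel₀ _ h0.ne']
    have e2 : x ^ p * (1 + p * (y/x - 1)) = x ^ p + p * x ^ (p-1) * (y - x) := by
      rw [Real.rpow_sub_one h0.ne']
      field_simp
    rw [e1, e2] at key
    exact key

/-- Strict gradient inequality for the concave `x ↦ x^q/q` (`q < 1`, `q ≠ 0`) on `(0,∞)`. -/
lemma grad_conc_strict {q x y : ℝ} (hq1 : q < 1) (hq0 : q ≠ 0) (hx : 0 < x) (hy : 0 ≤ y)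
    (hy' : q < 0 → 0 < y) (hxy : y ≠ x) :
    y ^ q / q < x ^ q / q + x ^ (q - 1) * (y - x) := by
  have ht1 : y / x ≠ 1 := by
    intro h; exact hxy (by field_simp at h; linarith)
  have hxq : (0:ℝ) < x ^ q := Real.rpow_pos_of_pos hx q
  have e1 : x ^ q * (y/x) ^ q = y ^ q := by
    rw [← Real.mul_rpow hx.le (div_nonneg hy hx.le), mul_div_cancel₀ _ hx.ne']
  have e2 : (x ^ q / q) * (1 + q * (y/x - 1)) = x ^ q / q + x ^ (q-1) * (y - x) := by
    rw [Real.rpow_sub_one hx.ne']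
    field_simp
  rcases lt_or_gt_of_ne hq0 with hqneg | hqpos
  · have h := tineq_neg_strict hqneg (div_pos (hy' hqneg) hx) ht1
    have hc : x ^ q / q < 0 := div_neg_of_pos_of_neg hxq hqneg
    have key := mul_lt_mul_of_neg_left h hc
    rw [mul_comm (x^q/q) ((y/x)^q)] at key
    have e1' : (y/x) ^ q * (x ^ q / q) = y ^ q / q := by
      rw [div_eq_mul_inv (x^q), ← mul_assoc, mul_comm ((y/x)^q), e1, div_eq_mul_inv]
    rw [e1', e2] at key
    exact key
  · have h := tineq_lt_one_strict hqpos hq1 (div_nonneg hy hx.le) ht1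
    have hc : 0 < x ^ q / q := div_pos hxq hqpos
    have key := mul_lt_mul_of_pos_left h hc
    rw [mul_comm (x^q/q) ((y/x)^q)] at key
    have e1' : (y/x) ^ q * (x ^ q / q) = y ^ q / q := by
      rw [div_eq_mul_inv (x^q), ← mul_assoc, mul_comm ((y/x)^q), e1, div_eq_mul_inv]
    rw [e1', e2] at key
    exact key

lemma grad_conc {q x y : ℝ} (hq1 : q < 1) (hq0 : q ≠ 0) (hx : 0 < x) (hy : 0 ≤ y)
    (hy' : q < 0 → 0 < y) :
    y ^ q / q ≤ x ^ q / q + x ^ (q - 1) * (y - x) := by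
  rcases eq_or_ne y x with rfl | hxy
  · simp
  · exact (grad_conc_strict hq1 hq0 hx hy hy' hxy).le

lemma grad_log_strict {x y : ℝ} (hx : 0 < x) (hy : 0 < y) (hxy : y ≠ x) :
    Real.log y < Real.log x + x⁻¹ * (y - x) := by
  have h := Real.log_lt_sub_one_of_pos (x := y/x) (div_pos hy hx) (by
    intro h; exact hxy (by field_simp at h; linarith))
  rw [Real.log_div hy.ne' hx.ne'] at h
  have : y / x - 1 = x⁻¹ * (y - x) := by field_simp
  linarith [this ▸ h]

lemma grad_log {x y : ℝ} (hx : 0 < x) (hy : 0 < y) :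
    Real.log y ≤ Real.log x + x⁻¹ * (y - x) := by
  rcases eq_or_ne y x with rfl | hxy
  · simp
  · exact (grad_log_strict hx hy hxy).le


variable {I J : ℕ}

/-- Real-valued version of the objective `G`. -/
def Greal (α : ℝ) (κ n L : Fin I → ℝ) : ℝ :=
  if α = 1 then ∑ i, (if 0 < n i then κ i * n i * Real.log (L i) else 0)
  else ∑ i, (if 0 < n i then κ i * n i ^ α * L i ^ (1 - α) / (1 - α) else 0)

/-- The vector `ρ⁺`. -/
def Rvec (ν μ n : Fin I → ℝ) : Fin I → ℝ := fun i => if 0 < n i then ν i / μ i else 0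

/-- The gradient of `F` at `n`. -/
def cgrad (α : ℝ) (κ ν μ n : Fin I → ℝ) : Fin I → ℝ :=
  fun i => κ i * μ i ^ (α - 1) * (n i / ν i) ^ α

lemma Gfun_eq_Greal {α : ℝ} {κ n L : Fin I → ℝ}
    (h : 1 ≤ α → ∀ i, 0 < n i → L i ≠ 0) :
    Gfun α κ n L = ((Greal α κ n L : ℝ) : EReal) := by
  unfold Gfun Greal
  rw [if_neg (by rintro ⟨h1, i, hi, hLi⟩; exact h h1 i hi hLi)]
  split <;> rfl

lemma cgrad_eq_zero {α : ℝ} (hα : 0 < α) {κ ν μ n : Fin I → ℝ} {i : Fin I}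
    (hn : n i = 0) : cgrad α κ ν μ n i = 0 := by
  unfold cgrad
  rw [hn, zero_div, Real.zero_rpow hα.ne', mul_zero]

lemma coeff_eq {α : ℝ} (hα : 0 < α) {κ ν μ n : Fin I → ℝ} {i : Fin I}
    (hν : 0 < ν i) (hμ : 0 < μ i) (hn : 0 ≤ n i) :
    κ i * n i ^ α * (ν i / μ i) ^ (-α) = μ i * cgrad α κ ν μ n i := by
  unfold cgrad
  have hρ : 0 < ν i / μ i := div_pos hν hμ
  have e1 : (n i / ν i) ^ α = n i ^ α / ν i ^ α := Real.div_rpow hn hν.le α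
  have e2 : (ν i / μ i) ^ α = ν i ^ α / μ i ^ α := Real.div_rpow hν.le hμ.le α
  have e3 : μ i ^ (α - 1) = μ i ^ α / μ i := by
    rw [Real.rpow_sub hμ, Real.rpow_one]
  have hνα : (0:ℝ) < ν i ^ α := Real.rpow_pos_of_pos hν α
  have hμα : (0:ℝ) < μ i ^ α := Real.rpow_pos_of_pos hμ α
  rw [Real.rpow_neg (div_pos hν hμ).le, e1, e2, e3]
  field_simp


/-- Summand of `Greal`. -/
def Gterm (α : ℝ) (κ n L : Fin I → ℝ) (i : Fin I) : ℝ :=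
  if 0 < n i then
    (if α = 1 then κ i * n i * Real.log (L i)
     else κ i * n i ^ α * L i ^ (1 - α) / (1 - α))
  else 0

lemma Greal_eq_sum {α : ℝ} (κ n L : Fin I → ℝ) :
    Greal α κ n L = ∑ i, Gterm α κ n L i := by
  unfold Greal Gterm
  by_cases h : α = 1 <;> simp [h]

lemma Gterm_lt {α : ℝ} (hα : 0 < α) {κ ν μ n L : Fin I → ℝ} {i : Fin I}
    (hκ : 0 < κ i) (hν : 0 < ν i) (hμ : 0 < μ i) (hL : 0 ≤ L i)
    (hL1 : 1 ≤ α → 0 < n i → 0 < L i) (hni : 0 < n i) (hLne : L i ≠ ν i / μ i) :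
    Gterm α κ n L i < Gterm α κ n (Rvec ν μ n) i
      + μ i * cgrad α κ ν μ n i * (L i - ν i / μ i) := by
  have hρ : 0 < ν i / μ i := div_pos hν hμ
  unfold Gterm Rvec
  rw [if_pos hni, if_pos hni, if_pos hni]
  by_cases h1 : α = 1
  · subst h1
    rw [if_pos rfl, if_pos rfl]
    have hLpos : 0 < L i := hL1 le_rfl hni
    have h := grad_log_strict hρ hLpos hLne
    have hκn : 0 < κ i * n i := by positivity
    have key := mul_lt_mul_of_pos_left h hκn
    have hc : κ i * n i * ((ν i / μ i)⁻¹ * (L i - ν i / μ i))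
        = μ i * cgrad 1 κ ν μ n i * (L i - ν i / μ i) := by
      have := coeff_eq (α := 1) one_pos (κ := κ) (ν := ν) (μ := μ) (n := n)
        (i := i) hν hμ hni.le
      rw [Real.rpow_one, Real.rpow_neg_one] at this
      rw [← this]; ring
    rw [mul_add, hc] at key
    exact key
  · rw [if_neg h1, if_neg h1]
    have hq1 : 1 - α < 1 := by linarith
    have hq0 : 1 - α ≠ 0 := fun h => h1 (by linarith)
    have h := grad_conc_strict hq1 hq0 hρ hL
      (fun hq => hL1 (by linarith) hni) hLne
    have hκn : (0:ℝ) < κ i * n i ^ α := by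
      have := Real.rpow_pos_of_pos hni α; positivity
    have key := mul_lt_mul_of_pos_left h hκn
    have hc : κ i * n i ^ α * ((ν i / μ i) ^ (1 - α - 1) * (L i - ν i / μ i))
        = μ i * cgrad α κ ν μ n i * (L i - ν i / μ i) := by
      have e : (1:ℝ) - α - 1 = -α := by ring
      rw [e, ← mul_assoc, coeff_eq hα hν hμ hni.le]
    rw [mul_add, hc] at key
    calc κ i * n i ^ α * L i ^ (1-α) / (1-α)
        = κ i * n i ^ α * (L i ^ (1-α) / (1-α)) := by ring
      _ < κ i * n i ^ α * ((ν i / μ i) ^ (1-α) / (1-α))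
          + μ i * cgrad α κ ν μ n i * (L i - ν i / μ i) := key
      _ = κ i * n i ^ α * (ν i / μ i) ^ (1-α) / (1-α)
          + μ i * cgrad α κ ν μ n i * (L i - ν i / μ i) := by ring

lemma Gterm_le {α : ℝ} (hα : 0 < α) {κ ν μ n L : Fin I → ℝ} {i : Fin I}
    (hκ : 0 < κ i) (hν : 0 < ν i) (hμ : 0 < μ i) (hL : 0 ≤ L i)
    (hL1 : 1 ≤ α → 0 < n i → 0 < L i) :
    Gterm α κ n L i ≤ Gterm α κ n (Rvec ν μ n) i
      + (if 0 < n i then μ i * cgrad α κ ν μ n i * (L i - ν i / μ i) else 0) := by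
  by_cases hni : 0 < n i
  · rw [if_pos hni]
    by_cases hLe : L i = ν i / μ i
    · have : Gterm α κ n L i = Gterm α κ n (Rvec ν μ n) i := by
        unfold Gterm Rvec
        rw [if_pos hni, if_pos hni, if_pos hni, hLe]
      rw [this, hLe]
      simp
    · exact (Gterm_lt hα hκ hν hμ hL hL1 hni hLe).le
  · rw [if_neg hni]
    unfold Gterm
    rw [if_neg hni, if_neg hni]
    simp

lemma Greal_le {α : ℝ} (hα : 0 < α) {κ ν μ n L : Fin I → ℝ}
    (hκ : ∀ i, 0 < κ i) (hν : ∀ i, 0 < ν i) (hμ : ∀ i, 0 < μ i) (hL : ∀ i, 0 ≤ L i)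
    (hL1 : 1 ≤ α → ∀ i, 0 < n i → 0 < L i) :
    Greal α κ n L ≤ Greal α κ n (Rvec ν μ n)
      + ∑ i, (if 0 < n i then μ i * cgrad α κ ν μ n i * (L i - ν i / μ i) else 0) := by
  rw [Greal_eq_sum, Greal_eq_sum, ← Finset.sum_add_distrib]
  exact Finset.sum_le_sum fun i _ =>
    Gterm_le hα (hκ i) (hν i) (hμ i) (hL i) (fun h1 => hL1 h1 i)

lemma Greal_lt {α : ℝ} (hα : 0 < α) {κ ν μ n L : Fin I → ℝ}
    (hκ : ∀ i, 0 < κ i) (hν : ∀ i, 0 < ν i) (hμ : ∀ i, 0 < μ i) (hL : ∀ i, 0 ≤ L i)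
    (hL1 : 1 ≤ α → ∀ i, 0 < n i → 0 < L i) {i₀ : Fin I} (hi₀ : 0 < n i₀)
    (hne : L i₀ ≠ ν i₀ / μ i₀) :
    Greal α κ n L < Greal α κ n (Rvec ν μ n)
      + ∑ i, (if 0 < n i then μ i * cgrad α κ ν μ n i * (L i - ν i / μ i) else 0) := by
  rw [Greal_eq_sum, Greal_eq_sum, ← Finset.sum_add_distrib]
  refine Finset.sum_lt_sum (fun i _ =>
    Gterm_le hα (hκ i) (hν i) (hμ i) (hL i) (fun h1 => hL1 h1 i))
    ⟨i₀, Finset.mem_univ _, ?_⟩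
  rw [if_pos hi₀]
  exact Gterm_lt hα (hκ i₀) (hν i₀) (hμ i₀) (hL i₀) (fun h1 => hL1 h1 i₀) hi₀ hne


/-- Gradient inequality for `F`. -/
lemma Ffun_grad_le {α : ℝ} (hα : 0 < α) {κ ν μ n m : Fin I → ℝ}
    (hκ : ∀ i, 0 < κ i) (hν : ∀ i, 0 < ν i) (hμ : ∀ i, 0 < μ i)
    (hn : ∀ i, 0 ≤ n i) (hm : ∀ i, 0 ≤ m i) :
    Ffun α κ ν μ n + ∑ i, cgrad α κ ν μ n i * (m i - n i) ≤ Ffun α κ ν μ m := by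
  unfold Ffun cgrad
  rw [Finset.mul_sum, Finset.mul_sum, ← Finset.sum_add_distrib]
  refine Finset.sum_le_sum fun i _ => ?_
  have hp : (1:ℝ) < α + 1 := by linarith
  have h := grad_conv hp (div_nonneg (hn i) (hν i).le) (div_nonneg (hm i) (hν i).le)
  have hK : (0:ℝ) < 1 / (α + 1) * (ν i * κ i * μ i ^ (α - 1)) := by
    have h1 : (0:ℝ) < μ i ^ (α - 1) := Real.rpow_pos_of_pos (hμ i) _
    have h2 := hν i
    have h3 := hκ i
    have h4 : (0:ℝ) < α + 1 := by linarith
    positivity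
  have key := mul_le_mul_of_nonneg_left h hK.le
  have e : 1 / (α + 1) * (ν i * κ i * μ i ^ (α - 1)) *
      ((n i / ν i) ^ (α + 1) + (α + 1) * (n i / ν i) ^ (α + 1 - 1) * (m i / ν i - n i / ν i))
      = 1 / (α + 1) * (ν i * κ i * μ i ^ (α - 1) * (n i / ν i) ^ (α + 1))
        + κ i * μ i ^ (α - 1) * (n i / ν i) ^ α * (m i - n i) := by
    have e2 : α + 1 - 1 = α := by ring
    have hν' : ν i ≠ 0 := (hν i).ne'
    have hα1 : α + 1 ≠ 0 := by positivity
    rw [e2]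
    field_simp
  rw [e] at key
  calc 1 / (α + 1) * (ν i * κ i * μ i ^ (α - 1) * (n i / ν i) ^ (α + 1))
        + κ i * μ i ^ (α - 1) * (n i / ν i) ^ α * (m i - n i)
      ≤ 1 / (α + 1) * (ν i * κ i * μ i ^ (α - 1)) * (m i / ν i) ^ (α + 1) := key
    _ = 1 / (α + 1) * (ν i * κ i * μ i ^ (α - 1) * (m i / ν i) ^ (α + 1)) := by ring

/-- One-sided derivative sign at a constrained minimum. -/
lemma deriv_nonneg_of_min {φ : ℝ → ℝ} {D t₀ : ℝ} (ht₀ : 0 < t₀)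
    (hd : HasDerivAt φ D 0) (hmin : ∀ t ∈ Ioo (0:ℝ) t₀, φ 0 ≤ φ t) : 0 ≤ D := by
  have h := hd.hasDerivWithinAt (s := Ioi (0:ℝ))
  rw [hasDerivWithinAt_iff_tendsto_slope] at h
  have he : (Ioi (0:ℝ)) \ {0} = Ioi 0 := diff_singleton_eq_self (by simp)
  rw [he] at h
  refine ge_of_tendsto h ?_
  filter_upwards [Ioo_mem_nhdsGT ht₀] with t ht
  rw [slope_def_field]
  have h1 : 0 ≤ φ t - φ 0 := sub_nonneg.2 (hmin t ht)
  have h2 : 0 < t - 0 := by simpa using ht.1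
  exact div_nonneg h1 h2.le

lemma deriv_nonpos_of_max {φ : ℝ → ℝ} {D t₀ : ℝ} (ht₀ : 0 < t₀)
    (hd : HasDerivAt φ D 0) (hmax : ∀ t ∈ Ioo (0:ℝ) t₀, φ t ≤ φ 0) : D ≤ 0 := by
  have h : (0:ℝ) ≤ -D := deriv_nonneg_of_min ht₀ hd.neg
    (fun t ht => neg_le_neg (hmax t ht))
  linarith

/-- Uniform small-ε lemma. -/
lemma exists_pos_mul_le {k : ℕ} (a b : Fin k → ℝ) (hb : ∀ x, 0 < b x) :
    ∃ ε : ℝ, 0 < ε ∧ ε ≤ 1 ∧ ∀ x, ε * a x ≤ b x := by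
  rcases isEmpty_or_nonempty (Fin k) with he | he
  · exact ⟨1, one_pos, le_rfl, fun x => (IsEmpty.false x).elim⟩
  · obtain ⟨x₀, -, hx₀⟩ := Finset.exists_min_image Finset.univ
      (fun x => b x / (|a x| + 1)) ⟨he.some, Finset.mem_univ _⟩
    refine ⟨min 1 (b x₀ / (|a x₀| + 1)), lt_min one_pos (div_pos (hb x₀) (by positivity)), min_le_left _ _,
      fun x => ?_⟩
    have h1 : min 1 (b x₀ / (|a x₀| + 1)) ≤ b x / (|a x| + 1) :=
      (min_le_right _ _).trans (hx₀ x (Finset.mem_univ _))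
    have h2 : (0:ℝ) < |a x| + 1 := by positivity
    have h3 : min 1 (b x₀ / (|a x₀| + 1)) * (|a x| + 1) ≤ b x := by
      rw [← le_div_iff₀ h2]; exact h1
    have h4 : (0:ℝ) < min 1 (b x₀ / (|a x₀| + 1)) := lt_min one_pos (div_pos (hb x₀) (by positivity))
    nlinarith [le_abs_self (a x), abs_nonneg (a x)]


lemma hasDerivAt_Ffun_dir {α : ℝ} (hα : 0 < α) {κ ν μ n dir : Fin I → ℝ}
    (hν : ∀ i, 0 < ν i) :
    HasDerivAt (fun t => Ffun α κ ν μ (fun i => n i + t * dir i))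
      (∑ i, cgrad α κ ν μ n i * dir i) 0 := by
  have hterm : ∀ i : Fin I, HasDerivAt
      (fun t => ν i * κ i * μ i ^ (α - 1) * ((n i + t * dir i) / ν i) ^ (α + 1))
      (ν i * κ i * μ i ^ (α - 1) *
        (dir i / ν i * (α + 1) * ((n i + 0 * dir i) / ν i) ^ (α + 1 - 1))) 0 := by
    intro i
    have h1 : HasDerivAt (fun t : ℝ => n i + t * dir i) (dir i) 0 := by
      simpa using ((hasDerivAt_id (0:ℝ)).mul_const (dir i)).const_add (n i)
    have h2 := h1.div_const (ν i)
    have h3 := h2.rpow_const (p := α + 1) (Or.inr (by linarith))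
    exact h3.const_mul _
  have hsum := (HasDerivAt.fun_sum (u := Finset.univ) (fun i _ => hterm i)).const_mul (1 / (α + 1))
  have hval : (1 / (α + 1)) * (∑ i, ν i * κ i * μ i ^ (α - 1) *
        (dir i / ν i * (α + 1) * ((n i + 0 * dir i) / ν i) ^ (α + 1 - 1)))
      = ∑ i, cgrad α κ ν μ n i * dir i := by
    rw [Finset.mul_sum]
    refine Finset.sum_congr rfl fun i _ => ?_
    have e2 : α + 1 - 1 = α := by ring
    have hν' : ν i ≠ 0 := (hν i).ne'
    have hα1 : α + 1 ≠ 0 := by positivity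
    rw [e2, zero_mul, add_zero]
    unfold cgrad
    field_simp
  rw [hval] at hsum
  exact hsum

lemma hasDerivAt_Greal_dir {α : ℝ} (hα : 0 < α) {κ n B d : Fin I → ℝ}
    (hB : ∀ i, 0 < n i → 0 < B i) :
    HasDerivAt (fun t => Greal α κ n (fun i => B i + t * d i))
      (∑ i, if 0 < n i then κ i * n i ^ α * B i ^ (-α) * d i else 0) 0 := by
  have hinner : ∀ i : Fin I, HasDerivAt (fun t : ℝ => B i + t * d i) (d i) 0 := by
    intro i
    simpa using ((hasDerivAt_id (0:ℝ)).mul_const (d i)).const_add (B i)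
  have hB0 : ∀ i, 0 < n i → B i + 0 * d i ≠ 0 := by
    intro i h; simpa using (hB i h).ne'
  by_cases hα1 : α = 1
  · subst hα1
    have hterm : ∀ i : Fin I, HasDerivAt
        (fun t => if 0 < n i then κ i * n i * Real.log (B i + t * d i) else 0)
        (if 0 < n i then κ i * n i ^ (1:ℝ) * B i ^ (-(1:ℝ)) * d i else 0) 0 := by
      intro i
      split_ifs with h
      · have h3 := ((hinner i).log (hB0 i h)).const_mul (κ i * n i)
        refine h3.congr_deriv ?_
        rw [Real.rpow_one, Real.rpow_neg_one, zero_mul, add_zero, div_eq_mul_inv]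
        ring
      · exact hasDerivAt_const _ _
    have := HasDerivAt.fun_sum (u := Finset.univ) (fun i _ => hterm i)
    refine this.congr_of_eventuallyEq (Filter.Eventually.of_forall fun t => ?_)
    unfold Greal
    beta_reduce
    rw [if_pos rfl]
  · have hterm : ∀ i : Fin I, HasDerivAt
        (fun t => if 0 < n i then κ i * n i ^ α * (B i + t * d i) ^ (1 - α) / (1 - α) else 0)
        (if 0 < n i then κ i * n i ^ α * B i ^ (-α) * d i else 0) 0 := by
      intro i
      split_ifs with h
      · have h3 := (((hinner i).rpow_const (p := 1 - α)
          (Or.inl (hB0 i h))).div_const (1 - α)).const_mul (κ i * n i ^ α)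
        have h1α : (1:ℝ) - α ≠ 0 := fun hh => hα1 (by linarith)
        have hf : (fun t => κ i * n i ^ α * (B i + t * d i) ^ (1 - α) / (1 - α))
            = fun y => κ i * n i ^ α * ((B i + y * d i) ^ (1 - α) / (1 - α)) := by
          funext t
          ring
        rw [hf]
        refine h3.congr_deriv ?_
        rw [zero_mul, add_zero, show (1:ℝ) - α - 1 = -α by ring]
        field_simp
      · exact hasDerivAt_const _ _
    have := HasDerivAt.fun_sum (u := Finset.univ) (fun i _ => hterm i)
    refine this.congr_of_eventuallyEq (Filter.Eventually.of_forall fun t => ?_)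
    unfold Greal
    beta_reduce
    rw [if_neg hα1]


lemma mul_le_of_le_of_pos {ε ε' a b : ℝ} (hb : 0 < b) (h : ε * a ≤ b) (h1 : 0 < ε')
    (h2 : ε' ≤ ε) : ε' * a ≤ b := by
  rcases le_or_gt a 0 with ha | ha
  · nlinarith
  · nlinarith

section Main

variable {A : Fin J → Fin I → ℝ} {C : Fin J → ℝ} {α : ℝ} {κ ν μ n : Fin I → ℝ}

lemma Rvec_pos (hν : ∀ i, 0 < ν i) (hμ : ∀ i, 0 < μ i) {i : Fin I} (h : 0 < n i) :
    0 < Rvec ν μ n i := by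
  unfold Rvec; rw [if_pos h]; exact div_pos (hν i) (hμ i)

lemma Rvec_nonneg (hν : ∀ i, 0 < ν i) (hμ : ∀ i, 0 < μ i) (i : Fin I) :
    0 ≤ Rvec ν μ n i := by
  unfold Rvec; split_ifs with h
  · exact (div_pos (hν i) (hμ i)).le
  · exact le_rfl

lemma Rvec_eq_zero {i : Fin I} (h : n i = 0) : Rvec ν μ n i = 0 := by
  unfold Rvec; rw [if_neg (by rw [h]; exact lt_irrefl 0)]

lemma Rvec_mem_Feasible (hν : ∀ i, 0 < ν i) (hμ : ∀ i, 0 < μ i)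
    (hA01 : ∀ j i, A j i = 0 ∨ A j i = 1)
    (hload : ∀ j, (∑ i, A j i * (ν i / μ i)) ≤ C j) :
    Rvec ν μ n ∈ Feasible A C n := by
  refine ⟨Rvec_nonneg hν hμ, fun i hi => Rvec_eq_zero hi, fun j => ?_⟩
  refine le_trans (Finset.sum_le_sum fun i _ => ?_) (hload j)
  have hA : 0 ≤ A j i := by rcases hA01 j i with h | h <;> rw [h] <;> norm_num
  unfold Rvec
  split_ifs with h
  · exact le_rfl
  · simpa using mul_nonneg hA (div_pos (hν i) (hμ i)).le

/-- Linear optimality from maximality of `Rvec`. -/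
lemma lin_opt (hα : 0 < α) (hκ : ∀ i, 0 < κ i) (hν : ∀ i, 0 < ν i) (hμ : ∀ i, 0 < μ i)
    (hn : ∀ i, 0 ≤ n i) (hA01 : ∀ j i, A j i = 0 ∨ A j i = 1)
    (hload : ∀ j, (∑ i, A j i * (ν i / μ i)) ≤ C j)
    (hmax : ∀ L' ∈ Feasible A C n, Gfun α κ n L' ≤ Gfun α κ n (Rvec ν μ n)) :
    ∀ L ∈ Feasible A C n,
      (∑ i, if 0 < n i then μ i * cgrad α κ ν μ n i * (L i - ν i / μ i) else 0) ≤ 0 := by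
  intro L hL
  set R := Rvec ν μ n with hRdef
  have hRfeas : R ∈ Feasible A C n := Rvec_mem_Feasible hν hμ hA01 hload
  have hseg : ∀ t ∈ Ioo (0:ℝ) 1, (fun i => R i + t * (L i - R i)) ∈ Feasible A C n := by
    intro t ht
    refine ⟨fun i => ?_, fun i hi => ?_, fun j => ?_⟩
    · show 0 ≤ R i + t * (L i - R i)
      have h1 := hRfeas.1 i
      have h2 := hL.1 i
      nlinarith [mul_nonneg (sub_nonneg.2 ht.2.le) h1, mul_nonneg ht.1.le h2]
    · show R i + t * (L i - R i) = 0
      rw [hRfeas.2.1 i hi, hL.2.1 i hi]; ring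
    · show ∑ i, A j i * (R i + t * (L i - R i)) ≤ C j
      have e : ∑ i, A j i * (R i + t * (L i - R i))
          = (1 - t) * ∑ i, A j i * R i + t * ∑ i, A j i * L i := by
        rw [Finset.mul_sum, Finset.mul_sum, ← Finset.sum_add_distrib]
        exact Finset.sum_congr rfl fun i _ => by ring
      rw [e]
      have h1 := hRfeas.2.2 j
      have h2 := hL.2.2 j
      nlinarith [mul_le_mul_of_nonneg_left h1 (sub_nonneg.2 ht.2.le),
        mul_le_mul_of_nonneg_left h2 ht.1.le]
  have hsegpos : ∀ t ∈ Ioo (0:ℝ) 1, ∀ i, 0 < n i → 0 < R i + t * (L i - R i) := by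
    intro t ht i hi
    have h1 : 0 < R i := Rvec_pos hν hμ hi
    have h2 := hL.1 i
    nlinarith [mul_pos (sub_pos.2 ht.2) h1, mul_nonneg ht.1.le h2]
  have hφ : ∀ t ∈ Ioo (0:ℝ) 1,
      Greal α κ n (fun i => R i + t * (L i - R i)) ≤ Greal α κ n R := by
    intro t ht
    have h1 := hmax _ (hseg t ht)
    rw [Gfun_eq_Greal (fun _ i hi => (hsegpos t ht i hi).ne'),
      Gfun_eq_Greal (fun _ i hi => (Rvec_pos hν hμ hi).ne')] at h1
    exact_mod_cast h1
  have hD := hasDerivAt_Greal_dir (κ := κ) hα (B := R) (d := fun i => L i - R i)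
    (fun i h => Rvec_pos hν hμ h)
  have hφ0 : (fun i => R i + (0:ℝ) * (L i - R i)) = R := by funext i; ring
  have hDle : (∑ i, if 0 < n i then κ i * n i ^ α * R i ^ (-α) * (L i - R i) else 0) ≤ 0 := by
    refine deriv_nonpos_of_max one_pos hD fun t ht => ?_
    have := hφ t ht
    simpa [hφ0] using this
  calc (∑ i, if 0 < n i then μ i * cgrad α κ ν μ n i * (L i - ν i / μ i) else 0)
      = ∑ i, if 0 < n i then κ i * n i ^ α * R i ^ (-α) * (L i - R i) else 0 := by
        refine Finset.sum_congr rfl fun i _ => ?_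
        by_cases h : 0 < n i
        · rw [if_pos h, if_pos h, hRdef]
          unfold Rvec
          rw [if_pos h, coeff_eq hα (hν i) (hμ i) (hn i)]
        · rw [if_neg h, if_neg h]
    _ ≤ 0 := hDle

/-- Direction A: if the allocation is `ρ` on `I₊`, then `n` minimizes `F`. -/
lemma dirA {Lam : Fin I → ℝ} (hα : 0 < α) (hκ : ∀ i, 0 < κ i) (hν : ∀ i, 0 < ν i)
    (hμ : ∀ i, 0 < μ i) (hn : ∀ i, 0 ≤ n i) (hA01 : ∀ j i, A j i = 0 ∨ A j i = 1)
    (hload : ∀ j, (∑ i, A j i * (ν i / μ i)) ≤ C j)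
    (hAlloc : IsAlloc A C α κ n Lam) (hΛρ : ∀ i, 0 < n i → Lam i = ν i / μ i) :
    ∀ m ∈ WFeasible A C ν μ (wl A μ n), Ffun α κ ν μ n ≤ Ffun α κ ν μ m := by
  classical
  intro m hm
  have hLamR : Lam = Rvec ν μ n := by
    funext i
    by_cases h : 0 < n i
    · rw [hΛρ i h]; unfold Rvec; rw [if_pos h]
    · rw [hAlloc.1.2.1 i (le_antisymm (not_lt.1 h) (hn i)), Rvec_eq_zero
        (le_antisymm (not_lt.1 h) (hn i))]
  have hmax : ∀ L' ∈ Feasible A C n, Gfun α κ n L' ≤ Gfun α κ n (Rvec ν μ n) := by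
    intro L' hL'
    rw [← hLamR]
    exact hAlloc.2 L' hL'
  -- small ε making the perturbed allocation feasible
  obtain ⟨ε₁, hε₁, hε₁1, h₁⟩ := exists_pos_mul_le
    (fun i => (m i - n i) / μ i) (fun i => ν i / μ i)
    (fun i => div_pos (hν i) (hμ i))
  obtain ⟨ε₂, hε₂, hε₂1, h₂⟩ := exists_pos_mul_le
    (fun i => m i / μ i) (fun i => ν i / μ i)
    (fun i => div_pos (hν i) (hμ i))
  obtain ⟨ε₃, hε₃, hε₃1, h₃⟩ := exists_pos_mul_le
    (fun j => wl A μ n j - wl A μ m j)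
    (fun j => if (∑ i, A j i * (ν i / μ i)) = C j then 1 else C j - ∑ i, A j i * (ν i / μ i))
    (fun j => by
      show 0 < if (∑ i, A j i * (ν i / μ i)) = C j then 1 else C j - ∑ i, A j i * (ν i / μ i)
      split_ifs with h
      · exact one_pos
      · exact sub_pos.2 (lt_of_le_of_ne (hload j) h))
  set ε := min ε₁ (min ε₂ ε₃) with hε
  have hεpos : 0 < ε := lt_min hε₁ (lt_min hε₂ hε₃)
  have hεle₁ : ε ≤ ε₁ := min_le_left _ _
  have hεle₂ : ε ≤ ε₂ := (min_le_right _ _).trans (min_le_left _ _)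
  have hεle₃ : ε ≤ ε₃ := (min_le_right _ _).trans (min_le_right _ _)
  set L : Fin I → ℝ := fun i => if 0 < n i then ν i / μ i + ε * ((n i - m i) / μ i) else 0
    with hLdef
  have hLfeas : L ∈ Feasible A C n := by
    refine ⟨fun i => ?_, fun i hi => ?_, fun j => ?_⟩
    · show 0 ≤ (if 0 < n i then ν i / μ i + ε * ((n i - m i) / μ i) else 0)
      by_cases h : 0 < n i
      · rw [if_pos h]
        have := mul_le_of_le_of_pos (div_pos (hν i) (hμ i)) (h₁ i) hεpos hεle₁
        have e : ε * ((n i - m i) / μ i) = -(ε * ((m i - n i) / μ i)) := by ring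
        linarith [e ▸ (neg_le_neg this)]
      · rw [if_neg h]
    · show (if 0 < n i then ν i / μ i + ε * ((n i - m i) / μ i) else 0) = 0
      rw [if_neg (by rw [hi]; exact lt_irrefl 0)]
    · -- capacity
      have hterm : ∀ i, A j i * L i = A j i * (ν i / μ i) + ε * (A j i * n i / μ i)
          - ε * (A j i * m i / μ i)
          + (if 0 < n i then 0 else ε * (A j i * m i / μ i) - A j i * (ν i / μ i)) := by
        intro i
        show A j i * (if 0 < n i then ν i / μ i + ε * ((n i - m i) / μ i) else 0) = _
        by_cases h : 0 < n i
        · rw [if_pos h, if_pos h]; ring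
        · have hzero : n i = 0 := le_antisymm (not_lt.1 h) (hn i)
          rw [if_neg h, if_neg h, hzero]; ring
      have hsum : ∑ i, A j i * L i = (∑ i, A j i * (ν i / μ i))
          + ε * wl A μ n j - ε * wl A μ m j
          + ∑ i, (if 0 < n i then 0 else ε * (A j i * m i / μ i) - A j i * (ν i / μ i)) := by
        unfold wl
        rw [Finset.mul_sum, Finset.mul_sum]
        rw [Finset.sum_congr rfl fun i _ => hterm i]
        rw [Finset.sum_add_distrib, Finset.sum_sub_distrib, Finset.sum_add_distrib]
      have hlast : ∑ i, (if 0 < n i then 0 else ε * (A j i * m i / μ i) - A j i * (ν i / μ i))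
          ≤ 0 := by
        refine Finset.sum_nonpos fun i _ => ?_
        split_ifs with h
        · exact le_rfl
        · have hA : 0 ≤ A j i := by rcases hA01 j i with h' | h' <;> rw [h'] <;> norm_num
          have h2 := mul_le_of_le_of_pos (div_pos (hν i) (hμ i)) (h₂ i) hεpos hεle₂
          have e1 : ε * (A j i * m i / μ i) = A j i * (ε * (m i / μ i)) := by ring
          rw [e1]
          nlinarith
      rw [hsum]
      by_cases hJ : (∑ i, A j i * (ν i / μ i)) = C j
      · have hwm : wl A μ n j ≤ wl A μ m j := hm.2 j hJ
        nlinarith [hεpos.le]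
      · have hb : (0:ℝ) < C j - ∑ i, A j i * (ν i / μ i) :=
          sub_pos.2 (lt_of_le_of_ne (hload j) hJ)
        have h3' : ε₃ * (wl A μ n j - wl A μ m j) ≤ C j - ∑ i, A j i * (ν i / μ i) := by
          have := h₃ j; rw [if_neg hJ] at this; exact this
        have h3 := mul_le_of_le_of_pos hb h3' hεpos hεle₃
        have e : ε * wl A μ n j - ε * wl A μ m j = ε * (wl A μ n j - wl A μ m j) := by ring
        linarith
  -- apply linear optimality
  have hlin := lin_opt hα hκ hν hμ hn hA01 hload hmax L hLfeas
  have hsum : (∑ i, if 0 < n i then μ i * cgrad α κ ν μ n i * (L i - ν i / μ i) else 0)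
      = ε * ∑ i, cgrad α κ ν μ n i * (n i - m i) := by
    rw [Finset.mul_sum]
    refine Finset.sum_congr rfl fun i _ => ?_
    by_cases h : 0 < n i
    · rw [if_pos h]
      show μ i * cgrad α κ ν μ n i *
          ((if 0 < n i then ν i / μ i + ε * ((n i - m i) / μ i) else 0) - ν i / μ i) = _
      rw [if_pos h]
      have hμ' : μ i ≠ 0 := (hμ i).ne'
      field_simp
      ring
    · rw [if_neg h, cgrad_eq_zero hα (le_antisymm (not_lt.1 h) (hn i))]
      ring
  rw [hsum] at hlin
  have hgrad : 0 ≤ ∑ i, cgrad α κ ν μ n i * (m i - n i) := by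
    have h5 : ∑ i, cgrad α κ ν μ n i * (m i - n i)
        = -∑ i, cgrad α κ ν μ n i * (n i - m i) := by
      rw [← Finset.sum_neg_distrib]
      exact Finset.sum_congr rfl fun i _ => by ring
    rw [h5]
    have hS : (∑ i, cgrad α κ ν μ n i * (n i - m i)) ≤ 0 := by
      by_contra hpos
      push_neg at hpos
      nlinarith
    linarith
  have := Ffun_grad_le hα hκ hν hμ hn hm.1
  linarith

/-- Direction B, step 1: first-order condition from minimality of `n`. -/
lemma dirB_lin (hα : 0 < α) (hκ : ∀ i, 0 < κ i) (hν : ∀ i, 0 < ν i)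
    (hμ : ∀ i, 0 < μ i) (hn : ∀ i, 0 ≤ n i)
    (hMin : ∀ m ∈ WFeasible A C ν μ (wl A μ n), Ffun α κ ν μ n ≤ Ffun α κ ν μ m) :
    ∀ L ∈ Feasible A C n,
      (∑ i, if 0 < n i then μ i * cgrad α κ ν μ n i * (L i - ν i / μ i) else 0) ≤ 0 := by
  intro L hL
  set dir : Fin I → ℝ := fun i => ν i - μ i * L i with hdir
  obtain ⟨ε, hεpos, hε1, hεh⟩ := exists_pos_mul_le
    (fun i => μ i * L i - ν i) (fun i => if 0 < n i then n i else 1)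
    (fun i => by
      show 0 < if 0 < n i then n i else 1
      split_ifs with h
      · exact h
      · exact one_pos)
  have hmt : ∀ t ∈ Ioo (0:ℝ) ε, (fun i => n i + t * dir i) ∈ WFeasible A C ν μ (wl A μ n) := by
    intro t ht
    refine ⟨fun i => ?_, fun j hj => ?_⟩
    · show 0 ≤ n i + t * dir i
      by_cases h : 0 < n i
      · have hb : (0:ℝ) < n i := h
        have h1 : ε * (μ i * L i - ν i) ≤ n i := by
          have := hεh i
          simp only [if_pos h] at this
          exact this
        have h2 : t * (μ i * L i - ν i) ≤ n i :=
          mul_le_of_le_of_pos hb h1 ht.1 ht.2.le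
        rw [hdir]
        simp only
        nlinarith
      · have hz : n i = 0 := le_antisymm (not_lt.1 h) (hn i)
        have hLz : L i = 0 := hL.2.1 i hz
        rw [hdir]
        simp only
        rw [hz, hLz]
        nlinarith [(hν i), ht.1.le]
    · show wl A μ n j ≤ ∑ i, A j i * (n i + t * dir i) / μ i
      have hJ : (∑ i, A j i * (ν i / μ i)) = C j := hj
      have e : ∑ i, A j i * (n i + t * dir i) / μ i
          = wl A μ n j + t * ((∑ i, A j i * (ν i / μ i)) - ∑ i, A j i * L i) := by
        unfold wl
        rw [mul_sub, Finset.mul_sum, Finset.mul_sum, ← Finset.sum_sub_distrib,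
          ← Finset.sum_add_distrib]
        refine Finset.sum_congr rfl fun i _ => ?_
        rw [hdir]
        have hμ' : μ i ≠ 0 := (hμ i).ne'
        field_simp
      rw [e, hJ]
      have h2 := hL.2.2 j
      nlinarith [ht.1.le]
  have hD := hasDerivAt_Ffun_dir (κ := κ) (μ := μ) (n := n) (dir := dir) hα hν
  have hfun0 : (fun i => n i + (0:ℝ) * dir i) = n := by funext i; ring
  have hDge : 0 ≤ ∑ i, cgrad α κ ν μ n i * dir i := by
    refine deriv_nonneg_of_min hεpos hD fun t ht => ?_
    have h1 := hMin _ (hmt t ht)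
    simpa [hfun0] using h1
  have he : (∑ i, if 0 < n i then μ i * cgrad α κ ν μ n i * (L i - ν i / μ i) else 0)
      = -∑ i, cgrad α κ ν μ n i * dir i := by
    rw [← Finset.sum_neg_distrib]
    refine Finset.sum_congr rfl fun i _ => ?_
    by_cases h : 0 < n i
    · rw [if_pos h, hdir]
      have hμ' : μ i ≠ 0 := (hμ i).ne'
      field_simp
      ring
    · rw [if_neg h, cgrad_eq_zero hα (le_antisymm (not_lt.1 h) (hn i))]
      ring
  rw [he]
  linarith

/-- Direction B: minimality of `n` forces the allocation to be `ρ` on `I₊`. -/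
lemma dirB {Lam : Fin I → ℝ} (hα : 0 < α) (hκ : ∀ i, 0 < κ i) (hν : ∀ i, 0 < ν i)
    (hμ : ∀ i, 0 < μ i) (hn : ∀ i, 0 ≤ n i) (hA01 : ∀ j i, A j i = 0 ∨ A j i = 1)
    (hload : ∀ j, (∑ i, A j i * (ν i / μ i)) ≤ C j)
    (hAlloc : IsAlloc A C α κ n Lam)
    (hMin : ∀ m ∈ WFeasible A C ν μ (wl A μ n), Ffun α κ ν μ n ≤ Ffun α κ ν μ m) :
    ∀ i, 0 < n i → Lam i = ν i / μ i := by
  have hB1 := dirB_lin hα hκ hν hμ hn hMin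
  have hRfeas : Rvec ν μ n ∈ Feasible A C n := Rvec_mem_Feasible hν hμ hA01 hload
  have hRG : Gfun α κ n (Rvec ν μ n) = ((Greal α κ n (Rvec ν μ n) : ℝ) : EReal) :=
    Gfun_eq_Greal (fun _ i hi => (Rvec_pos hν hμ hi).ne')
  have hGmax : ∀ L ∈ Feasible A C n, Gfun α κ n L ≤ Gfun α κ n (Rvec ν μ n) := by
    intro L hLf
    by_cases hbot : 1 ≤ α ∧ ∃ i, 0 < n i ∧ L i = 0
    · have : Gfun α κ n L = ⊥ := by unfold Gfun; rw [if_pos hbot]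
      rw [this]
      exact bot_le
    · push_neg at hbot
      have hbot' : 1 ≤ α → ∀ i, 0 < n i → L i ≠ 0 := fun h1 i hi => (hbot h1 i hi)
      rw [Gfun_eq_Greal hbot', hRG]
      have hL1 : 1 ≤ α → ∀ i, 0 < n i → 0 < L i := fun h1 i hi =>
        lt_of_le_of_ne (hLf.1 i) (Ne.symm (hbot' h1 i hi))
      have h1 := Greal_le hα hκ hν hμ hLf.1 hL1
      have h2 := hB1 L hLf
      exact_mod_cast (h1.trans (by linarith))
  have hGeq : Gfun α κ n Lam = Gfun α κ n (Rvec ν μ n) :=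
    le_antisymm (hGmax Lam hAlloc.1) (hAlloc.2 _ hRfeas)
  intro i₀ hi₀
  by_contra hne
  by_cases hbot : 1 ≤ α ∧ ∃ i, 0 < n i ∧ Lam i = 0
  · have hbb : Gfun α κ n Lam = ⊥ := by unfold Gfun; rw [if_pos hbot]
    rw [hbb, hRG] at hGeq
    exact (EReal.bot_ne_coe _) hGeq
  · push_neg at hbot
    have hbot' : 1 ≤ α → ∀ i, 0 < n i → Lam i ≠ 0 := fun h1 i hi => (hbot h1 i hi)
    rw [Gfun_eq_Greal hbot', hRG] at hGeq
    have hGeq' : Greal α κ n Lam = Greal α κ n (Rvec ν μ n) := by exact_mod_cast hGeq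
    have hL1 : 1 ≤ α → ∀ i, 0 < n i → 0 < Lam i := fun h1 i hi =>
      lt_of_le_of_ne (hAlloc.1.1 i) (Ne.symm (hbot' h1 i hi))
    have h1 := Greal_lt hα hκ hν hμ hAlloc.1.1 hL1 hi₀ hne
    have h2 := hB1 Lam hAlloc.1
    linarith

/-- Characterization of constant fluid model solutions. -/
lemma fluid_iff {Λf : (Fin I → ℝ) → Fin I → ℝ} (hμ : ∀ i, 0 < μ i)
    (hn : ∀ i, 0 ≤ n i) (hA01 : ∀ j i, A j i = 0 ∨ A j i = 1)
    (hload : ∀ j, (∑ i, A j i * (ν i / μ i)) ≤ C j) :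
    IsFluidSol A C ν μ Λf (fun _ => n) ↔ ∀ i, 0 < n i → Λf n i = ν i / μ i := by
  constructor
  · intro h i hi
    have h3 := (h.2.2 0 self_mem_Ici (fun i => differentiableWithinAt_const _)).1 i
    have hd1 : HasDerivWithinAt (fun _ : ℝ => n i) (ν i - μ i * Λf n i) (Ici 0) 0 :=
      h3.1 hi
    have hd0 : HasDerivWithinAt (fun _ : ℝ => n i) 0 (Ici 0) 0 :=
      hasDerivWithinAt_const _ _ _
    have hu : UniqueDiffWithinAt ℝ (Ici (0:ℝ)) 0 := uniqueDiffOn_Ici 0 0 self_mem_Ici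
    have heq : ν i - μ i * Λf n i = 0 := by
      rw [← hd1.derivWithin hu]
      exact hd0.derivWithin hu
    rw [eq_div_iff (hμ i).ne']
    linarith
  · intro hΛρ
    refine ⟨fun i => ?_, fun t _ i => hn i, fun t ht _ => ⟨fun i => ⟨fun hi => ?_, fun _ => hasDerivWithinAt_const _ _ _⟩, fun j => ?_⟩⟩
    · intro T _ ε hε
      exact ⟨1, one_pos, fun m a b _ _ _ => by simpa using hε⟩
    · have e : ν i - μ i * Λf ((fun _ => n) t) i = 0 := by
        show ν i - μ i * Λf n i = 0
        rw [hΛρ i hi, sub_eq_zero, mul_comm, div_mul_cancel₀ _ (hμ i).ne']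
      rw [e]
      exact hasDerivWithinAt_const _ _ _
    · show (∑ i, A j i * (if 0 < n i then Λf n i else ν i / μ i)) ≤ C j
      have e : ∀ i, A j i * (if 0 < n i then Λf n i else ν i / μ i)
          = A j i * (ν i / μ i) := by
        intro i
        by_cases h : 0 < n i
        · rw [if_pos h, hΛρ i h]
        · rw [if_neg h]
      rw [Finset.sum_congr rfl fun i _ => e i]
      exact hload j

lemma wl_nonneg (hμ : ∀ i, 0 < μ i) (hA01 : ∀ j i, A j i = 0 ∨ A j i = 1)
    (hn : ∀ i, 0 ≤ n i) : ∀ j, 0 ≤ wl A μ n j := by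
  intro j
  refine Finset.sum_nonneg fun i _ => ?_
  have hA : 0 ≤ A j i := by rcases hA01 j i with h | h <;> rw [h] <;> norm_num
  exact div_nonneg (mul_nonneg hA (hn i)) (hμ i).le

lemma self_mem_WFeasible (hn : ∀ i, 0 ≤ n i) :
    n ∈ WFeasible A C ν μ (wl A μ n) :=
  ⟨hn, fun j _ => le_of_eq rfl⟩

lemma Ffun_nonneg (hα : 0 < α) (hκ : ∀ i, 0 < κ i) (hν : ∀ i, 0 < ν i)
    (hμ : ∀ i, 0 < μ i) {m : Fin I → ℝ} (hm : ∀ i, 0 ≤ m i) : 0 ≤ Ffun α κ ν μ m := by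
  unfold Ffun
  have h1 : (0:ℝ) ≤ 1 / (α + 1) := by positivity
  refine mul_nonneg h1 (Finset.sum_nonneg fun i _ => ?_)
  have h2 : (0:ℝ) ≤ μ i ^ (α - 1) := (Real.rpow_pos_of_pos (hμ i) _).le
  have h3 : (0:ℝ) ≤ (m i / ν i) ^ (α + 1) :=
    Real.rpow_nonneg (div_nonneg (hm i) (hν i).le) _
  exact mul_nonneg (mul_nonneg (mul_nonneg (hν i).le (hκ i).le) h2) h3

lemma Ffun_continuous (hα : 0 < α) : Continuous (Ffun α κ ν μ) := by
  unfold Ffun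
  refine continuous_const.mul (continuous_finset_sum _ fun i _ => ?_)
  refine continuous_const.mul ?_
  have h1 : Continuous fun m : Fin I → ℝ => m i / ν i :=
    (continuous_apply i).div_const _
  have h2 : Continuous fun x : ℝ => x ^ (α + 1) :=
    continuous_iff_continuousAt.2 fun x =>
      Real.continuousAt_rpow_const x _ (Or.inr (by positivity))
  exact h2.comp h1

lemma row_exists (hA01 : ∀ j i, A j i = 0 ∨ A j i = 1)
    (hArank : LinearIndependent ℝ A) (j : Fin J) : ∃ i, A j i = 1 := by
  have h1 : A j ≠ 0 := hArank.ne_zero j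
  have h2 : ∃ i, A j i ≠ 0 := by
    by_contra hc
    push_neg at hc
    exact h1 (funext fun i => hc i)
  obtain ⟨i, hi⟩ := h2
  rcases hA01 j i with h | h
  · exact absurd h hi
  · exact ⟨i, h⟩

lemma row_sum_ge_one (hA01 : ∀ j i, A j i = 0 ∨ A j i = 1)
    (hArank : LinearIndependent ℝ A) (j : Fin J) : (1:ℝ) ≤ ∑ i, A j i := by
  obtain ⟨i₀, hi₀⟩ := row_exists hA01 hArank j
  have := Finset.single_le_sum (f := fun i => A j i)
    (fun i _ => by show 0 ≤ A j i; rcases hA01 j i with h | h <;> rw [h] <;> norm_num)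
    (Finset.mem_univ i₀)
  simpa [hi₀] using this

/-- Shifting by `δ μ` raises every workload by at least `δ`. -/
lemma WFeasible_shift (hμ : ∀ i, 0 < μ i) (hA01 : ∀ j i, A j i = 0 ∨ A j i = 1)
    (hArank : LinearIndependent ℝ A) {m : Fin I → ℝ} {w w' : Fin J → ℝ} {δ : ℝ}
    (hδ : 0 ≤ δ) (hmem : m ∈ WFeasible A C ν μ w)
    (hw' : ∀ j, w' j ≤ w j + δ) :
    (fun i => m i + δ * μ i) ∈ WFeasible A C ν μ w' := by
  refine ⟨fun i => ?_, fun j hj => ?_⟩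
  · show 0 ≤ m i + δ * μ i
    have := hmem.1 i
    nlinarith [(hμ i).le]
  · show w' j ≤ ∑ i, A j i * (m i + δ * μ i) / μ i
    have e : ∑ i, A j i * (m i + δ * μ i) / μ i
        = (∑ i, A j i * m i / μ i) + δ * ∑ i, A j i := by
      rw [Finset.mul_sum, ← Finset.sum_add_distrib]
      refine Finset.sum_congr rfl fun i _ => ?_
      have hμ' : μ i ≠ 0 := (hμ i).ne'
      field_simp
    rw [e]
    have h1 := hmem.2 j hj
    have h2 := row_sum_ge_one hA01 hArank j
    nlinarith [hw' j]

/-- Increasing all coordinates by `δ μ` raises `F` by at most `δ · K`. -/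
lemma Ffun_shift_le (hα : 0 < α) (hκ : ∀ i, 0 < κ i) (hν : ∀ i, 0 < ν i)
    (hμ : ∀ i, 0 < μ i) {m : Fin I → ℝ} {δ R : ℝ}
    (hm : ∀ i, 0 ≤ m i) (hmR : ∀ i, m i ≤ R) (hδ0 : 0 ≤ δ) (hδ1 : δ ≤ 1) :
    Ffun α κ ν μ (fun i => m i + δ * μ i) ≤ Ffun α κ ν μ m
      + δ * ∑ i, κ i * μ i ^ α * ((R + μ i) / ν i) ^ α := by
  unfold Ffun
  rw [Finset.mul_sum, Finset.mul_sum, Finset.mul_sum, ← Finset.sum_add_distrib]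
  refine Finset.sum_le_sum fun i _ => ?_
  have hp : (1:ℝ) < α + 1 := by linarith
  set x : ℝ := m i / ν i with hx
  set y : ℝ := (m i + δ * μ i) / ν i with hy
  have hx0 : 0 ≤ x := div_nonneg (hm i) (hν i).le
  have hy0 : 0 ≤ y := by
    rw [hy]
    have := (hμ i).le
    apply div_nonneg _ (hν i).le
    nlinarith [hm i]
  have h := grad_conv hp hy0 hx0
  -- x^p ≥ y^p + p y^α (x - y), so y^p - x^p ≤ p y^α (y - x)
  have e2 : α + 1 - 1 = α := by ring
  rw [e2] at h
  have hyx : y - x = δ * μ i / ν i := by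
    rw [hy, hx]
    have hν' : ν i ≠ 0 := (hν i).ne'
    field_simp
    ring
  have hkey : y ^ (α+1) - x ^ (α+1) ≤ (α+1) * y ^ α * (δ * μ i / ν i) := by
    rw [← hyx]
    nlinarith [h]
  -- multiply by (1/(α+1)) * (ν κ μ^{α-1})
  have hK : (0:ℝ) < 1 / (α + 1) * (ν i * κ i * μ i ^ (α - 1)) := by
    have h1 : (0:ℝ) < μ i ^ (α - 1) := Real.rpow_pos_of_pos (hμ i) _
    have h2 := hν i
    have h3 := hκ i
    have h4 : (0:ℝ) < α + 1 := by linarith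
    positivity
  have hmul := mul_le_mul_of_nonneg_left hkey hK.le
  -- bound y^α ≤ ((R + μ i) / ν i)^α
  have hyR : y ≤ (R + μ i) / ν i := by
    rw [hy]
    gcongr
    · exact (hν i).le
    · exact hmR i
    · nlinarith [mul_nonneg (sub_nonneg.2 hδ1) (hμ i).le]
  have hyRα : y ^ α ≤ ((R + μ i) / ν i) ^ α := Real.rpow_le_rpow hy0 hyR hα.le
  have hδμν : 0 ≤ δ * μ i / ν i := by
    have := (hμ i).le
    apply div_nonneg _ (hν i).le
    positivity
  -- final algebra
  have e3 : 1 / (α + 1) * (ν i * κ i * μ i ^ (α - 1)) * ((α+1) * y ^ α * (δ * μ i / ν i))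
      = δ * (κ i * μ i ^ α * y ^ α) := by
    have hμ' : μ i ≠ 0 := (hμ i).ne'
    have hν' : ν i ≠ 0 := (hν i).ne'
    have hα1 : α + 1 ≠ 0 := by positivity
    have eμ : μ i ^ (α - 1) * μ i = μ i ^ α := by
      rw [Real.rpow_sub_one hμ', div_mul_cancel₀ _ hμ']
    rw [← eμ]
    field_simp
  have hfin : 1 / (α + 1) * (ν i * κ i * μ i ^ (α - 1)) * (y ^ (α+1) - x ^ (α+1))
      ≤ δ * (κ i * μ i ^ α * ((R + μ i) / ν i) ^ α) := by
    calc 1 / (α + 1) * (ν i * κ i * μ i ^ (α - 1)) * (y ^ (α+1) - x ^ (α+1))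
        ≤ 1 / (α + 1) * (ν i * κ i * μ i ^ (α - 1)) * ((α+1) * y ^ α * (δ * μ i / ν i)) := hmul
      _ = δ * (κ i * μ i ^ α * y ^ α) := e3
      _ ≤ δ * (κ i * μ i ^ α * ((R + μ i) / ν i) ^ α) := by
          have h1 : (0:ℝ) < μ i ^ α := Real.rpow_pos_of_pos (hμ i) _
          have h2 := hκ i
          have h3 : δ * (κ i * μ i ^ α) * y ^ α
              ≤ δ * (κ i * μ i ^ α) * ((R + μ i) / ν i) ^ α :=
            mul_le_mul_of_nonneg_left hyRα
              (mul_nonneg hδ0 (mul_nonneg h2.le h1.le))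
          nlinarith [h3]
  linarith

lemma le_rpow_inv {x c p : ℝ} (hp : 0 < p) (hx : 0 ≤ x) (hc : 0 ≤ c) (h : x ^ p ≤ c) :
    x ≤ c ^ (1/p) := by
  by_contra hlt
  push_neg at hlt
  have h2 : (0:ℝ) ≤ c ^ (1/p) := Real.rpow_nonneg hc _
  have h3 := Real.rpow_lt_rpow h2 hlt hp
  rw [← Real.rpow_mul hc, one_div, inv_mul_cancel₀ hp.ne', Real.rpow_one] at h3
  linarith

/-- Explicit coordinatewise bound for points with `F`-value at most `B`. -/
lemma coord_le_Rbound (hα : 0 < α) (hκ : ∀ i, 0 < κ i) (hν : ∀ i, 0 < ν i)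
    (hμ : ∀ i, 0 < μ i) {m : Fin I → ℝ} {B : ℝ} (hm : ∀ i, 0 ≤ m i)
    (hF : Ffun α κ ν μ m ≤ B) (i : Fin I) :
    m i ≤ ∑ i', ν i' * ((α+1) * B / (ν i' * κ i' * μ i' ^ (α-1))) ^ (1/(α+1)) := by
  have hB0 : 0 ≤ B := le_trans (Ffun_nonneg hα hκ hν hμ hm) hF
  have hterm : ∀ i', (0:ℝ) ≤ ν i' * ((α+1) * B / (ν i' * κ i' * μ i' ^ (α-1))) ^ (1/(α+1)) := by
    intro i'
    exact mul_nonneg (hν i').le (Real.rpow_nonneg (by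
      have h1 : (0:ℝ) < μ i' ^ (α - 1) := Real.rpow_pos_of_pos (hμ i') _
      have h2 := hν i'
      have h3 := hκ i'
      have h4 : (0:ℝ) ≤ α + 1 := by linarith
      positivity) _)
  refine le_trans ?_ (Finset.single_le_sum (fun i' _ => hterm i') (Finset.mem_univ i))
  -- single term bound
  have hd : (0:ℝ) < ν i * κ i * μ i ^ (α - 1) := by
    have h1 : (0:ℝ) < μ i ^ (α - 1) := Real.rpow_pos_of_pos (hμ i) _
    have h2 := hν i
    have h3 := hκ i
    positivity
  have hsingle : (1 / (α+1)) * (ν i * κ i * μ i ^ (α - 1) * (m i / ν i) ^ (α + 1))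
      ≤ Ffun α κ ν μ m := by
    unfold Ffun
    rw [Finset.mul_sum]
    refine Finset.single_le_sum (f := fun i' =>
      (1 / (α+1)) * (ν i' * κ i' * μ i' ^ (α - 1) * (m i' / ν i') ^ (α + 1)))
      (fun i' _ => ?_) (Finset.mem_univ i)
    have h1 : (0:ℝ) < μ i' ^ (α - 1) := Real.rpow_pos_of_pos (hμ i') _
    have h2 := hν i'
    have h3 := hκ i'
    have h4 : (0:ℝ) ≤ (m i' / ν i') ^ (α + 1) :=
      Real.rpow_nonneg (div_nonneg (hm i') (hν i').le) _
    have h5 : (0:ℝ) < α + 1 := by linarith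
    positivity
  have hpow : (m i / ν i) ^ (α + 1) ≤ (α+1) * B / (ν i * κ i * μ i ^ (α-1)) := by
    rw [le_div_iff₀ hd]
    have hα1 : (0:ℝ) < α + 1 := by linarith
    have h8 : (1/(α+1)) * (ν i * κ i * μ i ^ (α-1) * (m i / ν i) ^ (α+1)) ≤ B :=
      le_trans hsingle hF
    have h9 := mul_le_mul_of_nonneg_left h8 hα1.le
    rw [← mul_assoc, mul_one_div, div_self hα1.ne', one_mul] at h9
    nlinarith [h9]
  have h6 := le_rpow_inv (by linarith : (0:ℝ) < α + 1)
    (div_nonneg (hm i) (hν i).le) (by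
      have h5 : (0:ℝ) ≤ (m i / ν i) ^ (α + 1) :=
        Real.rpow_nonneg (div_nonneg (hm i) (hν i).le) _
      linarith) hpow
  have h7 := mul_le_mul_of_nonneg_left h6 (hν i).le
  rw [mul_div_cancel₀] at h7
  · exact h7
  · exact (hν i).ne'
  
lemma wl_diff_le (hμ : ∀ i, 0 < μ i) (hA01 : ∀ j i, A j i = 0 ∨ A j i = 1)
    (n' n₀ : Fin I → ℝ) (j : Fin J) :
    |wl A μ n' j - wl A μ n₀ j| ≤ (∑ i, 1 / μ i) * dist n' n₀ := by
  have e : wl A μ n' j - wl A μ n₀ j = ∑ i, A j i * (n' i - n₀ i) / μ i := by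
    unfold wl
    rw [← Finset.sum_sub_distrib]
    exact Finset.sum_congr rfl fun i _ => by ring
  rw [e]
  refine le_trans (Finset.abs_sum_le_sum_abs _ _) ?_
  rw [Finset.sum_mul]
  refine Finset.sum_le_sum fun i _ => ?_
  have hA : 0 ≤ A j i ∧ A j i ≤ 1 := by
    rcases hA01 j i with h | h <;> rw [h] <;> norm_num
  have h1 : |A j i * (n' i - n₀ i) / μ i| = A j i * |n' i - n₀ i| / μ i := by
    rw [abs_div, abs_mul, abs_of_nonneg hA.1, abs_of_pos (hμ i)]
  rw [h1]
  have h2 : |n' i - n₀ i| ≤ dist n' n₀ := by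
    rw [← Real.dist_eq]
    exact dist_le_pi_dist n' n₀ i
  have h3 : A j i * |n' i - n₀ i| ≤ dist n' n₀ := by
    nlinarith [abs_nonneg (n' i - n₀ i)]
  have h4 : (0:ℝ) ≤ 1 / μ i := one_div_nonneg.2 (hμ i).le
  calc A j i * |n' i - n₀ i| / μ i = A j i * |n' i - n₀ i| * (1 / μ i) := by ring
    _ ≤ dist n' n₀ * (1 / μ i) := mul_le_mul_of_nonneg_right h3 h4
    _ = 1 / μ i * dist n' n₀ := by ring

lemma g_cont (hα : 0 < α) (hκ : ∀ i, 0 < κ i) (hν : ∀ i, 0 < ν i) (hμ : ∀ i, 0 < μ i)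
    (hA01 : ∀ j i, A j i = 0 ∨ A j i = 1) (hArank : LinearIndependent ℝ A)
    {Δ : (Fin J → ℝ) → Fin I → ℝ}
    (hΔ : ∀ w : Fin J → ℝ, (∀ j, 0 ≤ w j) →
      Δ w ∈ WFeasible A C ν μ w ∧
        ∀ m ∈ WFeasible A C ν μ w, Ffun α κ ν μ (Δ w) ≤ Ffun α κ ν μ m)
    {n₀ : Fin I → ℝ} (hn₀ : ∀ i, 0 ≤ n₀ i) :
    ContinuousWithinAt (fun n => Ffun α κ ν μ (Δ (wl A μ n)))
      {n : Fin I → ℝ | ∀ i, 0 ≤ n i} n₀ := by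
  rw [Metric.continuousWithinAt_iff]
  intro ε hε
  set g : (Fin I → ℝ) → ℝ := fun n => Ffun α κ ν μ (Δ (wl A μ n)) with hg
  set B₁ : ℝ := g n₀ + 1 with hB₁
  set Rb : ℝ := ∑ i', ν i' * ((α+1) * B₁ / (ν i' * κ i' * μ i' ^ (α-1))) ^ (1/(α+1)) with hRb
  have hΔ₀ := hΔ (wl A μ n₀) (wl_nonneg hμ hA01 hn₀)
  have hg0 : 0 ≤ g n₀ := Ffun_nonneg hα hκ hν hμ hΔ₀.1.1
  have hRb0 : 0 ≤ Rb := by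
    refine Finset.sum_nonneg fun i' _ => ?_
    refine mul_nonneg (hν i').le (Real.rpow_nonneg ?_ _)
    have h1 : (0:ℝ) < μ i' ^ (α - 1) := Real.rpow_pos_of_pos (hμ i') _
    have h2 := hν i'
    have h3 := hκ i'
    have h4 : (0:ℝ) ≤ α + 1 := by linarith
    have h5 : (0:ℝ) ≤ B₁ := by rw [hB₁]; linarith
    positivity
  set KK : ℝ := ∑ i, κ i * μ i ^ α * ((Rb + μ i) / ν i) ^ α with hKK
  have hKK0 : 0 ≤ KK := by
    refine Finset.sum_nonneg fun i _ => ?_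
    have h1 : (0:ℝ) < μ i ^ α := Real.rpow_pos_of_pos (hμ i) _
    have h2 : (0:ℝ) ≤ (Rb + μ i) / ν i := div_nonneg (by linarith [(hμ i).le]) (hν i).le
    exact mul_nonneg (mul_nonneg (hκ i).le h1.le) (Real.rpow_nonneg h2 _)
  set Sm : ℝ := ∑ i : Fin I, 1 / μ i with hSm
  have hSm0 : 0 ≤ Sm := Finset.sum_nonneg fun i _ => one_div_nonneg.2 (hμ i).le
  set M : ℝ := min 1 (ε/2) with hM
  have hM0 : 0 < M := lt_min one_pos (half_pos hε)
  set η : ℝ := M / (KK + 1) with hη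
  have hη0 : 0 < η := div_pos hM0 (by linarith)
  refine ⟨η / (Sm + 1), div_pos hη0 (by linarith), ?_⟩
  intro n' hn' hd
  set s : ℝ := Sm * dist n' n₀ with hs
  have hs0 : 0 ≤ s := mul_nonneg hSm0 dist_nonneg
  have hsη : s < η := by
    have h1 : s ≤ Sm * (η / (Sm + 1)) :=
      mul_le_mul_of_nonneg_left hd.le hSm0
    have h2 : Sm * (η / (Sm + 1)) < (Sm + 1) * (η / (Sm + 1)) := by
      have := div_pos hη0 (by linarith : (0:ℝ) < Sm + 1)
      nlinarith
    have h3 : (Sm + 1) * (η / (Sm + 1)) = η := by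
      field_simp
    linarith
  have hsM : s * (KK + 1) < M := by
    have h1 : s * (KK + 1) < η * (KK + 1) := by
      have : (0:ℝ) < KK + 1 := by linarith
      nlinarith
    have h2 : η * (KK + 1) = M := by
      rw [hη]; field_simp
    linarith
  have hsKK : s * KK < M := by nlinarith
  have hs1 : s ≤ 1 := by
    have : M ≤ 1 := min_le_left _ _
    nlinarith
  have hwd : ∀ j, |wl A μ n' j - wl A μ n₀ j| ≤ s := fun j =>
    wl_diff_le hμ hA01 n' n₀ j
  -- upper bound
  have hΔ' := hΔ (wl A μ n') (wl_nonneg hμ hA01 hn')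
  have hΔ₀R : ∀ i, Δ (wl A μ n₀) i ≤ Rb := by
    intro i
    exact coord_le_Rbound hα hκ hν hμ hΔ₀.1.1 (by rw [hB₁]; linarith) i
  have hup : g n' ≤ g n₀ + s * KK := by
    have hmem : (fun i => Δ (wl A μ n₀) i + s * μ i) ∈ WFeasible A C ν μ (wl A μ n') :=
      WFeasible_shift hμ hA01 hArank hs0 hΔ₀.1 (fun j => by
        have := hwd j
        have h5 := abs_sub_le_iff.1 this
        linarith [h5.1, h5.2])
    have h1 := hΔ'.2 _ hmem
    have h2 := Ffun_shift_le hα hκ hν hμ hΔ₀.1.1 hΔ₀R hs0 hs1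
    calc g n' ≤ Ffun α κ ν μ (fun i => Δ (wl A μ n₀) i + s * μ i) := h1
      _ ≤ Ffun α κ ν μ (Δ (wl A μ n₀)) + s * KK := h2
      _ = g n₀ + s * KK := rfl
  -- lower bound
  have hΔ'B : Ffun α κ ν μ (Δ (wl A μ n')) ≤ B₁ := by
    rw [hB₁]
    have : M ≤ 1 := min_le_left _ _
    calc Ffun α κ ν μ (Δ (wl A μ n')) = g n' := rfl
      _ ≤ g n₀ + s * KK := hup
      _ ≤ g n₀ + 1 := by linarith
  have hΔ'R : ∀ i, Δ (wl A μ n') i ≤ Rb := fun i =>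
    coord_le_Rbound hα hκ hν hμ hΔ'.1.1 hΔ'B i
  have hlow : g n₀ ≤ g n' + s * KK := by
    have hmem : (fun i => Δ (wl A μ n') i + s * μ i) ∈ WFeasible A C ν μ (wl A μ n₀) :=
      WFeasible_shift hμ hA01 hArank hs0 hΔ'.1 (fun j => by
        have h5 := abs_sub_le_iff.1 (hwd j)
        linarith [h5.1, h5.2])
    have h1 := hΔ₀.2 _ hmem
    have h2 := Ffun_shift_le hα hκ hν hμ hΔ'.1.1 hΔ'R hs0 hs1
    calc g n₀ ≤ Ffun α κ ν μ (fun i => Δ (wl A μ n') i + s * μ i) := h1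
      _ ≤ Ffun α κ ν μ (Δ (wl A μ n')) + s * KK := h2
      _ = g n' + s * KK := rfl
  rw [Real.dist_eq, abs_sub_lt_iff]
  have hM2 : M ≤ ε / 2 := min_le_right _ _
  constructor <;> nlinarith

end Main

end KW

theorem stmt15 {I J : ℕ} (hI : 0 < I) (hJ : 0 < J)
    (A : Fin J → Fin I → ℝ) (hA01 : ∀ j i, A j i = 0 ∨ A j i = 1)
    (hAcol : ∀ i, ∃ j, A j i = 1) (hArank : LinearIndependent ℝ A)
    (C : Fin J → ℝ) (hC : ∀ j, 0 < C j)
    (α : ℝ) (hα : 0 < α) (κ : Fin I → ℝ) (hκ : ∀ i, 0 < κ i)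
    (ν μ : Fin I → ℝ) (hν : ∀ i, 0 < ν i) (hμ : ∀ i, 0 < μ i)
    (hload : ∀ j, (∑ i, A j i * (ν i / μ i)) ≤ C j)
    (hJs : (Jstar A C ν μ).Nonempty)
    (Λ : (Fin I → ℝ) → Fin I → ℝ)
    (hΛ : ∀ n : Fin I → ℝ, (∀ i, 0 ≤ n i) → IsAlloc A C α κ n (Λ n))
    (Δ : (Fin J → ℝ) → Fin I → ℝ)
    (hΔ : ∀ w : Fin J → ℝ, (∀ j, 0 ≤ w j) →
      Δ w ∈ WFeasible A C ν μ w ∧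
        ∀ m ∈ WFeasible A C ν μ w, Ffun α κ ν μ (Δ w) ≤ Ffun α κ ν μ m) :
    ContinuousOn (fun n : Fin I → ℝ => Ffun α κ ν μ n - Ffun α κ ν μ (Δ (wl A μ n)))
      {n : Fin I → ℝ | ∀ i, 0 ≤ n i} ∧
    ∀ n : Fin I → ℝ, (∀ i, 0 ≤ n i) →
      ((IsFluidSol A C ν μ Λ fun _ => n) →
        Ffun α κ ν μ n - Ffun α κ ν μ (Δ (wl A μ n)) = 0) ∧
      ((¬ IsFluidSol A C ν μ Λ fun _ => n) →
        0 < Ffun α κ ν μ n - Ffun α κ ν μ (Δ (wl A μ n))) := by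
  constructor
  · exact fun n₀ hn₀ =>
      ((KW.Ffun_continuous (κ := κ) (ν := ν) (μ := μ) hα).continuousWithinAt).sub
        (KW.g_cont hα hκ hν hμ hA01 hArank hΔ hn₀)
  · intro n hn
    have hAlloc := hΛ n hn
    have hwl0 := KW.wl_nonneg (A := A) (n := n) hμ hA01 hn
    have hΔn := hΔ (wl A μ n) hwl0
    have hFle : Ffun α κ ν μ (Δ (wl A μ n)) ≤ Ffun α κ ν μ n :=
      hΔn.2 n (KW.self_mem_WFeasible (C := C) (ν := ν) hn)
    constructor
    · intro hfluid
      have hΛρ := (KW.fluid_iff (C := C) hμ hn hA01 hload).1 hfluid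
      have hMin := KW.dirA hα hκ hν hμ hn hA01 hload hAlloc hΛρ
      have h2 := hMin _ hΔn.1
      linarith
    · intro hnf
      have hne : ¬ (∀ m ∈ WFeasible A C ν μ (wl A μ n),
          Ffun α κ ν μ n ≤ Ffun α κ ν μ m) := by
        intro hMin
        exact hnf ((KW.fluid_iff (C := C) hμ hn hA01 hload).2
          (KW.dirB hα hκ hν hμ hn hA01 hload hAlloc hMin))
      rcases lt_or_eq_of_le hFle with h | h
      · linarith
      · exact absurd (fun m hm => le_trans (le_of_eq h.symm) (hΔn.2 m hm)) hne
end
end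

section
/- For any fluid model solution n(·), the function t ↦ H(n(t)) is nonincreasing on [0,∞). -/
open Real Set

noncomputable section

open MeasureTheory

lemma gaugeMonoX {g : ℝ → ℝ} {s t : ℝ} (hst : s < t)
    (hac : ∀ ε > (0:ℝ), ∃ δ > (0:ℝ), ∀ (m : ℕ) (a b : Fin m → ℝ),
      (∀ k, s ≤ a k ∧ a k ≤ b k ∧ b k ≤ t) →
      (∀ k l, k < l → b k ≤ a l) →
      (∑ k, (b k - a k)) < δ → (∑ k, |g (b k) - g (a k)|) < ε)
    (E : Set ℝ) (hE : E ⊆ Set.Ioo s t)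
    (hEnull : volume (Set.Ioo s t \ E) = 0)
    (hD : ∀ x ∈ E, ∀ ε > (0:ℝ), ∃ δ > (0:ℝ), ∀ u v, x - δ < u → u ≤ x → x ≤ v → v < x + δ →
      g v - g u ≤ ε * (v - u)) :
    g t ≤ g s := by
  have key : ∀ ε > (0:ℝ), g t - g s ≤ ε * (t - s) + ε := by
    intro ε hε
    obtain ⟨δ₀, hδ₀, hacδ⟩ := hac ε hε
    have hBnull : volume ((Set.Ioo s t \ E) ∪ {s, t}) = 0 := by
      apply measure_union_null hEnull
      have : ({s, t} : Set ℝ).Finite := (Set.finite_singleton t).insert s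
      exact this.measure_zero volume
    obtain ⟨U, hBU, hUopen, hUvol⟩ := Set.exists_isOpen_lt_of_lt _ (ENNReal.ofReal δ₀)
      (by rw [hBnull]; exact ENNReal.ofReal_pos.mpr hδ₀)
    have hgauge : ∀ x ∈ Set.Icc s t, ∃ ρ > (0:ℝ),
        (x ∈ E → ∀ u v, x - ρ < u → u ≤ x → x ≤ v → v < x + ρ → g v - g u ≤ ε * (v - u)) ∧
        (x ∉ E → Set.Ioo (x - ρ) (x + ρ) ⊆ U) := by
      intro x hx
      by_cases hxE : x ∈ E
      · obtain ⟨ρ, hρ, h⟩ := hD x hxE ε hε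
        exact ⟨ρ, hρ, fun _ => h, fun h' => absurd hxE h'⟩
      · have hxU : x ∈ U := by
          apply hBU
          rcases eq_or_lt_of_le hx.1 with h1 | h1
          · exact Or.inr (Or.inl h1.symm)
          rcases eq_or_lt_of_le hx.2 with h2 | h2
          · exact Or.inr (Or.inr h2)
          · exact Or.inl ⟨⟨h1, h2⟩, hxE⟩
        obtain ⟨ρ, hρ, hball⟩ := Metric.isOpen_iff.mp hUopen x hxU
        refine ⟨ρ, hρ, fun h => absurd h hxE, fun _ => ?_⟩
        rw [← Real.ball_eq_Ioo]; exact hball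
    set S : Set ℝ := {x | x ∈ Set.Icc s t ∧ ∃ (m : ℕ) (a b : Fin m → ℝ),
      (∀ k, s ≤ a k ∧ a k ≤ b k ∧ b k ≤ x) ∧ (∀ k l, k < l → b k ≤ a l) ∧
      (∀ k, Set.Ioo (a k) (b k) ⊆ U) ∧
      g x - g s ≤ ε * (x - s) + ∑ k, |g (b k) - g (a k)|} with hSdef
    have hsS : s ∈ S := by
      refine ⟨⟨le_refl s, le_of_lt hst⟩, 0, (fun k => k.elim0), (fun k => k.elim0),
        (fun k => k.elim0), (fun k l _ => k.elim0), (fun k => k.elim0), by simp⟩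
    have hSne : S.Nonempty := ⟨s, hsS⟩
    have hSbdd : BddAbove S := ⟨t, fun x hx => hx.1.2⟩
    have hrs : s ≤ sSup S := le_csSup hSbdd hsS
    have hrt : sSup S ≤ t := csSup_le hSne (fun x hx => hx.1.2)
    set r := sSup S with hrdef
    obtain ⟨ρ, hρ, hgood, hbad⟩ := hgauge r ⟨hrs, hrt⟩
    have EXT : ∀ y, r ≤ y → y ≤ t → y < r + ρ → y ∈ S := by
      intro y hry hyt hyρ
      obtain ⟨x, hxS, hxr⟩ := exists_lt_of_lt_csSup hSne (by linarith : r - ρ < r)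
      have hxle : x ≤ r := le_csSup hSbdd hxS
      obtain ⟨⟨hsx, hxt⟩, m, a, b, hab, hord, hU, hineq⟩ := hxS
      have hxy : x ≤ y := le_trans hxle hry
      by_cases hrE : r ∈ E
      · have h1 : g y - g x ≤ ε * (y - x) := hgood hrE x y hxr hxle hry hyρ
        refine ⟨⟨le_trans hsx hxy, hyt⟩, m, a, b,
          (fun k => ⟨(hab k).1, (hab k).2.1, le_trans (hab k).2.2 hxy⟩), hord, hU, ?_⟩
        have hr : ε * (y - x) + ε * (x - s) = ε * (y - s) := by ring
        linarith
      · have hUsub : Set.Ioo (r - ρ) (r + ρ) ⊆ U := hbad hrE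
        refine ⟨⟨le_trans hrs hry, hyt⟩, m + 1, Fin.snoc a x, Fin.snoc b y, ?_, ?_, ?_, ?_⟩
        · intro k
          refine Fin.lastCases ?_ ?_ k
          · simp only [Fin.snoc_last]
            exact ⟨hsx, hxy, le_refl y⟩
          · intro k'
            simp only [Fin.snoc_castSucc]
            exact ⟨(hab k').1, (hab k').2.1, le_trans (hab k').2.2 hxy⟩
        · intro k l
          refine Fin.lastCases ?_ ?_ l
          · refine Fin.lastCases ?_ ?_ k
            · intro h; exact absurd h (lt_irrefl _)
            · intro k' _
              simp only [Fin.snoc_castSucc, Fin.snoc_last]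
              exact (hab k').2.2
          · intro l'
            refine Fin.lastCases ?_ ?_ k
            · intro h
              exact absurd (h.trans (Fin.castSucc_lt_last l')) (lt_irrefl _)
            · intro k' h
              simp only [Fin.snoc_castSucc]
              exact hord k' l' (Fin.castSucc_lt_castSucc_iff.mp h)
        · intro k
          refine Fin.lastCases ?_ ?_ k
          · simp only [Fin.snoc_last, Fin.snoc_castSucc]
            refine subset_trans (Set.Ioo_subset_Ioo (by linarith) (by linarith)) hUsub
          · intro k'
            simp only [Fin.snoc_castSucc]
            exact hU k'
        · have hsum : (∑ k : Fin (m+1), |g ((Fin.snoc b y : Fin (m+1) → ℝ) k) - g ((Fin.snoc a x : Fin (m+1) → ℝ) k)|) =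
              (∑ k : Fin m, |g (b k) - g (a k)|) + |g y - g x| := by
            rw [Fin.sum_univ_castSucc]
            simp only [Fin.snoc_castSucc, Fin.snoc_last]
          rw [hsum]
          have h1 : g y - g x ≤ |g y - g x| := le_abs_self _
          have h2 : ε * (x - s) ≤ ε * (y - s) := by
            apply mul_le_mul_of_nonneg_left (by linarith) hε.le
          linarith
    have hrS : r ∈ S := EXT r le_rfl hrt (by linarith)
    have hrt' : r = t := by
      by_contra h
      have hlt : r < t := lt_of_le_of_ne hrt h
      have hy1 : r < min t (r + ρ / 2) := lt_min hlt (by linarith)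
      have hym : min t (r + ρ / 2) ∈ S :=
        EXT _ hy1.le (min_le_left _ _) (lt_of_le_of_lt (min_le_right _ _) (by linarith))
      exact absurd (le_csSup hSbdd hym) (not_le.mpr hy1)
    rw [hrt'] at hrS
    obtain ⟨_, m, a, b, hab, hord, hU, hineq⟩ := hrS
    have hdisj : Pairwise (Function.onFun Disjoint (fun k => Set.Ioo (a k) (b k))) := by
      intro k l hkl
      rcases lt_or_gt_of_ne hkl with h | h
      · refine Set.disjoint_left.mpr (fun y hy hy' => ?_)
        exact absurd (hy.2.trans_le ((hord k l h).trans hy'.1.le)) (lt_irrefl _)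
      · refine Set.disjoint_left.mpr (fun y hy hy' => ?_)
        exact absurd (hy'.2.trans_le ((hord l k h).trans hy.1.le)) (lt_irrefl _)
    have hsum : (∑ k, (b k - a k)) < δ₀ := by
      have h3 : ENNReal.ofReal (∑ k, (b k - a k)) < ENNReal.ofReal δ₀ := by
        rw [ENNReal.ofReal_sum_of_nonneg (fun k _ => sub_nonneg.mpr (hab k).2.1)]
        calc (∑ k : Fin m, ENNReal.ofReal (b k - a k))
            = ∑ k : Fin m, volume (Set.Ioo (a k) (b k)) := by simp [Real.volume_Ioo]
          _ = ∑' k : Fin m, volume (Set.Ioo (a k) (b k)) := (tsum_fintype _).symm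
          _ = volume (⋃ k, Set.Ioo (a k) (b k)) :=
              (measure_iUnion hdisj (fun k => measurableSet_Ioo)).symm
          _ ≤ volume U := measure_mono (Set.iUnion_subset hU)
          _ < ENNReal.ofReal δ₀ := hUvol
      exact (ENNReal.ofReal_lt_ofReal_iff hδ₀).mp h3
    have hfin := hacδ m a b (fun k => ⟨(hab k).1, (hab k).2.1, (hab k).2.2⟩) hord hsum
    linarith
  by_contra hcon
  push_neg at hcon
  have hd : 0 < g t - g s := by linarith
  set ε := (g t - g s) / (t - s + 2) with hεdef
  have hε : 0 < ε := div_pos hd (by linarith)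
  have h1 := key ε hε
  have h2 : ε * (t - s + 2) = g t - g s := by
    rw [hεdef]; exact div_mul_cancel₀ _ (by linarith)
  nlinarith

lemma sum_range_add' (f : ℕ → ℝ) (p q : ℕ) :
    ∑ i ∈ Finset.range (p + q), f i =
      (∑ i ∈ Finset.range p, f i) + ∑ i ∈ Finset.range q, f (p + i) := by
  induction q with
  | zero => simp
  | succ q ih =>
    rw [Nat.add_succ, Finset.sum_range_succ, Finset.sum_range_succ, ih]; ring

lemma single_bound {f : ℝ → ℝ} {T δ : ℝ} (hδ : 0 < δ)
    (h1 : ∀ a b : ℝ, 0 ≤ a → a ≤ b → b ≤ T → b - a < δ → |f b - f a| < 1) :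
    ∀ a b : ℝ, 0 ≤ a → a ≤ b → b ≤ T → |f b - f a| ≤ 2 / δ * (b - a) + 1 := by
  intro a b ha hab hbT
  rcases eq_or_lt_of_le hab with rfl | hlt
  · simp only [sub_self, abs_zero]
    positivity
  set K := ⌈(b - a) / (δ / 2)⌉₊ with hKdef
  have hKpos : 0 < K := Nat.ceil_pos.mpr (div_pos (by linarith) (by linarith))
  have hKge : (b - a) / (δ / 2) ≤ (K : ℝ) := Nat.le_ceil _
  have hKlt : (K : ℝ) < (b - a) / (δ / 2) + 1 := Nat.ceil_lt_add_one (div_pos (by linarith) (by linarith)).le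
  have hba : b - a ≤ (δ / 2) * K := by
    rw [div_le_iff₀ (by positivity)] at hKge; linarith
  set h := (b - a) / K with hhdef
  have hKne : (K : ℝ) ≠ 0 := Nat.cast_ne_zero.mpr hKpos.ne'
  have hhpos : 0 < h := div_pos (by linarith) (Nat.cast_pos.mpr hKpos)
  have hhle : h ≤ δ / 2 := by
    rw [hhdef, div_le_iff₀ (by positivity : (0:ℝ) < (K:ℝ))]
    calc b - a ≤ δ / 2 * K := hba
      _ = δ / 2 * K := rfl
  have hp : ∀ i : ℕ, i ≤ K → a + i * h ≤ b := by
    intro i hi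
    have : (i : ℝ) * h ≤ K * h := by
      apply mul_le_mul_of_nonneg_right (by exact_mod_cast hi) hhpos.le
    have hKh : (K : ℝ) * h = b - a := by
      rw [hhdef, mul_div_cancel₀ _ hKne]
    linarith
  have key : dist (f a) (f b) ≤ ∑ i ∈ Finset.range K, dist (f (a + i * h)) (f (a + (i+1) * h)) := by
    have := dist_le_range_sum_dist (fun i => f (a + i * h)) K
    simp only [Nat.cast_zero, zero_mul, add_zero] at this
    have hKh : a + (K : ℝ) * h = b := by
      rw [hhdef, mul_div_cancel₀ _ hKne]; ring
    rw [hKh] at this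
    convert this using 2 with i
    push_cast; ring_nf
  have hterm : ∀ i ∈ Finset.range K, dist (f (a + i * h)) (f (a + (i+1) * h)) ≤ 1 := by
    intro i hi
    rw [Finset.mem_range] at hi
    have h0 : (0:ℝ) ≤ a + i * h := by positivity
    have hle : a + i * h ≤ a + (i+1) * h := by push_cast; nlinarith
    have hbT' : a + ((i:ℝ)+1) * h ≤ T := by
      have := hp (i+1) hi
      push_cast at this ⊢; linarith
    have hlen : (a + ((i:ℝ)+1) * h) - (a + i * h) < δ := by push_cast; nlinarith
    have := h1 _ _ h0 (by push_cast at hle ⊢; linarith) hbT' (by push_cast; nlinarith)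
    rw [dist_comm, Real.dist_eq]
    push_cast
    push_cast at this
    linarith [this]
  have hsum : dist (f a) (f b) ≤ (K : ℝ) := by
    calc dist (f a) (f b) ≤ _ := key
      _ ≤ ∑ _i ∈ Finset.range K, (1:ℝ) := Finset.sum_le_sum hterm
      _ = K := by simp
  have : dist (f a) (f b) ≤ (b - a) / (δ/2) + 1 := by linarith
  rw [dist_comm, Real.dist_eq] at this
  rw [abs_sub_comm] at this
  have heq : (b - a) / (δ/2) = 2 / δ * (b - a) := by
    field_simp
  rw [heq] at this
  rw [abs_sub_comm]
  linarith [this]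

lemma var_sum_bound {f : ℝ → ℝ} {T δ : ℝ} (hδ : 0 < δ)
    (hP : ∀ (m : ℕ) (a b : Fin m → ℝ),
      (∀ k, 0 ≤ a k ∧ a k ≤ b k ∧ b k ≤ T) → (∀ k l, k < l → b k ≤ a l) →
      (∑ k, (b k - a k)) < δ → (∑ k, |f (b k) - f (a k)|) < 1) :
    ∀ (m : ℕ) (u : ℕ → ℝ), Monotone u → (∀ i, u i ∈ Set.Icc (0:ℝ) T) →
      ∑ i ∈ Finset.range m, |f (u (i+1)) - f (u i)| ≤ 8 / δ * (u m - u 0) + 1 := by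
  have hblock : ∀ (m : ℕ) (u : ℕ → ℝ), Monotone u → (∀ i, u i ∈ Set.Icc (0:ℝ) T) →
      u m - u 0 < δ → ∑ i ∈ Finset.range m, |f (u (i+1)) - f (u i)| < 1 := by
    intro m u hu hmem hshort
    have h1 : ∀ k : Fin m, (0:ℝ) ≤ u (k:ℕ) ∧ u (k:ℕ) ≤ u ((k:ℕ)+1) ∧ u ((k:ℕ)+1) ≤ T := by
      intro k
      exact ⟨(hmem k).1, hu (Nat.le_succ _), (hmem _).2⟩
    have h2 : ∀ k l : Fin m, k < l → u ((k:ℕ)+1) ≤ u (l:ℕ) := by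
      intro k l hkl; exact hu (by exact_mod_cast hkl)
    have h3 : (∑ k : Fin m, (u ((k:ℕ)+1) - u (k:ℕ))) < δ := by
      rw [Fin.sum_univ_eq_sum_range (fun i => u (i+1) - u i) m, Finset.sum_range_sub]
      exact hshort
    have := hP m (fun k => u (k:ℕ)) (fun k => u ((k:ℕ)+1)) h1 h2 h3
    rwa [Fin.sum_univ_eq_sum_range (fun i => |f (u (i+1)) - f (u i)|) m] at this
  have h1' : ∀ a b : ℝ, 0 ≤ a → a ≤ b → b ≤ T → b - a < δ → |f b - f a| < 1 := by
    intro a b ha hab hbT hlen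
    have := hP 1 (fun _ => a) (fun _ => b) (fun _ => ⟨ha, hab, hbT⟩)
      (fun k l hkl => absurd hkl (by omega)) (by simpa using hlen)
    simpa using this
  have hsingle := single_bound hδ h1'
  intro m
  induction m using Nat.strong_induction_on with
  | _ m IH =>
    intro u hu hmem
    have hnn : 0 ≤ u m - u 0 := sub_nonneg.mpr (hu (Nat.zero_le m))
    by_cases hshort : u m - u 0 < δ
    · have := hblock m u hu hmem hshort
      have h8 : (0:ℝ) ≤ 8 / δ * (u m - u 0) := by positivity
      linarith
    push_neg at hshort
    have hm1 : 1 ≤ m := by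
      by_contra h
      push_neg at h
      interval_cases m
      simp at hshort; linarith
    have hex : ∃ k, δ/2 ≤ u (k+1) - u 0 := ⟨m - 1, by rw [Nat.sub_add_cancel hm1]; linarith⟩
    set k := Nat.find hex with hkdef
    have hk : δ/2 ≤ u (k+1) - u 0 := Nat.find_spec hex
    have hkmin : ∀ j, j < k → u (j+1) - u 0 < δ/2 := by
      intro j hj
      have := Nat.find_min hex hj
      linarith [not_le.mp this]
    have hkm : k + 1 ≤ m := by
      by_contra h
      push_neg at h
      have hmk : m - 1 < k := by omega
      have := hkmin (m-1) hmk
      rw [Nat.sub_add_cancel hm1] at this; linarith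
    have huk : u k - u 0 < δ/2 := by
      rcases Nat.eq_zero_or_pos k with hk0 | hk0
      · rw [hk0]; simp; linarith
      · have := hkmin (k-1) (by omega)
        rwa [Nat.sub_add_cancel hk0] at this
    set m' := m - (k+1) with hm'def
    have hmeq : m = (k+1) + m' := by omega
    have hsplit : ∑ i ∈ Finset.range m, |f (u (i+1)) - f (u i)| =
        (∑ i ∈ Finset.range k, |f (u (i+1)) - f (u i)|) + |f (u (k+1)) - f (u k)| +
        ∑ i ∈ Finset.range m', |f (u ((k+1+i)+1)) - f (u (k+1+i))| := by
      rw [hmeq, sum_range_add' (fun i => |f (u (i+1)) - f (u i)|) (k+1) m',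
        Finset.sum_range_succ]
    have S1 : (∑ i ∈ Finset.range k, |f (u (i+1)) - f (u i)|) < 1 :=
      hblock k u hu hmem (by linarith)
    have S2 : |f (u (k+1)) - f (u k)| ≤ 2 / δ * (u (k+1) - u k) + 1 :=
      hsingle (u k) (u (k+1)) (hmem k).1 (hu (Nat.le_succ _)) (hmem (k+1)).2
    have S3 : ∑ i ∈ Finset.range m', |f (u ((k+1+i)+1)) - f (u (k+1+i))| ≤
        8 / δ * (u m - u (k+1)) + 1 := by
      have hm'lt : m' < m := by omega
      have := IH m' hm'lt (fun j => u (k+1+j)) (fun a b hab => hu (by omega)) (fun i => hmem _)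
      simpa [← hmeq, Nat.add_zero, ← add_assoc] using this
    have hY : u (k+1) - u k ≤ u (k+1) - u 0 := by
      have := hu (Nat.zero_le k); linarith
    have hkey : 2 + 2 / δ * (u (k+1) - u k) ≤ 8 / δ * (u (k+1) - u 0) := by
      set X := u (k+1) - u 0 with hX
      set Y := u (k+1) - u k with hYd
      have hY0 : 0 ≤ Y := sub_nonneg.mpr (hu (Nat.le_succ _))
      have h1 : 2 * δ ≤ 8 * X - 2 * Y := by nlinarith
      have h2 : 2 ≤ (8 * X - 2 * Y) / δ := (le_div_iff₀ hδ).mpr (by linarith)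
      have h3 : (8 * X - 2 * Y) / δ = 8 / δ * X - 2 / δ * Y := by ring
      linarith
    rw [hsplit]
    have hfin : 8 / δ * (u (k+1) - u 0) + 8 / δ * (u m - u (k+1)) = 8 / δ * (u m - u 0) := by ring
    linarith

lemma bv_of_ac {f : ℝ → ℝ} {T : ℝ} (hT : 0 < T) (hf : AbsContNonneg f) :
    BoundedVariationOn f (Set.Icc 0 T) := by
  obtain ⟨δ, hδ, hP⟩ := hf T hT 1 one_pos
  have hP' : ∀ (m : ℕ) (a b : Fin m → ℝ), (∀ k, 0 ≤ a k ∧ a k ≤ b k ∧ b k ≤ T) →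
      (∀ k l, k < l → b k ≤ a l) → (∑ k, (b k - a k)) < δ →
      (∑ k, |f (b k) - f (a k)|) < 1 :=
    fun m a b h1 h2 h3 => hP m a b h1 (fun k l hkl => Or.inl (h2 k l hkl)) h3
  have hvar := var_sum_bound hδ hP'
  have hbound : eVariationOn f (Set.Icc 0 T) ≤ ENNReal.ofReal (8 / δ * T + 1) := by
    rw [eVariationOn]
    apply iSup_le
    rintro ⟨m, u, hu, hus⟩
    have heq : ∑ i ∈ Finset.range m, edist (f (u (i+1))) (f (u i)) =
        ENNReal.ofReal (∑ i ∈ Finset.range m, |f (u (i+1)) - f (u i)|) := by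
      rw [ENNReal.ofReal_sum_of_nonneg (fun i _ => abs_nonneg _)]
      exact Finset.sum_congr rfl fun i _ => by rw [edist_dist, Real.dist_eq]
    rw [heq]
    apply ENNReal.ofReal_le_ofReal
    have h1 := hvar m u hu hus
    have h2 : u m - u 0 ≤ T := by
      have := (hus m).2; have := (hus 0).1; linarith
    have h3 : 8 / δ * (u m - u 0) ≤ 8 / δ * T := by
      apply mul_le_mul_of_nonneg_left h2 (by positivity)
    linarith
  exact ne_top_of_le_ne_top ENNReal.ofReal_ne_top hbound

lemma ae_diff_of_ac {f : ℝ → ℝ} {T : ℝ} (hT : 0 < T) (hf : AbsContNonneg f) :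
    volume {x | x ∈ Set.Ioo (0:ℝ) T ∧ ¬ DifferentiableAt ℝ f x} = 0 := by
  have h := ((bv_of_ac hT hf).locallyBoundedVariationOn).ae_differentiableWithinAt_of_mem
  rw [MeasureTheory.ae_iff] at h
  apply measure_mono_null _ h
  intro x hx
  simp only [Set.mem_setOf_eq, not_forall, _root_.not_imp] at *
  refine ⟨⟨hx.1.1.le, hx.1.2.le⟩, fun hdiff => hx.2 ?_⟩
  exact hdiff.differentiableAt (Icc_mem_nhds hx.1.1 hx.1.2)

lemma incr_of_deriv {g : ℝ → ℝ} {x D : ℝ} (hg : HasDerivAt g D x) (hD : D ≤ 0) :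
    ∀ ε > (0:ℝ), ∃ δ > (0:ℝ), ∀ u v, x - δ < u → u ≤ x → x ≤ v → v < x + δ →
      g v - g u ≤ ε * (v - u) := by
  intro ε hε
  have h := (hasDerivAt_iff_isLittleO.mp hg).def (by linarith : (0:ℝ) < ε/2)
  rw [Metric.eventually_nhds_iff] at h
  obtain ⟨δ, hδ, hh⟩ := h
  refine ⟨δ, hδ, fun u v hu1 hu2 hv1 hv2 => ?_⟩
  have hu' : dist u x < δ := by rw [Real.dist_eq, abs_lt]; constructor <;> linarith
  have hv' : dist v x < δ := by rw [Real.dist_eq, abs_lt]; constructor <;> linarith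
  have h1 := hh hu'
  have h2 := hh hv'
  simp only [Real.norm_eq_abs, smul_eq_mul] at h1 h2
  rw [abs_of_nonpos (by linarith : u - x ≤ 0)] at h1
  rw [abs_of_nonneg (by linarith : (0:ℝ) ≤ v - x)] at h2
  rw [abs_le] at h1 h2
  nlinarith [mul_nonneg (by linarith : (0:ℝ) ≤ x - u) (neg_nonneg.mpr hD),
    mul_nonneg (by linarith : (0:ℝ) ≤ v - x) (neg_nonneg.mpr hD), h1.1, h2.2]

lemma lip_rpow_aux {β M : ℝ} (hβ : 1 ≤ β) {p q : ℝ} (hq0 : 0 ≤ q) (hqp : q ≤ p) (hpM : p ≤ M) :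
    |p ^ β - q ^ β| ≤ β * (M + 1) ^ (β - 1) * |p - q| := by
  rcases eq_or_lt_of_le hqp with rfl | hlt
  · simp
  have hcont : ContinuousOn (fun y : ℝ => y ^ β) (Set.Icc q p) := by
    intro y _
    exact (Real.continuousAt_rpow_const y β (Or.inr (by linarith))).continuousWithinAt
  have hderiv : ∀ y ∈ Set.Ioo q p, HasDerivAt (fun y : ℝ => y ^ β) (β * y ^ (β - 1)) y :=
    fun y _ => Real.hasDerivAt_rpow_const (Or.inr hβ)
  obtain ⟨c, hc, hceq⟩ := exists_hasDerivAt_eq_slope (fun y : ℝ => y ^ β)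
    (fun y => β * y ^ (β - 1)) hlt hcont hderiv
  have hc0 : 0 ≤ c := le_trans hq0 hc.1.le
  have hpq : p ^ β - q ^ β = β * c ^ (β - 1) * (p - q) := by
    rw [eq_div_iff (ne_of_gt (by linarith : (0:ℝ) < p - q))] at hceq
    linarith [hceq]
  have hcM : c ^ (β - 1) ≤ (M + 1) ^ (β - 1) :=
    Real.rpow_le_rpow hc0 (by linarith [hc.2]) (by linarith)
  have hcnn : 0 ≤ c ^ (β - 1) := Real.rpow_nonneg hc0 _
  have h1 : (0:ℝ) ≤ β * c ^ (β - 1) * (p - q) := by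
    apply mul_nonneg (mul_nonneg (by linarith) hcnn) (by linarith)
  rw [hpq, abs_of_nonneg h1, abs_of_nonneg (le_of_lt (sub_pos.mpr hlt))]
  exact mul_le_mul_of_nonneg_right (mul_le_mul_of_nonneg_left hcM (by linarith)) (by linarith)

lemma lip_rpow {β M : ℝ} (hβ : 1 ≤ β) {p q : ℝ} (hp : p ∈ Set.Icc 0 M) (hq : q ∈ Set.Icc 0 M) :
    |p ^ β - q ^ β| ≤ β * (M + 1) ^ (β - 1) * |p - q| := by
  rcases le_total q p with h | h
  · exact lip_rpow_aux hβ hq.1 h hp.2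
  · rw [abs_sub_comm, abs_sub_comm p q]
    exact lip_rpow_aux hβ hp.1 h hq.2

lemma conc_ineq {α ρ L : ℝ} (hα : 0 < α) (hρ : 0 < ρ) (hL : 0 ≤ L) (hL1 : 1 ≤ α → 0 < L) :
    ρ ^ (-α) * (ρ - L) ≤ (if α = 1 then Real.log ρ - Real.log L
      else ρ ^ (1 - α) / (1 - α) - L ^ (1 - α) / (1 - α)) := by
  by_cases hα1 : α = 1
  · rw [if_pos hα1]
    subst hα1
    have hLpos : 0 < L := hL1 le_rfl
    have h := Real.log_le_sub_one_of_pos (div_pos hLpos hρ)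
    rw [Real.log_div hLpos.ne' hρ.ne'] at h
    have hinv : ρ ^ (-(1:ℝ)) = ρ⁻¹ := by
      rw [Real.rpow_neg hρ.le, Real.rpow_one]
    rw [hinv]
    have h2 : ρ⁻¹ * (ρ - L) = 1 - L / ρ := by field_simp
    rw [h2]
    linarith
  · rw [if_neg hα1]
    rcases eq_or_lt_of_le hL with rfl | hLpos
    · have hα1' : α < 1 := by
        rcases lt_or_ge α 1 with h | h
        · exact h
        · exact absurd (hL1 h) (lt_irrefl 0)
      rw [Real.zero_rpow (by linarith : 1 - α ≠ 0)]
      have hLHS : ρ ^ (-α) * (ρ - 0) = ρ ^ (1 - α) := by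
        rw [sub_zero, show (1:ℝ) - α = -α + 1 by ring, Real.rpow_add hρ, Real.rpow_one]
      rw [hLHS]
      rw [zero_div, sub_zero, le_div_iff₀ (by linarith : (0:ℝ) < 1 - α)]
      nlinarith [Real.rpow_pos_of_pos hρ (1 - α)]
    · rcases lt_trichotomy L ρ with hc | hc | hc
      · have hcont : ContinuousOn (fun y : ℝ => y ^ (1 - α)) (Set.Icc L ρ) := fun y hy =>
          (Real.continuousAt_rpow_const y (1 - α)
            (Or.inl (ne_of_gt (lt_of_lt_of_le hLpos hy.1)))).continuousWithinAt
        have hderiv : ∀ y ∈ Set.Ioo L ρ, HasDerivAt (fun y : ℝ => y ^ (1 - α))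
            ((1 - α) * y ^ (-α)) y := by
          intro y hy
          have := Real.hasDerivAt_rpow_const (x := y) (p := 1 - α)
            (Or.inl (ne_of_gt (lt_trans hLpos hy.1)))
          simpa [show (1:ℝ) - α - 1 = -α by ring] using this
        obtain ⟨c, hcmem, hceq⟩ := exists_hasDerivAt_eq_slope _ _ hc hcont hderiv
        have hc0 : 0 < c := lt_trans hLpos hcmem.1
        have heq : ρ ^ (1 - α) / (1 - α) - L ^ (1 - α) / (1 - α) = c ^ (-α) * (ρ - L) := by
          have hne : (1:ℝ) - α ≠ 0 := by
            intro h; exact hα1 (by linarith)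
          have h1 : ρ ^ (1 - α) - L ^ (1 - α) = (1 - α) * c ^ (-α) * (ρ - L) := by
            rw [eq_div_iff (ne_of_gt (by linarith : (0:ℝ) < ρ - L))] at hceq
            linarith [hceq]
          field_simp
          linarith [h1]
        rw [heq]
        have hlt : ρ ^ (-α) < c ^ (-α) :=
          Real.rpow_lt_rpow_of_neg hc0 hcmem.2 (by linarith)
        nlinarith
      · subst hc; simp
      · have hcont : ContinuousOn (fun y : ℝ => y ^ (1 - α)) (Set.Icc ρ L) := fun y hy =>
          (Real.continuousAt_rpow_const y (1 - α)
            (Or.inl (ne_of_gt (lt_of_lt_of_le hρ hy.1)))).continuousWithinAt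
        have hderiv : ∀ y ∈ Set.Ioo ρ L, HasDerivAt (fun y : ℝ => y ^ (1 - α))
            ((1 - α) * y ^ (-α)) y := by
          intro y hy
          have := Real.hasDerivAt_rpow_const (x := y) (p := 1 - α)
            (Or.inl (ne_of_gt (lt_trans hρ hy.1)))
          simpa [show (1:ℝ) - α - 1 = -α by ring] using this
        obtain ⟨c, hcmem, hceq⟩ := exists_hasDerivAt_eq_slope _ _ hc hcont hderiv
        have hc0 : 0 < c := lt_trans hρ hcmem.1
        have heq : ρ ^ (1 - α) / (1 - α) - L ^ (1 - α) / (1 - α) = c ^ (-α) * (ρ - L) := by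
          have h1 : L ^ (1 - α) - ρ ^ (1 - α) = (1 - α) * c ^ (-α) * (L - ρ) := by
            rw [eq_div_iff (ne_of_gt (by linarith : (0:ℝ) < L - ρ))] at hceq
            linarith [hceq]
          have hne : (1:ℝ) - α ≠ 0 := by
            intro h; exact hα1 (by linarith)
          field_simp
          linarith [h1]
        rw [heq]
        have hlt : c ^ (-α) < ρ ^ (-α) :=
          Real.rpow_lt_rpow_of_neg hρ hcmem.1 (by linarith)
        nlinarith

lemma bound_of_ac {f : ℝ → ℝ} {T : ℝ} (hT : 0 < T) (hf : AbsContNonneg f) :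
    ∃ R : ℝ, ∀ u ∈ Set.Icc (0:ℝ) T, |f u| ≤ R := by
  have hcont : ContinuousOn f (Set.Icc 0 T) := by
    rw [Metric.continuousOn_iff]
    intro x hx ε hε
    obtain ⟨δ, hδ, hP⟩ := hf T hT ε hε
    refine ⟨δ, hδ, fun y hy hdist => ?_⟩
    rw [Real.dist_eq] at hdist
    rcases le_total x y with h | h
    · have hyx : y - x < δ := by
        rw [abs_of_nonneg (sub_nonneg.mpr h)] at hdist; exact hdist
      have := hP 1 (fun _ => x) (fun _ => y) (fun _ => ⟨hx.1, h, hy.2⟩)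
        (fun k l hkl => absurd hkl (by omega)) (by simpa using hyx)
      rw [Real.dist_eq]
      simpa using this
    · have hyx : x - y < δ := by
        rw [abs_of_nonpos (sub_nonpos.mpr h)] at hdist; linarith
      have := hP 1 (fun _ => y) (fun _ => x) (fun _ => ⟨hy.1, h, hx.2⟩)
        (fun k l hkl => absurd hkl (by omega)) (by simpa using hyx)
      rw [Real.dist_eq, abs_sub_comm]
      simpa using this
  obtain ⟨R, hR⟩ := isCompact_Icc.exists_bound_of_continuousOn hcont
  exact ⟨R, fun u hu => hR u hu⟩

lemma ac_comp {I : ℕ} (hI : 0 < I) {n : ℝ → Fin I → ℝ}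
    (hacn : ∀ i, AbsContNonneg fun u => n u i) {t : ℝ} (ht : 0 < t)
    {G : (Fin I → ℝ) → ℝ} {L : Fin I → ℝ} (hL : ∀ i, 0 ≤ L i)
    (hlip : ∀ a b : ℝ, a ∈ Set.Icc 0 t → b ∈ Set.Icc 0 t →
      |G (n b) - G (n a)| ≤ ∑ i, L i * |n b i - n a i|) :
    ∀ ε > (0:ℝ), ∃ δ > (0:ℝ), ∀ (m : ℕ) (a b : Fin m → ℝ),
      (∀ k, 0 ≤ a k ∧ a k ≤ b k ∧ b k ≤ t) → (∀ k l, k < l → b k ≤ a l) →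
      (∑ k, (b k - a k)) < δ → (∑ k, |G (n (b k)) - G (n (a k))|) < ε := by
  have : Nonempty (Fin I) := ⟨⟨0, hI⟩⟩
  intro ε hε
  set c := (∑ i, L i) + 1 with hcdef
  have hLsum : 0 ≤ ∑ i, L i := Finset.sum_nonneg (fun i _ => hL i)
  have hc : 0 < c := by linarith
  have hεc : 0 < ε / c := div_pos hε hc
  choose δs hδs hPs using fun i => hacn i t ht (ε / c) hεc
  refine ⟨Finset.univ.inf' Finset.univ_nonempty δs, ?_, ?_⟩
  · show (0:ℝ) < _
    rw [Finset.lt_inf'_iff]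
    exact fun i _ => hδs i
  · intro m a b hab hord hsum
    have hsum' : ∀ i : Fin I, (∑ k, |n (b k) i - n (a k) i|) < ε / c := by
      intro i
      apply hPs i m a b hab (fun k l hkl => Or.inl (hord k l hkl))
      exact lt_of_lt_of_le hsum (Finset.inf'_le _ (Finset.mem_univ i))
    calc (∑ k, |G (n (b k)) - G (n (a k))|)
        ≤ ∑ k, ∑ i, L i * |n (b k) i - n (a k) i| :=
          Finset.sum_le_sum (fun k _ => hlip _ _
            ⟨(hab k).1, le_trans (hab k).2.1 (hab k).2.2⟩
            ⟨le_trans (hab k).1 (hab k).2.1, (hab k).2.2⟩)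
      _ = ∑ i, L i * ∑ k, |n (b k) i - n (a k) i| := by
          rw [Finset.sum_comm]
          exact Finset.sum_congr rfl (fun i _ => (Finset.mul_sum _ _ _).symm)
      _ ≤ ∑ i : Fin I, L i * (ε / c) :=
          Finset.sum_le_sum (fun i _ =>
            mul_le_mul_of_nonneg_left (le_of_lt (hsum' i)) (hL i))
      _ = (∑ i, L i) * (ε / c) := by rw [← Finset.sum_mul]
      _ < c * (ε / c) := by
          apply mul_lt_mul_of_pos_right (by linarith) hεc
      _ = ε := mul_div_cancel₀ _ hc.ne'

lemma K_nonpos {I J : ℕ} {A : Fin J → Fin I → ℝ} (hA01 : ∀ j i, A j i = 0 ∨ A j i = 1)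
    {C : Fin J → ℝ} {α : ℝ} (hα : 0 < α) {κ : Fin I → ℝ} (hκ : ∀ i, 0 < κ i)
    {ν μ : Fin I → ℝ} (hν : ∀ i, 0 < ν i) (hμ : ∀ i, 0 < μ i)
    (hload : ∀ j, (∑ i, A j i * (ν i / μ i)) ≤ C j)
    {N Λ : Fin I → ℝ} (hN : ∀ i, 0 ≤ N i) (halloc : IsAlloc A C α κ N Λ) :
    (∑ i, if 0 < N i then κ i * N i ^ α * (ν i / μ i) ^ (-α) * (ν i / μ i - Λ i) else 0)
      ≤ 0 := by
  obtain ⟨⟨hΛ0, hΛz, hΛcap⟩, hmax⟩ := halloc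
  have hρpos : ∀ i, 0 < ν i / μ i := fun i => div_pos (hν i) (hμ i)
  set ρp : Fin I → ℝ := fun i => if 0 < N i then ν i / μ i else 0 with hρpdef
  have hfeas : ρp ∈ Feasible A C N := by
    refine ⟨fun i => ?_, fun i hNi => ?_, fun j => ?_⟩
    · by_cases h : 0 < N i
      · simp only [hρpdef, if_pos h]; exact (hρpos i).le
      · simp only [hρpdef, if_neg h]; exact le_rfl
    · simp only [hρpdef]
      rw [if_neg (by rw [hNi]; exact lt_irrefl 0)]
    · calc ∑ i, A j i * ρp i ≤ ∑ i, A j i * (ν i / μ i) := by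
            apply Finset.sum_le_sum
            intro i _
            apply mul_le_mul_of_nonneg_left _ (by rcases hA01 j i with h | h <;> rw [h] <;> norm_num)
            by_cases h : 0 < N i
            · simp only [hρpdef, if_pos h]; exact le_rfl
            · simp only [hρpdef, if_neg h]; exact (hρpos i).le
        _ ≤ C j := hload j
  have hG := hmax ρp hfeas
  have hcondρ : ¬(1 ≤ α ∧ ∃ i, 0 < N i ∧ ρp i = 0) := by
    rintro ⟨hα1, i, hNi, hi⟩
    simp only [hρpdef, if_pos hNi] at hi
    exact absurd hi (ne_of_gt (hρpos i))
  have hΛpos : ∀ i, 0 < N i → (1 ≤ α) → 0 < Λ i := by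
    intro i hNi hα1
    rcases (hΛ0 i).lt_or_eq with h | h
    · exact h
    · exfalso
      have hbot : Gfun α κ N Λ = ⊥ := by
        rw [Gfun, if_pos ⟨hα1, ⟨i, hNi, h.symm⟩⟩]
      rw [hbot, le_bot_iff] at hG
      rw [Gfun, if_neg hcondρ] at hG
      by_cases hα1' : α = 1
      · rw [if_pos hα1'] at hG; exact EReal.coe_ne_bot _ hG
      · rw [if_neg hα1'] at hG; exact EReal.coe_ne_bot _ hG
  have hcondΛ : ¬(1 ≤ α ∧ ∃ i, 0 < N i ∧ Λ i = 0) := by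
    rintro ⟨hα1, i, hNi, hi⟩
    exact absurd hi (ne_of_gt (hΛpos i hNi hα1))
  -- reduce to real inequality
  have hreal : (∑ i, if 0 < N i then (if α = 1 then κ i * N i * Real.log (ρp i)
        else κ i * N i ^ α * ρp i ^ (1 - α) / (1 - α)) else 0) ≤
      (∑ i, if 0 < N i then (if α = 1 then κ i * N i * Real.log (Λ i)
        else κ i * N i ^ α * Λ i ^ (1 - α) / (1 - α)) else 0) := by
    rw [Gfun, Gfun, if_neg hcondρ, if_neg hcondΛ] at hG
    by_cases hα1 : α = 1
    · rw [if_pos hα1, if_pos hα1] at hG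
      have := EReal.coe_le_coe_iff.mp hG
      simpa only [if_pos hα1] using this
    · rw [if_neg hα1, if_neg hα1] at hG
      have := EReal.coe_le_coe_iff.mp hG
      simpa only [if_neg hα1] using this
  -- termwise comparison
  have hterm : ∀ i : Fin I,
      (if 0 < N i then κ i * N i ^ α * (ν i / μ i) ^ (-α) * (ν i / μ i - Λ i) else 0) ≤
      (if 0 < N i then (if α = 1 then κ i * N i * Real.log (ρp i)
        else κ i * N i ^ α * ρp i ^ (1 - α) / (1 - α)) else 0) -
      (if 0 < N i then (if α = 1 then κ i * N i * Real.log (Λ i)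
        else κ i * N i ^ α * Λ i ^ (1 - α) / (1 - α)) else 0) := by
    intro i
    by_cases h : 0 < N i
    · rw [if_pos h, if_pos h, if_pos h]
      have hρpi : ρp i = ν i / μ i := by simp only [hρpdef]; rw [if_pos h]
      rw [hρpi]
      have hconc := conc_ineq hα (hρpos i) (hΛ0 i) (hΛpos i h)
      have hcoef : 0 ≤ κ i * N i ^ α := mul_nonneg (hκ i).le (Real.rpow_nonneg (hN i) α)
      have hmul := mul_le_mul_of_nonneg_left hconc hcoef
      by_cases hα1 : α = 1
      · simp only [if_pos hα1] at hmul ⊢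
        rw [hα1] at hmul ⊢
        rw [Real.rpow_one] at hmul ⊢
        linarith [hmul,
          (by ring : κ i * N i * ((ν i / μ i) ^ (-(1:ℝ)) * (ν i / μ i - Λ i)) =
            κ i * N i * (ν i / μ i) ^ (-(1:ℝ)) * (ν i / μ i - Λ i)),
          (by ring : κ i * N i * (Real.log (ν i / μ i) - Real.log (Λ i)) =
            κ i * N i * Real.log (ν i / μ i) - κ i * N i * Real.log (Λ i))]
      · simp only [if_neg hα1] at hmul ⊢
        linarith [hmul,
          (by ring : κ i * N i ^ α * ((ν i / μ i) ^ (-α) * (ν i / μ i - Λ i)) =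
            κ i * N i ^ α * (ν i / μ i) ^ (-α) * (ν i / μ i - Λ i)),
          (by ring : κ i * N i ^ α * ((ν i / μ i) ^ (1 - α) / (1 - α) - Λ i ^ (1 - α) / (1 - α)) =
            κ i * N i ^ α * (ν i / μ i) ^ (1 - α) / (1 - α) - κ i * N i ^ α * Λ i ^ (1 - α) / (1 - α))]
    · simp only [if_neg h, sub_zero, le_refl]
  calc (∑ i, if 0 < N i then κ i * N i ^ α * (ν i / μ i) ^ (-α) * (ν i / μ i - Λ i) else 0)
      ≤ ∑ i, ((if 0 < N i then (if α = 1 then κ i * N i * Real.log (ρp i)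
          else κ i * N i ^ α * ρp i ^ (1 - α) / (1 - α)) else 0) -
        (if 0 < N i then (if α = 1 then κ i * N i * Real.log (Λ i)
          else κ i * N i ^ α * Λ i ^ (1 - α) / (1 - α)) else 0)) :=
        Finset.sum_le_sum (fun i _ => hterm i)
    _ ≤ 0 := by
        rw [Finset.sum_sub_distrib]
        linarith [hreal]


theorem stmt16 {I J : ℕ} (hI : 0 < I) (hJ : 0 < J)
    (A : Fin J → Fin I → ℝ) (hA01 : ∀ j i, A j i = 0 ∨ A j i = 1)
    (hAcol : ∀ i, ∃ j, A j i = 1) (hArank : LinearIndependent ℝ A)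
    (C : Fin J → ℝ) (hC : ∀ j, 0 < C j)
    (α : ℝ) (hα : 0 < α) (κ : Fin I → ℝ) (hκ : ∀ i, 0 < κ i)
    (ν μ : Fin I → ℝ) (hν : ∀ i, 0 < ν i) (hμ : ∀ i, 0 < μ i)
    (hload : ∀ j, (∑ i, A j i * (ν i / μ i)) ≤ C j)
    (hJs : (Jstar A C ν μ).Nonempty)
    (Λ : (Fin I → ℝ) → Fin I → ℝ)
    (hΛ : ∀ n : Fin I → ℝ, (∀ i, 0 ≤ n i) → IsAlloc A C α κ n (Λ n))
    (Δ : (Fin J → ℝ) → Fin I → ℝ)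
    (hΔ : ∀ w : Fin J → ℝ, (∀ j, 0 ≤ w j) →
      Δ w ∈ WFeasible A C ν μ w ∧
        ∀ m ∈ WFeasible A C ν μ w, Ffun α κ ν μ (Δ w) ≤ Ffun α κ ν μ m)
    (n : ℝ → Fin I → ℝ) (hsol : IsFluidSol A C ν μ Λ n) :
    AntitoneOn (fun t => Ffun α κ ν μ (n t) - Ffun α κ ν μ (Δ (wl A μ (n t))))
      (Ici (0:ℝ)) := by
  obtain ⟨hacn, hposn, hreg⟩ := hsol
  intro s hs t ht hst
  simp only [Set.mem_Ici] at hs ht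
  rcases eq_or_lt_of_le hst with rfl | hstlt
  · exact le_rfl
  have ht0 : 0 < t := lt_of_le_of_lt hs hstlt
  simp only []
  -- the set of good points
  set E : Set ℝ := {x | x ∈ Set.Ioo s t ∧ ∀ i, DifferentiableAt ℝ (fun u => n u i) x}
    with hEdef
  have hEsub : E ⊆ Set.Ioo s t := fun x hx => hx.1
  have hEnull : volume (Set.Ioo s t \ E) = 0 := by
    have hsub : Set.Ioo s t \ E ⊆
        ⋃ i, {x | x ∈ Set.Ioo (0:ℝ) t ∧ ¬ DifferentiableAt ℝ (fun u => n u i) x} := by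
      intro x hx
      obtain ⟨hx1, hx2⟩ := hx
      simp only [hEdef, Set.mem_setOf_eq, not_and, not_forall] at hx2
      obtain ⟨i, hi⟩ := hx2 hx1
      exact Set.mem_iUnion.mpr ⟨i, ⟨⟨lt_of_le_of_lt hs hx1.1, hx1.2⟩, hi⟩⟩
    exact measure_mono_null hsub (measure_iUnion_null fun i => ae_diff_of_ac ht0 (hacn i))
  -- key derivative facts at good points
  have hkey : ∀ x ∈ E,
      (∃ D ≤ (0:ℝ), HasDerivAt (fun u => Ffun α κ ν μ (n u)) D x) ∧
      ∀ j ∈ Jstar A C ν μ, ∃ D ≤ (0:ℝ), HasDerivAt (fun u => -(wl A μ (n u) j)) D x := by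
    intro x hx
    have hx0 : (0:ℝ) ≤ x := le_trans hs hx.1.1.le
    have hxmem : x ∈ Set.Ici (0:ℝ) := hx0
    have hdiffw : ∀ i, DifferentiableWithinAt ℝ (fun u => n u i) (Set.Ici 0) x :=
      fun i => (hx.2 i).differentiableWithinAt
    obtain ⟨hder, hcap⟩ := hreg x hxmem hdiffw
    have hIci : Set.Ici (0:ℝ) ∈ nhds x := Ici_mem_nhds (lt_of_le_of_lt hs hx.1.1)
    set d : Fin I → ℝ := fun i => if 0 < n x i then ν i - μ i * Λ (n x) i else 0 with hddef
    have hd : ∀ i, HasDerivAt (fun u => n u i) (d i) x := by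
      intro i
      rcases (hposn x hxmem i).lt_or_eq with hp | hz
      · simp only [hddef, if_pos hp]
        exact ((hder i).1 hp).hasDerivAt hIci
      · have hnot : ¬ 0 < n x i := by rw [← hz]; exact lt_irrefl 0
        simp only [hddef, if_neg hnot]
        exact ((hder i).2 hz.symm).hasDerivAt hIci
    constructor
    · -- F ∘ n
      have hsum : HasDerivAt
          (fun u => ∑ i, ν i * κ i * μ i ^ (α-1) * (n u i / ν i) ^ (α+1))
          (∑ i, ν i * κ i * μ i ^ (α-1) * ((d i / ν i) * (α+1) * (n x i / ν i) ^ (α+1-1)))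
          x := by
        apply HasDerivAt.fun_sum
        intro i _
        have hinner : HasDerivAt (fun u => n u i / ν i) (d i / ν i) x := (hd i).div_const _
        have houter := hinner.rpow_const (p := α+1) (Or.inr (by linarith))
        exact houter.const_mul _
      have hF : HasDerivAt (fun u => Ffun α κ ν μ (n u))
          (1/(α+1) * ∑ i, ν i * κ i * μ i ^ (α-1) *
            ((d i / ν i) * (α+1) * (n x i / ν i) ^ (α+1-1))) x := by
        have := hsum.const_mul (1/(α+1))
        simpa only [Ffun] using this
      refine ⟨_, ?_, hF⟩
      have hK := K_nonpos hA01 hα hκ hν hμ hload (fun i => hposn x hxmem i)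
        (hΛ (n x) (fun i => hposn x hxmem i))
      have heq : (∑ i, ν i * κ i * μ i ^ (α-1) * ((d i / ν i) * (α+1) * (n x i / ν i) ^ (α+1-1)))
          = (α+1) * ∑ i, (if 0 < n x i then
              κ i * (n x i) ^ α * (ν i / μ i) ^ (-α) * (ν i / μ i - Λ (n x) i) else 0) := by
        rw [Finset.mul_sum]
        apply Finset.sum_congr rfl
        intro i _
        by_cases h : 0 < n x i
        · simp only [hddef, if_pos h]
          have e0 : α + 1 - 1 = α := by ring
          have e1 : (n x i / ν i) ^ α = n x i ^ α / ν i ^ α :=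
            Real.div_rpow (hposn x hxmem i) (hν i).le α
          have e2 : (ν i / μ i) ^ (-α) = μ i ^ α / ν i ^ α := by
            rw [Real.rpow_neg (div_nonneg (hν i).le (hμ i).le),
              Real.div_rpow (hν i).le (hμ i).le, inv_div]
          have e3 : μ i ^ (α - 1) = μ i ^ α / μ i := by
            rw [Real.rpow_sub (hμ i), Real.rpow_one]
          rw [e0, e1, e2, e3]
          have hν0 : ν i ≠ 0 := (hν i).ne'
          have hμ0 : μ i ≠ 0 := (hμ i).ne'
          have hνα : ν i ^ α ≠ 0 := (Real.rpow_pos_of_pos (hν i) α).ne'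
          field_simp
        · simp only [hddef, if_neg h]
          simp
      rw [heq]
      have hc1 : (0:ℝ) < α + 1 := by linarith
      calc 1/(α+1) * ((α+1) * ∑ i, (if 0 < n x i then
              κ i * (n x i) ^ α * (ν i / μ i) ^ (-α) * (ν i / μ i - Λ (n x) i) else 0))
          = ∑ i, (if 0 < n x i then
              κ i * (n x i) ^ α * (ν i / μ i) ^ (-α) * (ν i / μ i - Λ (n x) i) else 0) := by
            field_simp
        _ ≤ 0 := hK
    · -- workloads
      intro j hj
      have hdW : HasDerivAt (fun u => -(wl A μ (n u) j)) (-(∑ i, A j i * d i / μ i)) x := by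
        have h1 : HasDerivAt (fun u => ∑ i, A j i * n u i / μ i)
            (∑ i, A j i * d i / μ i) x := by
          apply HasDerivAt.fun_sum
          intro i _
          exact ((hd i).const_mul (A j i)).div_const (μ i)
        have := h1.fun_neg
        simpa only [wl] using this
      refine ⟨_, ?_, hdW⟩
      rw [neg_nonpos]
      have hjeq : ∑ i, A j i * (ν i / μ i) = C j := hj
      have hcapj := hcap j
      have heq : ∑ i, A j i * d i / μ i =
          (∑ i, A j i * (ν i / μ i)) -
            ∑ i, A j i * (if 0 < n x i then Λ (n x) i else ν i / μ i) := by
        rw [← Finset.sum_sub_distrib]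
        apply Finset.sum_congr rfl
        intro i _
        by_cases h : 0 < n x i
        · simp only [hddef, if_pos h]
          have hμ0 : (μ i : ℝ) ≠ 0 := (hμ i).ne'
          field_simp
        · simp only [hddef, if_neg h]
          simp
      rw [heq, hjeq]
      linarith
  -- absolute continuity data
  have hRbound := fun i => bound_of_ac ht0 (hacn i)
  choose R hR using hRbound
  have hR0 : ∀ i, 0 ≤ R i := fun i => le_trans (abs_nonneg _) (hR i 0 ⟨le_rfl, ht0.le⟩)
  have hnle : ∀ u ∈ Set.Icc (0:ℝ) t, ∀ i, n u i ≤ R i :=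
    fun u hu i => le_trans (le_abs_self _) (hR i u hu)
  set M : Fin I → ℝ := fun i => R i / ν i with hMdef
  have hM0 : ∀ i, 0 ≤ M i := fun i => div_nonneg (hR0 i) (hν i).le
  have hmemM : ∀ u ∈ Set.Icc (0:ℝ) t, ∀ i, n u i / ν i ∈ Set.Icc 0 (M i) := by
    intro u hu i
    refine ⟨div_nonneg (hposn u hu.1 i) (hν i).le, ?_⟩
    simp only [hMdef]
    exact (div_le_div_iff_of_pos_right (hν i)).mpr (hnle u hu i)
  -- F Lipschitz data
  set LF : Fin I → ℝ := fun i =>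
    1/(α+1) * (ν i * κ i * μ i ^ (α-1)) * ((α+1) * (M i + 1) ^ (α+1-1)) / ν i with hLFdef
  have hLFnn : ∀ i, 0 ≤ LF i := by
    intro i
    simp only [hLFdef]
    have h1 : (0:ℝ) < ν i * κ i * μ i ^ (α-1) :=
      mul_pos (mul_pos (hν i) (hκ i)) (Real.rpow_pos_of_pos (hμ i) _)
    have h2 : (0:ℝ) ≤ (α+1) * (M i + 1) ^ (α+1-1) :=
      mul_nonneg (by linarith) (Real.rpow_nonneg (by linarith [hM0 i]) _)
    have h3 : (0:ℝ) < 1/(α+1) := by positivity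
    exact div_nonneg (mul_nonneg (mul_nonneg h3.le h1.le) h2) (hν i).le
  have hlipF : ∀ a b : ℝ, a ∈ Set.Icc 0 t → b ∈ Set.Icc 0 t →
      |Ffun α κ ν μ (n b) - Ffun α κ ν μ (n a)| ≤ ∑ i, LF i * |n b i - n a i| := by
    intro a b ha hb
    have hFs : Ffun α κ ν μ (n b) - Ffun α κ ν μ (n a) =
        1/(α+1) * ∑ i, (ν i * κ i * μ i ^ (α-1) * (n b i / ν i) ^ (α+1) -
          ν i * κ i * μ i ^ (α-1) * (n a i / ν i) ^ (α+1)) := by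
      rw [Ffun, Ffun, ← mul_sub, ← Finset.sum_sub_distrib]
    rw [hFs, abs_mul, abs_of_pos (by positivity : (0:ℝ) < 1/(α+1))]
    calc 1/(α+1) * |∑ i, (ν i * κ i * μ i ^ (α-1) * (n b i / ν i) ^ (α+1) -
          ν i * κ i * μ i ^ (α-1) * (n a i / ν i) ^ (α+1))|
        ≤ 1/(α+1) * ∑ i, |ν i * κ i * μ i ^ (α-1) * (n b i / ν i) ^ (α+1) -
            ν i * κ i * μ i ^ (α-1) * (n a i / ν i) ^ (α+1)| :=
          mul_le_mul_of_nonneg_left (Finset.abs_sum_le_sum_abs _ _) (by positivity)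
      _ = ∑ i, 1/(α+1) * |ν i * κ i * μ i ^ (α-1) * (n b i / ν i) ^ (α+1) -
            ν i * κ i * μ i ^ (α-1) * (n a i / ν i) ^ (α+1)| := Finset.mul_sum _ _ _
      _ ≤ ∑ i, LF i * |n b i - n a i| := by
          apply Finset.sum_le_sum
          intro i _
          have hc : 0 < ν i * κ i * μ i ^ (α - 1) :=
            mul_pos (mul_pos (hν i) (hκ i)) (Real.rpow_pos_of_pos (hμ i) _)
          have hlip' := lip_rpow (β := α+1) (M := M i) (by linarith)
            (hmemM b hb i) (hmemM a ha i)
          have habs : |n b i / ν i - n a i / ν i| = |n b i - n a i| / ν i := by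
            rw [div_sub_div_same, abs_div, abs_of_pos (hν i)]
          rw [habs] at hlip'
          calc 1/(α+1) * |ν i * κ i * μ i ^ (α-1) * (n b i / ν i) ^ (α+1) -
                ν i * κ i * μ i ^ (α-1) * (n a i / ν i) ^ (α+1)|
              = 1/(α+1) * (ν i * κ i * μ i ^ (α-1)) *
                  |(n b i / ν i) ^ (α+1) - (n a i / ν i) ^ (α+1)| := by
                rw [← mul_sub, abs_mul, abs_of_pos hc]; ring
            _ ≤ 1/(α+1) * (ν i * κ i * μ i ^ (α-1)) *
                  ((α+1) * (M i + 1) ^ (α+1-1) * (|n b i - n a i| / ν i)) := by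
                apply mul_le_mul_of_nonneg_left hlip'
                positivity
            _ = LF i * |n b i - n a i| := by
                simp only [hLFdef]; ring
  -- monotonicity of F ∘ n
  have hFmono : Ffun α κ ν μ (n t) ≤ Ffun α κ ν μ (n s) := by
    apply gaugeMonoX hstlt ?_ E hEsub hEnull ?_
    · intro ε hε
      obtain ⟨δ, hδ, hP⟩ := ac_comp hI hacn ht0 hLFnn hlipF ε hε
      refine ⟨δ, hδ, fun m a b hab hord hsum => hP m a b ?_ hord hsum⟩
      exact fun k => ⟨le_trans hs (hab k).1, (hab k).2.1, (hab k).2.2⟩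
    · intro x hx ε hε
      obtain ⟨D, hD0, hder⟩ := (hkey x hx).1
      exact incr_of_deriv hder hD0 ε hε
  -- monotonicity of workloads on Jstar
  have hWmono : ∀ j ∈ Jstar A C ν μ, wl A μ (n s) j ≤ wl A μ (n t) j := by
    intro j hj
    have hA0 : ∀ i, 0 ≤ A j i := by
      intro i; rcases hA01 j i with h | h <;> rw [h] <;> norm_num
    have hLWnn : ∀ i, 0 ≤ A j i / μ i := fun i => div_nonneg (hA0 i) (hμ i).le
    have hlipW : ∀ a b : ℝ, a ∈ Set.Icc 0 t → b ∈ Set.Icc 0 t →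
        |(-(wl A μ (n b) j)) - (-(wl A μ (n a) j))| ≤
          ∑ i, (A j i / μ i) * |n b i - n a i| := by
      intro a b _ _
      have h1 : (-(wl A μ (n b) j)) - (-(wl A μ (n a) j)) =
          ∑ i, (A j i / μ i) * (n a i - n b i) := by
        simp only [wl]
        rw [neg_sub_neg, ← Finset.sum_sub_distrib]
        apply Finset.sum_congr rfl
        intro i _
        ring
      rw [h1]
      calc |∑ i, (A j i / μ i) * (n a i - n b i)|
          ≤ ∑ i, |(A j i / μ i) * (n a i - n b i)| := Finset.abs_sum_le_sum_abs _ _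
        _ = ∑ i, (A j i / μ i) * |n b i - n a i| := by
            apply Finset.sum_congr rfl
            intro i _
            rw [abs_mul, abs_of_nonneg (hLWnn i), abs_sub_comm]
    have hneg : -(wl A μ (n t) j) ≤ -(wl A μ (n s) j) := by
      apply gaugeMonoX hstlt ?_ E hEsub hEnull ?_
      · intro ε hε
        obtain ⟨δ, hδ, hP⟩ := ac_comp (G := fun v => -(wl A μ v j)) hI hacn ht0 hLWnn hlipW ε hε
        refine ⟨δ, hδ, fun m a b hab hord hsum => hP m a b ?_ hord hsum⟩
        exact fun k => ⟨le_trans hs (hab k).1, (hab k).2.1, (hab k).2.2⟩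
      · intro x hx ε hε
        obtain ⟨D, hD0, hder⟩ := (hkey x hx).2 j hj
        exact incr_of_deriv hder hD0 ε hε
    linarith
  -- monotonicity of the value function
  have hwnn : ∀ u : ℝ, 0 ≤ u → ∀ j, 0 ≤ wl A μ (n u) j := by
    intro u hu j
    apply Finset.sum_nonneg
    intro i _
    have hA0 : 0 ≤ A j i := by
      rcases hA01 j i with h | h <;> rw [h] <;> norm_num
    exact div_nonneg (mul_nonneg hA0 (hposn u hu i)) (hμ i).le
  obtain ⟨hfeas_s, hmin_s⟩ := hΔ (wl A μ (n s)) (hwnn s hs)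
  obtain ⟨hfeas_t, hmin_t⟩ := hΔ (wl A μ (n t)) (hwnn t (le_trans hs hst))
  have hsubW : Δ (wl A μ (n t)) ∈ WFeasible A C ν μ (wl A μ (n s)) :=
    ⟨hfeas_t.1, fun j hj => le_trans (hWmono j hj) (hfeas_t.2 j hj)⟩
  have hFbar : Ffun α κ ν μ (Δ (wl A μ (n s))) ≤ Ffun α κ ν μ (Δ (wl A μ (n t))) :=
    hmin_s _ hsubW
  exact sub_le_sub hFmono hFbar
end
end

section
/- For every R ∈ (0,∞) there exists a closed ball B ⊂ ℝ₊^I centered at the origin of finite radius such that every fluid model solution n(·) with ‖n(0)‖ ≤ R satisfies F(n(t)) ≤ F(n(0)) for all t ≥ 0 and n(t) ∈ B for all t ≥ 0. -/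
open Real Set

noncomputable section

lemma grad_ne {α ρ L : ℝ} (hα : 0 < α) (hne : α ≠ 1) (hρ : 0 < ρ) (hL : 0 ≤ L)
    (hL' : 1 < α → 0 < L) :
    ρ ^ (-α) * (ρ - L) ≤ (ρ ^ (1-α) - L ^ (1-α)) / (1-α) := by
  set p : ℝ := 1 - α with hp
  have hpne : p ≠ 0 := by rw [hp]; intro h; apply hne; linarith
  set s : ℝ := L / ρ - 1 with hs
  have hs1 : 1 + s = L / ρ := by ring
  have hLs : L = ρ * (1 + s) := by rw [hs1]; field_simp
  have h1s : 0 ≤ 1 + s := by rw [hs1]; positivity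
  have hLp : L ^ p = ρ ^ p * (1 + s) ^ p := by
    rw [hLs, Real.mul_rpow hρ.le h1s]
  have hρp : 0 < ρ ^ p := Real.rpow_pos_of_pos hρ _
  have hρm : ρ ^ (-α) = ρ ^ p / ρ := by
    rw [hp, eq_div_iff hρ.ne']
    nth_rewrite 2 [show ρ = ρ ^ (1:ℝ) from (Real.rpow_one ρ).symm]
    rw [← Real.rpow_add hρ]
    ring_nf
  have key : -s ≤ (1 - (1 + s) ^ p) / p := by
    rcases lt_or_gt_of_ne (hpne) with hneg | hpos
    · -- p < 0, i.e. 1 < α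
      have hLpos : 0 < L := hL' (by simp [hp] at hneg; linarith)
      have h1s' : 0 < 1 + s := by rw [hs1]; positivity
      have hB : 1 + p * s ≤ (1 + s) ^ p := by
        rw [Real.rpow_def_of_pos h1s']
        have h1 : Real.log (1 + s) ≤ s := by
          have := Real.log_le_sub_one_of_pos h1s'
          linarith
        have h2 : p * s ≤ Real.log (1 + s) * p := by
          rw [mul_comm (Real.log (1+s)) p]
          exact mul_le_mul_of_nonpos_left h1 hneg.le
        have h3 := Real.add_one_le_exp (Real.log (1 + s) * p)
        linarith
      rw [le_div_iff_of_neg hneg]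
      nlinarith
    · -- 0 < p < 1
      have hplt : p < 1 := by simp [hp]; linarith
      have hB : (1 + s) ^ p ≤ 1 + p * s :=
        rpow_one_add_le_one_add_mul_self (by linarith) hpos.le hplt.le
      rw [le_div_iff₀ hpos]
      nlinarith
  have : ρ ^ (-α) * (ρ - L) = ρ ^ p * (-s) := by
    rw [hρm, hLs]; field_simp; ring
  rw [this, hLp]
  have : (ρ ^ p - ρ ^ p * (1 + s) ^ p) / p = ρ ^ p * ((1 - (1 + s) ^ p) / p) := by
    field_simp
  rw [hp] at this ⊢
  rw [this]
  exact mul_le_mul_of_nonneg_left key hρp.le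

lemma grad_one {ρ L : ℝ} (hρ : 0 < ρ) (hL : 0 < L) :
    ρ ^ (-(1:ℝ)) * (ρ - L) ≤ Real.log ρ - Real.log L := by
  have h := Real.log_le_sub_one_of_pos (show 0 < L / ρ by positivity)
  rw [Real.log_div hL.ne' hρ.ne'] at h
  have : ρ ^ (-(1:ℝ)) = ρ⁻¹ := by
    rw [Real.rpow_neg hρ.le, Real.rpow_one]
  rw [this]
  have h2 : ρ⁻¹ * (ρ - L) = 1 - L / ρ := by field_simp
  rw [h2]
  linarith

lemma Kfun_nonpos {I J : ℕ}
    (A : Fin J → Fin I → ℝ) (hA01 : ∀ j i, A j i = 0 ∨ A j i = 1)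
    (C : Fin J → ℝ)
    (α : ℝ) (hα : 0 < α) (κ : Fin I → ℝ) (hκ : ∀ i, 0 < κ i)
    (ν μ : Fin I → ℝ) (hν : ∀ i, 0 < ν i) (hμ : ∀ i, 0 < μ i)
    (hload : ∀ j, (∑ i, A j i * (ν i / μ i)) ≤ C j)
    (Λ : (Fin I → ℝ) → Fin I → ℝ)
    (hΛ : ∀ n : Fin I → ℝ, (∀ i, 0 ≤ n i) → IsAlloc A C α κ n (Λ n))
    (n : Fin I → ℝ) (hn : ∀ i, 0 ≤ n i) :
    Kfun α κ ν μ Λ n ≤ 0 := by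
  obtain ⟨⟨hL0, hLz, _⟩, hopt⟩ := hΛ n hn
  set L := Λ n with hLdef
  set ρt : Fin I → ℝ := fun i => if 0 < n i then ν i / μ i else 0 with hρt
  have hρpos : ∀ i, 0 < ν i / μ i := fun i => div_pos (hν i) (hμ i)
  have hρfeas : ρt ∈ Feasible A C n := by
    refine ⟨fun i => ?_, fun i hi => ?_, fun j => ?_⟩
    · rw [hρt]; dsimp only; split
      · exact (hρpos i).le
      · exact le_refl 0
    · rw [hρt]; dsimp only; rw [if_neg]; rw [hi]; exact lt_irrefl 0
    · refine le_trans ?_ (hload j)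
      apply Finset.sum_le_sum
      intro i _
      have hA : 0 ≤ A j i := by rcases hA01 j i with h | h <;> rw [h] <;> norm_num
      apply mul_le_mul_of_nonneg_left _ hA
      rw [hρt]; dsimp only; split
      · exact le_refl _
      · exact (hρpos i).le
  have h := hopt ρt hρfeas
  have hcρ : ¬(1 ≤ α ∧ ∃ i, 0 < n i ∧ ρt i = 0) := by
    rintro ⟨-, i, hi, hz⟩
    rw [hρt] at hz; dsimp only at hz; rw [if_pos hi] at hz
    exact (hρpos i).ne' hz
  -- positivity of L on I₊ when 1 ≤ α
  have hLpos : ∀ i, 0 < n i → 1 ≤ α → 0 < L i := by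
    intro i hi hα1
    rcases (hL0 i).lt_or_eq with h' | h'
    · exact h'
    · exfalso
      have hcL : (1 ≤ α ∧ ∃ i, 0 < n i ∧ L i = 0) := ⟨hα1, i, hi, h'.symm⟩
      simp only [Gfun] at h
      rw [if_pos hcL, if_neg hcρ] at h
      split at h
      · exact absurd h (not_le.mpr (EReal.bot_lt_coe _))
      · exact absurd h (not_le.mpr (EReal.bot_lt_coe _))
  have hcL : ¬(1 ≤ α ∧ ∃ i, 0 < n i ∧ L i = 0) := by
    rintro ⟨hα1, i, hi, hz⟩
    exact (hLpos i hi hα1).ne' hz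
  by_cases hα1 : α = 1
  · -- α = 1
    simp only [Gfun, if_neg hcρ, if_neg hcL, if_pos hα1, EReal.coe_le_coe_iff] at h
    rw [Kfun]
    have key : ∀ i ∈ Finset.univ, (if 0 < n i then κ i * (μ i * n i / ν i) ^ α * (ν i / μ i - L i) else 0)
        ≤ (if 0 < n i then κ i * n i * Real.log (ρt i) else 0)
          - (if 0 < n i then κ i * n i * Real.log (L i) else 0) := by
      intro i _
      by_cases hi : 0 < n i
      · rw [if_pos hi, if_pos hi, if_pos hi, hρt]; dsimp only; rw [if_pos hi]
        have hLi := hLpos i hi (le_of_eq hα1.symm)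
        have hg := grad_one (hρpos i) hLi
        have e1 : (μ i * n i / ν i) ^ α = n i * (ν i / μ i) ^ (-(1:ℝ)) := by
          rw [hα1, Real.rpow_one, Real.rpow_neg (hρpos i).le, Real.rpow_one]
          field_simp
        rw [e1]
        calc κ i * (n i * (ν i / μ i) ^ (-(1:ℝ))) * (ν i / μ i - L i)
            = (κ i * n i) * ((ν i / μ i) ^ (-(1:ℝ)) * (ν i / μ i - L i)) := by ring
          _ ≤ (κ i * n i) * (Real.log (ν i / μ i) - Real.log (L i)) := by
              apply mul_le_mul_of_nonneg_left hg
              exact mul_nonneg (hκ i).le (hn i)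
          _ = κ i * n i * Real.log (ν i / μ i) - κ i * n i * Real.log (L i) := by ring
      · rw [if_neg hi, if_neg hi, if_neg hi]; norm_num
    calc Kfun α κ ν μ Λ n ≤ ∑ i, ((if 0 < n i then κ i * n i * Real.log (ρt i) else 0)
          - (if 0 < n i then κ i * n i * Real.log (L i) else 0)) := Finset.sum_le_sum key
      _ = (∑ i, if 0 < n i then κ i * n i * Real.log (ρt i) else 0)
          - (∑ i, if 0 < n i then κ i * n i * Real.log (L i) else 0) := Finset.sum_sub_distrib _ _
      _ ≤ 0 := by rw [sub_nonpos]; exact h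
  · -- α ≠ 1
    simp only [Gfun, if_neg hcρ, if_neg hcL, if_neg hα1, EReal.coe_le_coe_iff] at h
    rw [Kfun]
    have key : ∀ i ∈ Finset.univ, (if 0 < n i then κ i * (μ i * n i / ν i) ^ α * (ν i / μ i - L i) else 0)
        ≤ (if 0 < n i then κ i * n i ^ α * (ρt i) ^ (1-α) / (1-α) else 0)
          - (if 0 < n i then κ i * n i ^ α * (L i) ^ (1-α) / (1-α) else 0) := by
      intro i _
      by_cases hi : 0 < n i
      · rw [if_pos hi, if_pos hi, if_pos hi, hρt]; dsimp only; rw [if_pos hi]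
        have hg := grad_ne hα hα1 (hρpos i) (hL0 i)
          (fun h1 => hLpos i hi h1.le)
        have e1 : (μ i * n i / ν i) ^ α = n i ^ α * (ν i / μ i) ^ (-α) := by
          have e2 : μ i * n i / ν i = n i / (ν i / μ i) := by
            field_simp
          rw [e2, Real.div_rpow (hn i) (hρpos i).le, Real.rpow_neg (hρpos i).le, div_eq_mul_inv]
        rw [e1]
        calc κ i * (n i ^ α * (ν i / μ i) ^ (-α)) * (ν i / μ i - L i)
            = (κ i * n i ^ α) * ((ν i / μ i) ^ (-α) * (ν i / μ i - L i)) := by ring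
          _ ≤ (κ i * n i ^ α) * (((ν i / μ i) ^ (1-α) - (L i) ^ (1-α)) / (1-α)) := by
              apply mul_le_mul_of_nonneg_left hg
              exact mul_nonneg (hκ i).le (Real.rpow_nonneg (hn i) α)
          _ = κ i * n i ^ α * (ν i / μ i) ^ (1-α) / (1-α)
              - κ i * n i ^ α * (L i) ^ (1-α) / (1-α) := by ring
      · rw [if_neg hi, if_neg hi, if_neg hi]; norm_num
    calc Kfun α κ ν μ Λ n ≤ ∑ i, ((if 0 < n i then κ i * n i ^ α * (ρt i) ^ (1-α) / (1-α) else 0)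
          - (if 0 < n i then κ i * n i ^ α * (L i) ^ (1-α) / (1-α) else 0)) := Finset.sum_le_sum key
      _ = (∑ i, if 0 < n i then κ i * n i ^ α * (ρt i) ^ (1-α) / (1-α) else 0)
          - (∑ i, if 0 < n i then κ i * n i ^ α * (L i) ^ (1-α) / (1-α) else 0) := Finset.sum_sub_distrib _ _
      _ ≤ 0 := by rw [sub_nonpos]; exact h

lemma AbsContNonneg.uniform {f : ℝ → ℝ} (hf : AbsContNonneg f) {T : ℝ} (hT : 0 < T)
    {ε : ℝ} (hε : 0 < ε) : ∃ δ > (0:ℝ), ∀ x ∈ Icc 0 T, ∀ y ∈ Icc 0 T,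
      x ≤ y → y - x < δ → |f y - f x| < ε := by
  obtain ⟨δ, hδ, H⟩ := hf T hT ε hε
  refine ⟨δ, hδ, fun x hx y hy hxy hd => ?_⟩
  have := H 1 (fun _ => x) (fun _ => y) (fun _ => ⟨hx.1, hxy, hy.2⟩)
    (fun k l hkl => absurd hkl (by omega)) (by simpa using hd)
  simpa using this

lemma AbsContNonneg.continuousOn {f : ℝ → ℝ} (hf : AbsContNonneg f) {T : ℝ} (hT : 0 < T) :
    ContinuousOn f (Icc 0 T) := by
  intro x hx
  rw [Metric.continuousWithinAt_iff]
  intro ε hε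
  obtain ⟨δ, hδ, H⟩ := hf.uniform hT hε
  refine ⟨δ, hδ, fun y hy hd => ?_⟩
  rw [Real.dist_eq] at hd ⊢
  rcases le_total x y with h | h
  · exact H x hx y hy h (by rw [abs_of_nonneg (by linarith)] at hd; linarith)
  · rw [abs_sub_comm]
    exact H y hy x hx h (by rw [abs_sub_comm, abs_of_nonneg (by linarith)] at hd; linarith)

lemma AbsContNonneg.evar_le {f : ℝ → ℝ} (hf : AbsContNonneg f) {T : ℝ} (hT : 0 < T) :
    ∃ δ > (0:ℝ), ∀ c d : ℝ, 0 ≤ c → d ≤ T → d - c < δ →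
      eVariationOn f (Icc c d) ≤ ENNReal.ofReal 1 := by
  obtain ⟨δ, hδ, H⟩ := hf T hT 1 one_pos
  refine ⟨δ, hδ, fun c d hc hd hlen => ?_⟩
  apply iSup_le
  rintro ⟨m, u, hu, hus⟩
  rcases Nat.eq_zero_or_pos m with rfl | hm
  · simp
  have h1 : ∀ k : Fin m, (0:ℝ) ≤ u k.val ∧ u k.val ≤ u (k.val + 1) ∧ u (k.val + 1) ≤ T := by
    intro k
    exact ⟨hc.trans (hus k.val).1, hu (Nat.le_succ _), (hus (k.val+1)).2.trans hd⟩
  have h2 : ∀ k l : Fin m, k < l → u (k.val + 1) ≤ u l.val ∨ u (l.val+1) ≤ u k.val := by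
    intro k l hkl
    exact Or.inl (hu (by omega))
  have h3 : (∑ k : Fin m, (u (k.val + 1) - u k.val)) < δ := by
    rw [Fin.sum_univ_eq_sum_range (fun k => u (k + 1) - u k) m,
      Finset.sum_range_sub (fun i => u i) m]
    have := (hus m).2
    have := (hus 0).1
    linarith
  have H' := H m (fun k => u k.val) (fun k => u (k.val + 1)) h1 h2 h3
  calc (∑ i ∈ Finset.range m, edist (f (u (i + 1))) (f (u i)))
      = ∑ k : Fin m, ENNReal.ofReal (|f (u (k.val+1)) - f (u k.val)|) := by
        rw [← Fin.sum_univ_eq_sum_range (fun i => edist (f (u (i+1))) (f (u i))) m]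
        congr 1; ext k; rw [edist_dist, Real.dist_eq]
    _ = ENNReal.ofReal (∑ k : Fin m, |f (u (k.val+1)) - f (u k.val)|) := by
        rw [ENNReal.ofReal_sum_of_nonneg (fun k _ => abs_nonneg _)]
    _ ≤ ENNReal.ofReal 1 := ENNReal.ofReal_le_ofReal H'.le

lemma AbsContNonneg.evar_Icc {f : ℝ → ℝ} (hf : AbsContNonneg f) {T : ℝ} (hT : 0 < T) :
    eVariationOn f (Icc 0 T) ≠ ⊤ := by
  obtain ⟨δ, hδ, H⟩ := hf.evar_le hT
  have step : ∀ k : ℕ, eVariationOn f (Icc (0:ℝ) (min (k * (δ/2)) T)) ≤ k * ENNReal.ofReal 1 + ENNReal.ofReal 1 := by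
    intro k
    induction k with
    | zero =>
      simp only [Nat.cast_zero, zero_mul, zero_add]
      apply H 0 (min 0 T) le_rfl (min_le_right _ _)
      simp [hδ]
    | succ k ih =>
      have hmono : min ((k:ℝ) * (δ/2)) T ≤ min ((k+1:ℕ) * (δ/2)) T := by
        apply min_le_min _ le_rfl
        push_cast
        nlinarith
      have key := eVariationOn.Icc_add_Icc f (s := univ)
        (a := (0:ℝ)) (b := min ((k:ℝ) * (δ/2)) T) (c := min ((k+1:ℕ) * (δ/2)) T)
        (by positivity) hmono (mem_univ _)
      simp only [univ_inter] at key
      rw [← key]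
      have hpiece : eVariationOn f (Icc (min ((k:ℝ) * (δ/2)) T) (min ((k+1:ℕ) * (δ/2)) T))
          ≤ ENNReal.ofReal 1 := by
        apply H _ _ (by positivity) (min_le_right _ _)
        have : min ((k+1:ℕ) * (δ/2)) T ≤ (k:ℝ) * (δ/2) + δ/2 := by
          apply min_le_of_left_le; push_cast; linarith
        have h2 : (k:ℝ) * (δ/2) - δ ≤ min ((k:ℝ) * (δ/2)) T - δ/2 ∨ True := Or.inr trivial
        have h3 : min ((k:ℝ)*(δ/2)) T = (k:ℝ)*(δ/2) ∨ min ((k:ℝ)*(δ/2)) T = T := min_choice _ _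
        rcases h3 with h3 | h3 <;> rw [h3]
        · linarith
        · have : min ((k+1:ℕ) * (δ/2)) T ≤ T := min_le_right _ _
          linarith
      calc eVariationOn f (Icc 0 (min ((k:ℝ) * (δ/2)) T)) +
            eVariationOn f (Icc (min ((k:ℝ) * (δ/2)) T) (min ((k+1:ℕ) * (δ/2)) T))
          ≤ (k * ENNReal.ofReal 1 + ENNReal.ofReal 1) + ENNReal.ofReal 1 :=
            add_le_add ih hpiece
        _ = (k+1:ℕ) * ENNReal.ofReal 1 + ENNReal.ofReal 1 := by
            push_cast
            ring
  obtain ⟨k, hk⟩ := exists_nat_ge (T / (δ/2))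
  have hTk : min ((k:ℝ) * (δ/2)) T = T := by
    apply min_eq_right
    rw [div_le_iff₀ (by linarith)] at hk
    linarith
  have := step k
  rw [hTk] at this
  intro hcon
  rw [hcon, top_le_iff] at this
  simp [ENNReal.ofReal_one, ENNReal.add_eq_top] at this

lemma AbsContNonneg.lbv {f : ℝ → ℝ} (hf : AbsContNonneg f) :
    LocallyBoundedVariationOn f (Ici 0) := by
  intro a b ha hb
  have hT : (0:ℝ) < max b 1 := lt_of_lt_of_le one_pos (le_max_right _ _)
  have h : BoundedVariationOn f (Icc 0 (max b 1)) := hf.evar_Icc hT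
  exact h.mono (fun x hx => ⟨hx.1, hx.2.2.trans (le_max_left _ _)⟩)

lemma AbsContNonneg.ae_diff {f : ℝ → ℝ} (hf : AbsContNonneg f) :
    ∀ᵐ x, x ∈ Ici (0:ℝ) → DifferentiableWithinAt ℝ f (Ici 0) x :=
  hf.lbv.ae_differentiableWithinAt_of_mem

/-- auxiliary family predicate for the continuous induction -/
def Fam (g : ℝ → ℝ) (a ε : ℝ) (U : Set ℝ) (b : ℝ) (x : ℝ) : Prop :=
  ∃ (m : ℕ) (p q : Fin m → ℝ),
    (∀ k, a ≤ p k ∧ p k ≤ q k ∧ q k ≤ x) ∧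
    (∀ k, Ioc (p k) (q k) ⊆ U) ∧
    (∀ k l, k < l → q k ≤ p l ∨ q l ≤ p k) ∧
    g x - g a ≤ ε * (x - a) + ∑ k, (g (q k) - g (p k) - ε * (q k - p k))

lemma fam_start (g : ℝ → ℝ) (a ε : ℝ) (U : Set ℝ) (b : ℝ) : Fam g a ε U b a := by
  refine ⟨0, Fin.elim0, Fin.elim0, fun k => k.elim0, fun k => k.elim0, fun k => k.elim0, ?_⟩
  simp

lemma fam_good {g : ℝ → ℝ} {a ε : ℝ} {U : Set ℝ} {b x y : ℝ} (hf : Fam g a ε U b x)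
    (hxy : x ≤ y) (hg : g y - g x ≤ ε * (y - x)) : Fam g a ε U b y := by
  obtain ⟨m, p, q, h1, h2, h3, h4⟩ := hf
  exact ⟨m, p, q, fun k => ⟨(h1 k).1, (h1 k).2.1, (h1 k).2.2.trans hxy⟩, h2, h3, by linarith⟩

lemma fam_bad {g : ℝ → ℝ} {a ε : ℝ} {U : Set ℝ} {b x y : ℝ} (hf : Fam g a ε U b x)
    (hax : a ≤ x) (hxy : x ≤ y) (hU : Ioc x y ⊆ U) : Fam g a ε U b y := by
  obtain ⟨m, p, q, h1, h2, h3, h4⟩ := hf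
  refine ⟨m + 1, Fin.snoc p x, Fin.snoc q y, ?_, ?_, ?_, ?_⟩
  · intro k
    refine Fin.lastCases ?_ (fun k => ?_) k
    · simp [Fin.snoc_last, hax, hxy]
    · simp only [Fin.snoc_castSucc]
      exact ⟨(h1 k).1, (h1 k).2.1, (h1 k).2.2.trans hxy⟩
  · intro k
    refine Fin.lastCases ?_ (fun k => ?_) k
    · simpa [Fin.snoc_last] using hU
    · simpa [Fin.snoc_castSucc] using h2 k
  · intro k l hkl
    revert hkl
    refine Fin.lastCases ?_ (fun l' => ?_) l
    · -- l = last, so k < last, k = castSucc k'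
      intro hk
      left
      obtain ⟨k', rfl⟩ := Fin.exists_castSucc_eq.2 hk.ne
      simp only [Fin.snoc_castSucc, Fin.snoc_last]
      exact (h1 k').2.2
    · intro hkl'
      have hk' : k ≠ Fin.last m := (hkl'.trans (Fin.castSucc_lt_last l')).ne
      obtain ⟨k'', rfl⟩ := Fin.exists_castSucc_eq.2 hk'
      simp only [Fin.snoc_castSucc]
      exact h3 k'' l' (Fin.castSucc_lt_castSucc_iff.mp hkl')
  · rw [Fin.sum_univ_castSucc]
    simp only [Fin.snoc_castSucc, Fin.snoc_last]
    have : g y - g a = (g y - g x) + (g x - g a) := by ring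
    rw [this]
    have e : ε * (y - a) - ε * (x - a) - ε * (y - x) = 0 := by ring
    linarith

lemma mono_of_ae_deriv (g : ℝ → ℝ) (a b ε δ : ℝ) (h0a : 0 ≤ a) (hab : a ≤ b)
    (hε : 0 < ε) (hδ : 0 < δ)
    (U : Set ℝ) (hUopen : IsOpen U) (hUvol : MeasureTheory.volume U < ENNReal.ofReal δ)
    (hdiff : ∀ t ∈ Icc a b, t ∉ U → ∃ g', g' ≤ 0 ∧ HasDerivWithinAt g g' (Ici 0) t)
    (hAC : ∀ (m : ℕ) (p q : Fin m → ℝ),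
       (∀ k, a ≤ p k ∧ p k ≤ q k ∧ q k ≤ b) →
       (∀ k l, k < l → q k ≤ p l ∨ q l ≤ p k) →
       (∑ k, (q k - p k)) < δ → (∑ k, |g (q k) - g (p k)|) ≤ ε) :
    g b ≤ g a + ε * (b - a) + ε := by
  set S : Set ℝ := {x | x ∈ Icc a b ∧ Fam g a ε U b x} with hS
  have haS : a ∈ S := ⟨⟨le_rfl, hab⟩, fam_start g a ε U b⟩
  have hSne : S.Nonempty := ⟨a, haS⟩
  have hSbdd : BddAbove S := ⟨b, fun x hx => hx.1.2⟩
  set c := sSup S with hc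
  have hac : a ≤ c := le_csSup hSbdd haS
  have hcb : c ≤ b := csSup_le hSne (fun x hx => hx.1.2)
  have hcIcc : c ∈ Icc a b := ⟨hac, hcb⟩
  -- near approach from the left
  have hleft : ∀ η > (0:ℝ), ∃ x ∈ S, c - η < x ∧ x ≤ c := by
    intro η hη
    obtain ⟨x, hxS, hx⟩ := exists_lt_of_lt_csSup hSne (by linarith : c - η < c)
    exact ⟨x, hxS, hx, le_csSup hSbdd hxS⟩
  -- the derivative estimate extraction
  have hest : ∀ t ∈ Icc a b, t ∉ U → ∃ η > (0:ℝ), ∀ x ∈ Ici (0:ℝ), dist x t < η →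
      (t ≤ x → g x - g t ≤ ε * (x - t)) ∧ (x ≤ t → g t - g x ≤ ε * (t - x)) := by
    intro t ht htU
    obtain ⟨g', hg'le, hg'⟩ := hdiff t ht htU
    rw [hasDerivWithinAt_iff_isLittleO] at hg'
    have h2 := (hg'.def hε)
    obtain ⟨η, hη, H0⟩ := Metric.mem_nhdsWithin_iff.1 h2
    refine ⟨η, hη, fun x hx hd => ?_⟩
    have := H0 ⟨Metric.mem_ball.2 hd, hx⟩
    simp only [mem_setOf_eq] at this
    rw [Real.norm_eq_abs, Real.norm_eq_abs, smul_eq_mul] at this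
    have habs := abs_le.1 this
    constructor
    · intro h
      have habs2 := habs.2
      rw [abs_of_nonneg (by linarith : (0:ℝ) ≤ x - t)] at habs2
      nlinarith
    · intro h
      have habs1 := habs.1
      rw [abs_of_nonpos (by linarith : x - t ≤ 0)] at habs1
      nlinarith
  -- c ∈ S
  have hcS : c ∈ S := by
    by_cases hcU : c ∈ U
    · obtain ⟨η, hη, hball⟩ := Metric.isOpen_iff.1 hUopen c hcU
      obtain ⟨x, hxS, hx1, hx2⟩ := hleft η hη
      refine ⟨hcIcc, fam_bad hxS.2 hxS.1.1 hx2 ?_⟩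
      intro y hy
      apply hball
      rw [Metric.mem_ball, Real.dist_eq, abs_of_nonpos (by linarith [hy.2] : y - c ≤ 0)]
      linarith [hy.1]
    · obtain ⟨η, hη, H⟩ := hest c hcIcc hcU
      obtain ⟨x, hxS, hx1, hx2⟩ := hleft η hη
      refine ⟨hcIcc, fam_good hxS.2 hx2 ?_⟩
      have hx0 : x ∈ Ici (0:ℝ) := le_trans h0a hxS.1.1
      have hd : dist x c < η := by rw [Real.dist_eq, abs_of_nonpos (by linarith)]; linarith
      have := (H x hx0 hd).2 hx2
      linarith
  -- c = b
  have hcbeq : c = b := by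
    by_contra hne
    have hclt : c < b := lt_of_le_of_ne hcb hne
    by_cases hcU : c ∈ U
    · obtain ⟨η, hη, hball⟩ := Metric.isOpen_iff.1 hUopen c hcU
      set x := min b (c + η/2) with hx
      have hcx : c < x := lt_min hclt (by linarith)
      have hxb : x ≤ b := min_le_left _ _
      have hxS : x ∈ S := by
        refine ⟨⟨hac.trans hcx.le, hxb⟩, fam_bad hcS.2 hac hcx.le ?_⟩
        intro y hy
        apply hball
        rw [Metric.mem_ball, Real.dist_eq, abs_of_pos (by linarith [hy.1] : 0 < y - c)]
        have : y ≤ c + η/2 := hy.2.trans (min_le_right _ _)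
        linarith
      exact absurd (le_csSup hSbdd hxS) (not_le.2 hcx)
    · obtain ⟨η, hη, H⟩ := hest c hcIcc hcU
      set x := min b (c + η/2) with hx
      have hcx : c < x := lt_min hclt (by linarith)
      have hxb : x ≤ b := min_le_left _ _
      have hxS : x ∈ S := by
        refine ⟨⟨hac.trans hcx.le, hxb⟩, fam_good hcS.2 hcx.le ?_⟩
        have hx0 : x ∈ Ici (0:ℝ) := by
          simp only [mem_Ici]
          linarith [hac.trans hcx.le, h0a]
        have hd : dist x c < η := by
          rw [Real.dist_eq, abs_of_pos (by linarith)]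
          have : x ≤ c + η/2 := min_le_right _ _
          linarith
        have := (H x hx0 hd).1 hcx.le
        linarith
      exact absurd (le_csSup hSbdd hxS) (not_le.2 hcx)
  -- conclude
  obtain ⟨-, m, p, q, h1, h2, h3, h4⟩ := hcbeq ▸ hcS
  have hlen : (∑ k, (q k - p k)) < δ := by
    have hdisj : Pairwise (Function.onFun Disjoint (fun k => Ioc (p k) (q k))) := by
      intro k l hkl
      rcases lt_or_gt_of_ne hkl with h | h
      · rcases h3 k l h with h' | h'
        · exact Set.Ioc_disjoint_Ioc.2 (le_trans (min_le_left _ _) (le_trans h' (le_max_right _ _)))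
        · exact Set.Ioc_disjoint_Ioc.2 (le_trans (min_le_right _ _) (le_trans h' (le_max_left _ _)))
      · rcases h3 l k h with h' | h'
        · exact Set.Ioc_disjoint_Ioc.2 (le_trans (min_le_right _ _) (le_trans h' (le_max_left _ _)))
        · exact Set.Ioc_disjoint_Ioc.2 (le_trans (min_le_left _ _) (le_trans h' (le_max_right _ _)))
    have hvol : (∑ k, ENNReal.ofReal (q k - p k)) = MeasureTheory.volume (⋃ k, Ioc (p k) (q k)) := by
      rw [MeasureTheory.measure_iUnion hdisj (fun k => measurableSet_Ioc)]
      rw [tsum_fintype]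
      congr 1; ext k; rw [Real.volume_Ioc]
    have hsub : MeasureTheory.volume (⋃ k, Ioc (p k) (q k)) ≤ MeasureTheory.volume U :=
      MeasureTheory.measure_mono (Set.iUnion_subset h2)
    have : ENNReal.ofReal (∑ k, (q k - p k)) < ENNReal.ofReal δ := by
      rw [ENNReal.ofReal_sum_of_nonneg (fun k _ => by linarith [(h1 k).2.1])]
      exact lt_of_le_of_lt (hvol ▸ hsub) hUvol
    exact (ENNReal.ofReal_lt_ofReal_iff hδ).1 this
  have hACres := hAC m p q h1 h3 hlen
  have : (∑ k, (g (q k) - g (p k) - ε * (q k - p k))) ≤ ε := by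
    calc (∑ k, (g (q k) - g (p k) - ε * (q k - p k)))
        ≤ ∑ k, |g (q k) - g (p k)| := by
          apply Finset.sum_le_sum
          intro k _
          have h5 : 0 ≤ ε * (q k - p k) := mul_nonneg hε.le (by linarith [(h1 k).2.1])
          linarith [le_abs_self (g (q k) - g (p k))]
      _ ≤ ε := hACres
  linarith [h4]

lemma rpow_lip {p M x y : ℝ} (hp : 1 ≤ p) (hx : x ∈ Icc 0 M) (hy : y ∈ Icc 0 M) :
    |y ^ p - x ^ p| ≤ p * M ^ (p-1) * |y - x| := by
  have key := Convex.norm_image_sub_le_of_norm_hasDerivWithin_le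
    (f := fun z : ℝ => z ^ p) (f' := fun z : ℝ => p * z ^ (p-1)) (s := Icc (0:ℝ) M)
    (C := p * M ^ (p-1))
    (fun z _ => (Real.hasDerivAt_rpow_const (Or.inr hp)).hasDerivWithinAt)
    (fun z hz => by
      rw [Real.norm_eq_abs,
        abs_of_nonneg (mul_nonneg (by linarith : (0:ℝ) ≤ p) (Real.rpow_nonneg hz.1 _))]
      exact mul_le_mul_of_nonneg_left (Real.rpow_le_rpow hz.1 hz.2 (by linarith)) (by linarith))
    (convex_Icc 0 M) hx hy
  rw [Real.norm_eq_abs, Real.norm_eq_abs] at key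
  exact key

lemma Ffun_lip {I : ℕ} (α : ℝ) (hα : 0 < α) (κ ν μ : Fin I → ℝ)
    (hκ : ∀ i, 0 < κ i) (hν : ∀ i, 0 < ν i) (hμ : ∀ i, 0 < μ i)
    (M : ℝ) (u v : Fin I → ℝ)
    (hu : ∀ i, u i ∈ Icc 0 M) (hv : ∀ i, v i ∈ Icc 0 M) :
    |Ffun α κ ν μ u - Ffun α κ ν μ v| ≤
      ∑ i, (ν i * κ i * μ i ^ (α - 1) * ((M / ν i) ^ α / ν i)) * |u i - v i| := by
  have hα1 : (0:ℝ) < α + 1 := by linarith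
  have hsum : Ffun α κ ν μ u - Ffun α κ ν μ v
      = (1/(α+1)) * ∑ i, ν i * κ i * μ i ^ (α-1) * ((u i / ν i) ^ (α+1) - (v i / ν i) ^ (α+1)) := by
    rw [Ffun, Ffun, ← mul_sub, ← Finset.sum_sub_distrib]
    congr 1
    apply Finset.sum_congr rfl
    intro i _
    ring
  rw [hsum, abs_mul, abs_of_nonneg (by positivity : (0:ℝ) ≤ 1/(α+1))]
  calc (1/(α+1)) * |∑ i, ν i * κ i * μ i ^ (α-1) * ((u i / ν i) ^ (α+1) - (v i / ν i) ^ (α+1))|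
      ≤ (1/(α+1)) * ∑ i, |ν i * κ i * μ i ^ (α-1) * ((u i / ν i) ^ (α+1) - (v i / ν i) ^ (α+1))| :=
        mul_le_mul_of_nonneg_left (Finset.abs_sum_le_sum_abs _ _) (by positivity)
    _ = ∑ i, (1/(α+1)) * |ν i * κ i * μ i ^ (α-1) * ((u i / ν i) ^ (α+1) - (v i / ν i) ^ (α+1))| :=
        Finset.mul_sum _ _ _
    _ ≤ ∑ i, (ν i * κ i * μ i ^ (α - 1) * ((M / ν i) ^ α / ν i)) * |u i - v i| := by
        apply Finset.sum_le_sum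
        intro i _
        rw [abs_mul]
        have hmemu : u i / ν i ∈ Icc 0 (M / ν i) :=
          ⟨div_nonneg (hu i).1 (hν i).le, (div_le_div_iff_of_pos_right (hν i)).2 (hu i).2⟩
        have hmemv : v i / ν i ∈ Icc 0 (M / ν i) :=
          ⟨div_nonneg (hv i).1 (hν i).le, (div_le_div_iff_of_pos_right (hν i)).2 (hv i).2⟩
        have hlip := rpow_lip (show (1:ℝ) ≤ α+1 by linarith) hmemv hmemu
        rw [show α+1-1 = α from by ring] at hlip
        have habs : |u i / ν i - v i / ν i| = |u i - v i| / ν i := by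
          rw [div_sub_div_same, abs_div, abs_of_pos (hν i)]
        rw [habs] at hlip
        have hd : (0:ℝ) ≤ ν i * κ i * μ i ^ (α-1) := by
          have := (hκ i).le; have := (hν i).le
          have := Real.rpow_nonneg (hμ i).le (α-1)
          positivity
        rw [abs_of_nonneg hd]
        calc (1/(α+1)) * ((ν i * κ i * μ i ^ (α-1)) * |(u i / ν i) ^ (α+1) - (v i / ν i) ^ (α+1)|)
            ≤ (1/(α+1)) * ((ν i * κ i * μ i ^ (α-1)) * ((α+1) * (M / ν i) ^ α * (|u i - v i| / ν i))) := by
              apply mul_le_mul_of_nonneg_left (mul_le_mul_of_nonneg_left hlip hd) (by positivity)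
          _ = (ν i * κ i * μ i ^ (α - 1) * ((M / ν i) ^ α / ν i)) * |u i - v i| := by
              have h1 : ν i ≠ 0 := (hν i).ne'
              have h2 : α + 1 ≠ 0 := hα1.ne'
              field_simp

lemma chain_rule {I : ℕ} (α : ℝ) (hα : 0 < α) (κ ν μ : Fin I → ℝ)
    (hν : ∀ i, 0 < ν i) (hμ : ∀ i, 0 < μ i)
    (Λ : (Fin I → ℝ) → Fin I → ℝ) (n : ℝ → Fin I → ℝ) (t : ℝ)
    (hnt : ∀ i, 0 ≤ n t i)
    (hder : ∀ i, (0 < n t i →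
        HasDerivWithinAt (fun s => n s i) (ν i - μ i * Λ (n t) i) (Ici 0) t) ∧
      (n t i = 0 → HasDerivWithinAt (fun s => n s i) 0 (Ici 0) t)) :
    HasDerivWithinAt (fun s => Ffun α κ ν μ (n s)) (Kfun α κ ν μ Λ (n t)) (Ici 0) t := by
  have hα1 : (0:ℝ) < α + 1 := by linarith
  set v : Fin I → ℝ := fun i => if 0 < n t i then ν i - μ i * Λ (n t) i else 0 with hvdef
  have hv : ∀ i, HasDerivWithinAt (fun s => n s i) (v i) (Ici 0) t := by
    intro i
    by_cases h : 0 < n t i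
    · simpa [hvdef, h] using (hder i).1 h
    · have h0 : n t i = 0 := le_antisymm (not_lt.1 h) (hnt i)
      simpa [hvdef, h] using (hder i).2 h0
  have hterm : ∀ i, HasDerivWithinAt
      (fun s => ν i * κ i * μ i ^ (α-1) * (n s i / ν i) ^ (α+1))
      (ν i * κ i * μ i ^ (α-1) * ((α+1) * (n t i / ν i) ^ α * (1 / ν i) * v i)) (Ici 0) t := by
    intro i
    have hin : HasDerivAt (fun x : ℝ => x / ν i) (1 / ν i) (n t i) := by
      simpa using (hasDerivAt_id (n t i)).div_const (ν i)
    have hout : HasDerivAt (fun y : ℝ => y ^ (α+1))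
        ((α+1) * (n t i / ν i) ^ (α+1-1)) (n t i / ν i) :=
      Real.hasDerivAt_rpow_const (Or.inr (by linarith))
    have hcomp : HasDerivAt (fun x : ℝ => (x / ν i) ^ (α+1))
        ((α+1) * (n t i / ν i) ^ α * (1 / ν i)) (n t i) := by
      have := hout.comp (n t i) hin
      simpa [Function.comp_def, show α+1-1 = α from by ring] using this
    have := (hcomp.comp_hasDerivWithinAt t (hv i)).const_mul (ν i * κ i * μ i ^ (α-1))
    simpa [Function.comp_def, mul_assoc] using this
  have hsum := HasDerivWithinAt.sum (fun i (_ : i ∈ Finset.univ) => hterm i)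
  have hmul := hsum.const_mul (1/(α+1))
  have heq : (1/(α+1)) * (∑ i, ν i * κ i * μ i ^ (α-1) * ((α+1) * (n t i / ν i) ^ α * (1 / ν i) * v i))
      = Kfun α κ ν μ Λ (n t) := by
    rw [Kfun, Finset.mul_sum]
    apply Finset.sum_congr rfl
    intro i _
    by_cases h : 0 < n t i
    · rw [if_pos h]
      have hvi : v i = ν i - μ i * Λ (n t) i := by rw [hvdef]; simp [h]
      have hμα : (μ i * n t i / ν i) ^ α = μ i ^ (α-1) * μ i * (n t i / ν i) ^ α := by
        rw [mul_div_assoc, Real.mul_rpow (hμ i).le (div_nonneg (hnt i) (hν i).le)]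
        congr 1
        have hr := Real.rpow_add_one (hμ i).ne' (α-1)
        rw [show α - 1 + 1 = α from by ring] at hr
        exact hr
      rw [hvi, hμα]
      have h1 : ν i ≠ 0 := (hν i).ne'
      have h2 : μ i ≠ 0 := (hμ i).ne'
      have h3 : α + 1 ≠ 0 := hα1.ne'
      field_simp
    · rw [if_neg h]
      have hvi : v i = 0 := by rw [hvdef]; simp [h]
      rw [hvi]
      ring
  rw [heq] at hmul
  exact hmul.congr (fun s _ => by simp only [Ffun, Finset.sum_apply])
    (by simp only [Ffun, Finset.sum_apply])

theorem stmt19 {I J : ℕ} (hI : 0 < I) (hJ : 0 < J)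
    (A : Fin J → Fin I → ℝ) (hA01 : ∀ j i, A j i = 0 ∨ A j i = 1)
    (hAcol : ∀ i, ∃ j, A j i = 1) (hArank : LinearIndependent ℝ A)
    (C : Fin J → ℝ) (hC : ∀ j, 0 < C j)
    (α : ℝ) (hα : 0 < α) (κ : Fin I → ℝ) (hκ : ∀ i, 0 < κ i)
    (ν μ : Fin I → ℝ) (hν : ∀ i, 0 < ν i) (hμ : ∀ i, 0 < μ i)
    (hload : ∀ j, (∑ i, A j i * (ν i / μ i)) ≤ C j)
    (hJs : (Jstar A C ν μ).Nonempty)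
    (Λ : (Fin I → ℝ) → Fin I → ℝ)
    (hΛ : ∀ n : Fin I → ℝ, (∀ i, 0 ≤ n i) → IsAlloc A C α κ n (Λ n)) :
    ∀ R > (0:ℝ), ∃ r : ℝ, ∀ n : ℝ → Fin I → ℝ,
      IsFluidSol A C ν μ Λ n → Real.sqrt (∑ i, (n 0 i) ^ 2) ≤ R →
      ∀ t ∈ Ici (0:ℝ), Ffun α κ ν μ (n t) ≤ Ffun α κ ν μ (n 0) ∧
        Real.sqrt (∑ i, (n t i) ^ 2) ≤ r := by
  intro R hR
  have hα1 : (0:ℝ) < α + 1 := by linarith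
  set d : Fin I → ℝ := fun i => ν i * κ i * μ i ^ (α - 1) with hddef
  have hd : ∀ i, 0 < d i := fun i => by
    have h := Real.rpow_pos_of_pos (hμ i) (α - 1)
    rw [hddef]; dsimp only
    exact mul_pos (mul_pos (hν i) (hκ i)) h
  set MR : ℝ := (1 / (α + 1)) * ∑ i, d i * (R / ν i) ^ (α + 1) with hMRdef
  have hMR0 : 0 ≤ MR := by
    rw [hMRdef]
    apply mul_nonneg (one_div_nonneg.2 hα1.le)
    apply Finset.sum_nonneg
    intro i _
    exact mul_nonneg (hd i).le (Real.rpow_nonneg (div_nonneg hR.le (hν i).le) _)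
  set β : Fin I → ℝ := fun i => ν i * (((α + 1) * MR) / d i) ^ (1 / (α + 1)) with hβdef
  refine ⟨Real.sqrt (∑ i, (β i) ^ 2), ?_⟩
  intro n hfluid hR0 t ht
  obtain ⟨hACn, hnonneg, hfl⟩ := hfluid
  rw [mem_Ici] at ht
  -- Step 1 : F (n t) ≤ F (n 0)
  have hFmono : Ffun α κ ν μ (n t) ≤ Ffun α κ ν μ (n 0) := by
    rcases eq_or_lt_of_le ht with rfl | htpos
    · exact le_refl _
    · -- main Lyapunov argument
      have claim : ∀ ε > (0:ℝ), Ffun α κ ν μ (n t) ≤ Ffun α κ ν μ (n 0) + ε * (t - 0) + ε := by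
        intro ε hε
        -- boundedness of n on [0, t]
        have hcont : ∀ i, ContinuousOn (fun s => n s i) (Icc 0 t) :=
          fun i => (hACn i).continuousOn htpos
        have hbound : ∀ i, ∃ Ci : ℝ, ∀ s ∈ Icc (0:ℝ) t, ‖n s i‖ ≤ Ci :=
          fun i => isCompact_Icc.exists_bound_of_continuousOn (hcont i)
        choose Cb hCb using hbound
        set M : ℝ := ∑ i, |Cb i| with hMdef
        have hM0 : 0 ≤ M := Finset.sum_nonneg fun i _ => abs_nonneg _
        have hMmem : ∀ s ∈ Icc (0:ℝ) t, ∀ i, n s i ∈ Icc 0 M := by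
          intro s hs i
          refine ⟨hnonneg s hs.1 i, ?_⟩
          have h1 : ‖n s i‖ ≤ Cb i := hCb i s hs
          have h2 : |Cb i| ≤ M := Finset.single_le_sum (fun j (_ : j ∈ Finset.univ) => abs_nonneg (Cb j)) (Finset.mem_univ i)
          rw [Real.norm_eq_abs] at h1
          calc n s i ≤ |n s i| := le_abs_self _
            _ ≤ Cb i := h1
            _ ≤ |Cb i| := le_abs_self _
            _ ≤ M := h2
        -- Lipschitz constants
        set c : Fin I → ℝ := fun i => d i * ((M / ν i) ^ α / ν i) with hcdef
        have hc0 : ∀ i, 0 ≤ c i := fun i => by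
          rw [hcdef]; dsimp only
          exact mul_nonneg (hd i).le (div_nonneg (Real.rpow_nonneg (div_nonneg hM0 (hν i).le) _) (hν i).le)
        set Ctot : ℝ := (∑ i, c i) + 1 with hCtotdef
        have hCtot : 0 < Ctot := by
          rw [hCtotdef]
          have : 0 ≤ ∑ i, c i := Finset.sum_nonneg fun i _ => hc0 i
          linarith
        have hεC : 0 < ε / Ctot := div_pos hε hCtot
        -- per-coordinate AC δ's
        have hACi := fun i => hACn i t htpos (ε / Ctot) hεC
        choose δf hδf0 hδfP using hACi
        have hIne : (Finset.univ : Finset (Fin I)).Nonempty := ⟨⟨0, hI⟩, Finset.mem_univ _⟩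
        set δ : ℝ := Finset.univ.inf' hIne δf with hδdef
        have hδ0 : 0 < δ := by
          rw [hδdef, Finset.lt_inf'_iff]
          exact fun i _ => hδf0 i
        have hδle : ∀ i, δ ≤ δf i := fun i => Finset.inf'_le _ (Finset.mem_univ i)
        -- AC property of g = F ∘ n
        have gAC : ∀ (m : ℕ) (pk qk : Fin m → ℝ),
            (∀ k, 0 ≤ pk k ∧ pk k ≤ qk k ∧ qk k ≤ t) →
            (∀ k l, k < l → qk k ≤ pk l ∨ qk l ≤ pk k) →
            (∑ k, (qk k - pk k)) < δ →
            (∑ k, |Ffun α κ ν μ (n (qk k)) - Ffun α κ ν μ (n (pk k))|) ≤ ε := by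
          intro m pk qk hmem hsep hlen
          have hpmem : ∀ k, pk k ∈ Icc (0:ℝ) t :=
            fun k => ⟨(hmem k).1, (hmem k).2.1.trans (hmem k).2.2⟩
          have hqmem : ∀ k, qk k ∈ Icc (0:ℝ) t :=
            fun k => ⟨(hmem k).1.trans (hmem k).2.1, (hmem k).2.2⟩
          calc (∑ k, |Ffun α κ ν μ (n (qk k)) - Ffun α κ ν μ (n (pk k))|)
              ≤ ∑ k, ∑ i, c i * |n (qk k) i - n (pk k) i| := by
                apply Finset.sum_le_sum
                intro k _
                exact Ffun_lip α hα κ ν μ hκ hν hμ M (n (qk k)) (n (pk k))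
                  (hMmem _ (hqmem k)) (hMmem _ (hpmem k))
            _ = ∑ i, c i * ∑ k, |n (qk k) i - n (pk k) i| := by
                rw [Finset.sum_comm]
                apply Finset.sum_congr rfl
                intro i _
                rw [Finset.mul_sum]
            _ ≤ ∑ i, c i * (ε / Ctot) := by
                apply Finset.sum_le_sum
                intro i _
                apply mul_le_mul_of_nonneg_left _ (hc0 i)
                have := hδfP i m (fun k => pk k) (fun k => qk k)
                  (fun k => ⟨(hmem k).1, (hmem k).2.1, (hmem k).2.2⟩) hsep
                  (lt_of_lt_of_le hlen (hδle i))
                exact this.le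
            _ ≤ ε := by
                rw [← Finset.sum_mul]
                have hle : (∑ i, c i) * (ε / Ctot) ≤ Ctot * (ε / Ctot) := by
                  apply mul_le_mul_of_nonneg_right _ hεC.le
                  rw [hCtotdef]; linarith
                have heq : Ctot * (ε / Ctot) = ε := by field_simp
                linarith
        -- a.e. differentiability and open cover of the null set
        have hdae : ∀ᵐ s, ∀ i : Fin I, s ∈ Ici (0:ℝ) →
            DifferentiableWithinAt ℝ (fun u => n u i) (Ici 0) s :=
          MeasureTheory.ae_all_iff.2 fun i => (hACn i).ae_diff
        set N : Set ℝ := {s | ¬ ∀ i : Fin I, s ∈ Ici (0:ℝ) →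
            DifferentiableWithinAt ℝ (fun u => n u i) (Ici 0) s} with hNdef
        have hN0 : MeasureTheory.volume N = 0 := by
          rw [hNdef]
          exact MeasureTheory.ae_iff.1 hdae
        obtain ⟨U, hNU, hUopen, hUvol⟩ := Set.exists_isOpen_lt_of_lt N (ENNReal.ofReal δ)
          (by rw [hN0]; exact ENNReal.ofReal_pos.2 hδ0)
        -- derivative condition off U
        have hdiff : ∀ s ∈ Icc (0:ℝ) t, s ∉ U →
            ∃ g', g' ≤ 0 ∧ HasDerivWithinAt (fun u => Ffun α κ ν μ (n u)) g' (Ici 0) s := by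
          intro s hs hsU
          have hsN : s ∉ N := fun h => hsU (hNU h)
          have hdiffs : ∀ i, DifferentiableWithinAt ℝ (fun u => n u i) (Ici 0) s := by
            rw [hNdef] at hsN
            simp only [mem_setOf_eq, not_not] at hsN
            exact fun i => hsN i hs.1
          obtain ⟨hder, -⟩ := hfl s hs.1 hdiffs
          refine ⟨Kfun α κ ν μ Λ (n s), ?_, ?_⟩
          · exact Kfun_nonpos A hA01 C α hα κ hκ ν μ hν hμ hload Λ hΛ (n s) (hnonneg s hs.1)
          · exact chain_rule α hα κ ν μ hν hμ Λ n s (hnonneg s hs.1) hder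
        exact mono_of_ae_deriv (fun u => Ffun α κ ν μ (n u)) 0 t ε δ le_rfl ht hε hδ0
          U hUopen hUvol hdiff gAC
      -- conclude from claim
      by_contra hlt
      push_neg at hlt
      set D : ℝ := Ffun α κ ν μ (n t) - Ffun α κ ν μ (n 0) with hDdef
      have hD : 0 < D := by rw [hDdef]; linarith
      have hεp : 0 < D / (t + 2) := div_pos hD (by linarith)
      have h := claim (D / (t + 2)) hεp
      have h2 : D ≤ D / (t + 2) * (t - 0) + D / (t + 2) := by
        rw [hDdef]
        linarith
      have e : (D / (t + 2) * (t - 0) + D / (t + 2)) * (t + 2) = D * (t + 1) := by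
        field_simp
        ring
      have h3 := mul_le_mul_of_nonneg_right h2 (by linarith : (0:ℝ) ≤ t + 2)
      rw [e] at h3
      nlinarith
  -- Step 2 : F (n 0) ≤ MR
  have hn0R : ∀ i, n 0 i ≤ R := by
    intro i
    have h1 : (n 0 i) ^ 2 ≤ ∑ j, (n 0 j) ^ 2 :=
      Finset.single_le_sum (fun j (_ : j ∈ Finset.univ) => sq_nonneg (n 0 j)) (Finset.mem_univ i)
    calc n 0 i = Real.sqrt ((n 0 i) ^ 2) := (Real.sqrt_sq (hnonneg 0 (mem_Ici.2 le_rfl) i)).symm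
      _ ≤ Real.sqrt (∑ j, (n 0 j) ^ 2) := Real.sqrt_le_sqrt h1
      _ ≤ R := hR0
  have hF0 : Ffun α κ ν μ (n 0) ≤ MR := by
    rw [Ffun, hMRdef]
    apply mul_le_mul_of_nonneg_left _ (one_div_nonneg.2 hα1.le)
    apply Finset.sum_le_sum
    intro i _
    have : (n 0 i / ν i) ^ (α + 1) ≤ (R / ν i) ^ (α + 1) :=
      Real.rpow_le_rpow (div_nonneg (hnonneg 0 (mem_Ici.2 le_rfl) i) (hν i).le)
        ((div_le_div_iff_of_pos_right (hν i)).2 (hn0R i)) hα1.le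
    calc ν i * κ i * μ i ^ (α - 1) * (n 0 i / ν i) ^ (α + 1)
        = d i * (n 0 i / ν i) ^ (α + 1) := by rw [hddef]
      _ ≤ d i * (R / ν i) ^ (α + 1) := mul_le_mul_of_nonneg_left this (hd i).le
  -- Step 3 : coordinatewise bound at time t
  have hFt : Ffun α κ ν μ (n t) ≤ MR := hFmono.trans hF0
  have hcoord : ∀ i, n t i ≤ β i := by
    intro i
    have hterm : d i * (n t i / ν i) ^ (α + 1) ≤ (α + 1) * MR := by
      have h1 : d i * (n t i / ν i) ^ (α + 1) ≤ ∑ j, d j * (n t j / ν j) ^ (α + 1) := by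
        apply Finset.single_le_sum (f := fun j => d j * (n t j / ν j) ^ (α + 1))
          (fun j (_ : j ∈ Finset.univ) =>
            mul_nonneg (hd j).le (Real.rpow_nonneg (div_nonneg (hnonneg t ht j) (hν j).le) _))
          (Finset.mem_univ i)
      have h2 : (∑ j, d j * (n t j / ν j) ^ (α + 1)) = (α + 1) * Ffun α κ ν μ (n t) := by
        rw [Ffun, ← mul_assoc]
        rw [mul_one_div, div_self hα1.ne', one_mul]
      have h3 : (α + 1) * Ffun α κ ν μ (n t) ≤ (α + 1) * MR :=
        mul_le_mul_of_nonneg_left hFt hα1.le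
      linarith
    have hstep : (n t i / ν i) ^ (α + 1) ≤ (α + 1) * MR / d i := by
      rw [le_div_iff₀ (hd i)]
      linarith [hterm]
    have hroot : n t i / ν i ≤ ((α + 1) * MR / d i) ^ (1 / (α + 1)) := by
      have e : ((n t i / ν i) ^ (α + 1)) ^ (1 / (α + 1)) = n t i / ν i := by
        rw [← Real.rpow_mul (div_nonneg (hnonneg t ht i) (hν i).le)]
        rw [mul_one_div, div_self hα1.ne', Real.rpow_one]
      calc n t i / ν i = ((n t i / ν i) ^ (α + 1)) ^ (1 / (α + 1)) := e.symm
        _ ≤ ((α + 1) * MR / d i) ^ (1 / (α + 1)) :=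
            Real.rpow_le_rpow (Real.rpow_nonneg (div_nonneg (hnonneg t ht i) (hν i).le) _)
              hstep (one_div_nonneg.2 hα1.le)
    rw [hβdef]
    dsimp only
    rw [div_le_iff₀ (hν i)] at hroot
    nlinarith [hroot]
  refine ⟨hFmono, ?_⟩
  apply Real.sqrt_le_sqrt
  apply Finset.sum_le_sum
  intro i _
  exact pow_le_pow_left₀ (hnonneg t ht i) (hcoord i) 2
end
end
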